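/- arXiv:1002.3875 — 9 statements merged into one kernel-verified Lean document; each statement's English description precedes it below -/
import Mathlib

section
/- Let f ∈ L^p(ℝ^n) with p = 2n/(n-1). Then there exists a sequence r_k → ∞ such that for any fixed constants s₁, s₂ > 0, the integral ∫_{r_k - s₁ ≤ |x| ≤ r_k + s₂} |f(x)|² dx tends to 0 as k → ∞. -/
open MeasureTheory Filter
open scoped ENNReal NNReal

private lemma pow_sub_pow_le_aux {a b : ℝ} (hb : 0 ≤ b) (hab : b ≤ a) (n : ℕ) :
    a ^ n - b ^ n ≤ (n : ℝ) * a ^ (n - 1) * (a - b) := by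
  have ha : 0 ≤ a := hb.trans hab
  have h1 : a ^ n - b ^ n = (∑ i ∈ Finset.range n, a ^ i * b ^ (n - 1 - i)) * (a - b) :=
    (geom_sum₂_mul a b n).symm
  rw [h1]
  have h2 : (∑ i ∈ Finset.range n, a ^ i * b ^ (n - 1 - i)) ≤ (n : ℝ) * a ^ (n - 1) := by
    calc (∑ i ∈ Finset.range n, a ^ i * b ^ (n - 1 - i))
        ≤ ∑ _i ∈ Finset.range n, a ^ (n - 1) := by
          refine Finset.sum_le_sum fun i hi => ?_
          have hin : i + (n - 1 - i) = n - 1 := by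
            have := Finset.mem_range.mp hi; omega
          calc a ^ i * b ^ (n - 1 - i) ≤ a ^ i * a ^ (n - 1 - i) :=
                mul_le_mul_of_nonneg_left (pow_le_pow_left₀ hb hab _) (pow_nonneg ha i)
            _ = a ^ (n - 1) := by rw [← pow_add, hin]
      _ = (n : ℝ) * a ^ (n - 1) := by
          rw [Finset.sum_const, Finset.card_range, nsmul_eq_mul]
  exact mul_le_mul_of_nonneg_right h2 (by linarith)

private lemma harmonic_pigeonhole (β : ℕ → ℝ) (hβ0 : ∀ m, 0 ≤ β m) (hβ : Summable β)
    (c N : ℕ) (ε : ℝ) (hε : 0 < ε) :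
    ∃ m : ℕ, N ≤ m ∧ (m : ℝ) * ∑ j ∈ Finset.Icc (m - c) (m + c), β j < ε := by
  by_contra hcon
  push_neg at hcon
  set a := max N 1 with ha
  set d := 2 * c + 1 with hd
  set W : ℕ → ℝ := fun m => ∑ j ∈ Finset.Icc (m - c) (m + c), β j with hWdef
  have ha1 : 1 ≤ a := le_max_right _ _
  have key : ∀ i : ℕ, ε / (((a + d : ℕ) : ℝ) * ((i : ℝ) + 1)) ≤ W (a + i * d) := by
    intro i
    have hmN : N ≤ a + i * d := le_trans (le_max_left _ _) (Nat.le_add_right _ _)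
    have h1 : ε ≤ ((a + i * d : ℕ) : ℝ) * W (a + i * d) := hcon _ hmN
    have hm0 : (0:ℝ) < ((a + i * d : ℕ) : ℝ) := by
      have : 1 ≤ a + i * d := le_trans ha1 (Nat.le_add_right _ _)
      exact_mod_cast this
    have hle : ((a + i * d : ℕ) : ℝ) ≤ ((a + d : ℕ) : ℝ) * ((i : ℝ) + 1) := by
      push_cast
      have hh1 : (0:ℝ) ≤ (a : ℝ) * i := by positivity
      have hh2 : (0:ℝ) ≤ (d : ℝ) := by positivity
      nlinarith
    have h2 : ε / ((a + i * d : ℕ) : ℝ) ≤ W (a + i * d) := by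
      rw [div_le_iff₀ hm0]
      linarith [h1]
    refine le_trans ?_ h2
    rw [div_le_div_iff₀ (by positivity) hm0]
    nlinarith [mul_le_mul_of_nonneg_left hle hε.le]
  have hdisjM : ∀ M : ℕ, (↑(Finset.range M) : Set ℕ).PairwiseDisjoint
      (fun i => Finset.Icc (a + i * d - c) (a + i * d + c)) := by
    intro M
    have haux : ∀ i j : ℕ, i < j →
        Disjoint (Finset.Icc (a + i * d - c) (a + i * d + c))
          (Finset.Icc (a + j * d - c) (a + j * d + c)) := by
      intro i j hij
      rw [Finset.disjoint_left]
      intro x hx hx'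
      rw [Finset.mem_Icc] at hx hx'
      have hmul : (i + 1) * d ≤ j * d := Nat.mul_le_mul_right d hij
      have h1 : i * d + d = (i + 1) * d := by ring
      omega
    intro i _ j _ hij
    rcases lt_or_gt_of_ne hij with h | h
    · exact haux i j h
    · exact (haux j i h).symm
  have hbound : ∀ M : ℕ, (ε / ((a + d : ℕ) : ℝ)) * ∑ i ∈ Finset.range M, (1:ℝ)/((i:ℝ)+1)
      ≤ ∑' m, β m := by
    intro M
    have h1 : ∑ i ∈ Finset.range M, ε / (((a + d : ℕ) : ℝ) * ((i : ℝ) + 1))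
        ≤ ∑ i ∈ Finset.range M, W (a + i * d) :=
      Finset.sum_le_sum fun i _ => key i
    have h2 : ∑ i ∈ Finset.range M, W (a + i * d)
        = ∑ j ∈ (Finset.range M).biUnion (fun i => Finset.Icc (a + i * d - c) (a + i * d + c)),
            β j := (Finset.sum_biUnion (hdisjM M)).symm
    have h3 : ∑ j ∈ (Finset.range M).biUnion
          (fun i => Finset.Icc (a + i * d - c) (a + i * d + c)), β j ≤ ∑' m, β m :=
      Summable.sum_le_tsum _ (fun j _ => hβ0 j) hβ
    have h4 : ∑ i ∈ Finset.range M, ε / (((a + d : ℕ) : ℝ) * ((i : ℝ) + 1))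
        = (ε / ((a + d : ℕ) : ℝ)) * ∑ i ∈ Finset.range M, (1:ℝ)/((i:ℝ)+1) := by
      rw [Finset.mul_sum]
      refine Finset.sum_congr rfl fun i _ => ?_
      rw [div_mul_div_comm, mul_one]
    linarith
  set T := ∑' m, β m with hT
  have had0 : (0:ℝ) < ((a + d : ℕ) : ℝ) := by
    have : 1 ≤ a + d := le_trans ha1 (Nat.le_add_right _ _)
    exact_mod_cast this
  obtain ⟨M, hM⟩ := (Real.tendsto_sum_range_one_div_nat_succ_atTop.eventually_gt_atTop
      (T * ((a + d : ℕ) : ℝ) / ε)).exists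
  have hε' : (0:ℝ) < ε / ((a + d : ℕ) : ℝ) := by positivity
  have hbM := hbound M
  have hgt : (ε / ((a + d : ℕ) : ℝ)) * (T * ((a + d : ℕ) : ℝ) / ε)
      < (ε / ((a + d : ℕ) : ℝ)) * ∑ i ∈ Finset.range M, (1:ℝ)/((i:ℝ)+1) := by
    exact mul_lt_mul_of_pos_left hM hε'
  have heq : (ε / ((a + d : ℕ) : ℝ)) * (T * ((a + d : ℕ) : ℝ) / ε) = T := by
    field_simp
  rw [heq] at hgt
  linarith

set_option maxHeartbeats 1000000 in
theorem shell_decay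
    (n : ℕ) (hn : 2 ≤ n)
    (f : EuclideanSpace ℝ (Fin n) → ℂ)
    (hf : MemLp f (ENNReal.ofReal ((2 * n : ℝ) / (n - 1))) volume) :
    ∃ r : ℕ → ℝ, Tendsto r atTop atTop ∧
      ∀ s₁ s₂ : ℝ, 0 < s₁ → 0 < s₂ →
        Tendsto (fun k =>
            ∫ x in {x : EuclideanSpace ℝ (Fin n) |
                r k - s₁ ≤ ‖x‖ ∧ ‖x‖ ≤ r k + s₂}, ‖f x‖ ^ 2)
          atTop (nhds 0) := by
  classical
  haveI : Nonempty (Fin n) := ⟨⟨0, by omega⟩⟩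
  have hn2 : (2:ℝ) ≤ (n:ℝ) := by exact_mod_cast hn
  have hn1 : (1:ℝ) ≤ (n:ℝ) - 1 := by linarith
  have hnpos : (0:ℝ) < (n:ℝ) := by linarith
  have hn0 : (n:ℝ) ≠ 0 := hnpos.ne'
  have hn10 : (n:ℝ) - 1 ≠ 0 := by linarith
  set pr : ℝ := (2 * n : ℝ) / (n - 1) with hpr_def
  have hprpos : 0 < pr := by positivity
  have hpr2 : 2 < pr := by
    rw [hpr_def, lt_div_iff₀ (by linarith)]
    linarith
  -- measurable representative
  set f' : EuclideanSpace ℝ (Fin n) → ℂ := hf.1.mk f with hf'def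
  have hf'sm : StronglyMeasurable f' := hf.1.stronglyMeasurable_mk
  have hff' : f =ᵐ[volume] f' := hf.1.ae_eq_mk
  set g : EuclideanSpace ℝ (Fin n) → ℝ≥0∞ := fun x => (‖f' x‖₊ : ℝ≥0∞) ^ pr with hgdef
  have hgmeas : Measurable g :=
    (hf'sm.measurable.nnnorm.coe_nnreal_ennreal).pow measurable_const
  -- finiteness of the p-integral
  have hI : ∫⁻ x, g x ∂volume < ⊤ := by
    have h2 := hf.2
    have hp0 : ENNReal.ofReal pr ≠ 0 := by
      simp [ENNReal.ofReal_eq_zero, not_le, hprpos]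
    rw [eLpNorm_eq_lintegral_rpow_enorm_toReal hp0 ENNReal.ofReal_ne_top,
      ENNReal.toReal_ofReal hprpos.le] at h2
    have hcong : ∫⁻ x, ‖f x‖ₑ ^ pr ∂volume = ∫⁻ x, g x ∂volume := by
      refine lintegral_congr_ae (hff'.mono fun x hx => ?_)
      rw [hgdef]; simp only [hx, enorm_eq_nnnorm]
    rw [hcong] at h2
    by_contra htop
    push_neg at htop
    rw [top_le_iff.mp htop, ENNReal.top_rpow_of_pos (by positivity)] at h2
    exact (lt_irrefl _ h2).elim
  set ν : Measure (EuclideanSpace ℝ (Fin n)) := volume.withDensity g with hνdef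
  set A : ℕ → Set (EuclideanSpace ℝ (Fin n)) :=
    fun m => {x | (m : ℝ) ≤ ‖x‖ ∧ ‖x‖ < (m : ℝ) + 1} with hAdef
  have hAmeas : ∀ m, MeasurableSet (A m) := by
    intro m
    have : A m = (fun x : EuclideanSpace ℝ (Fin n) => ‖x‖) ⁻¹'
        Set.Ico (m : ℝ) ((m : ℝ) + 1) := by
      ext x; simp [hAdef, Set.mem_Ico]
    rw [this]
    exact measurable_norm measurableSet_Ico
  have hAdisj : Pairwise (Function.onFun Disjoint A) := by
    intro i j hij
    rw [Function.onFun, Set.disjoint_left]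
    rintro x ⟨hi1, hi2⟩ ⟨hj1, hj2⟩
    have h1 : (i:ℝ) < (j:ℝ) + 1 := lt_of_le_of_lt hi1 hj2
    have h2 : (j:ℝ) < (i:ℝ) + 1 := lt_of_le_of_lt hj1 hi2
    have h1' : i < j + 1 := by exact_mod_cast h1
    have h2' : j < i + 1 := by exact_mod_cast h2
    omega
  set b : ℕ → ℝ≥0∞ := fun m => ν (A m) with hbdef
  have hbsum : ∑' m, b m < ⊤ := by
    have h1 : ∑' m, b m = ν (⋃ m, A m) := (measure_iUnion hAdisj hAmeas).symm
    have h2 : ν (⋃ m, A m) ≤ ν Set.univ := measure_mono (Set.subset_univ _)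
    have h3 : ν Set.univ = ∫⁻ x, g x ∂volume := by
      rw [hνdef, withDensity_apply _ MeasurableSet.univ, Measure.restrict_univ]
    exact lt_of_le_of_lt (h1 ▸ h2) (h3 ▸ hI)
  set β : ℕ → ℝ := fun m => (b m).toReal with hβdef
  have hβ0 : ∀ m, 0 ≤ β m := fun m => ENNReal.toReal_nonneg
  have hβsum : Summable β := ENNReal.summable_toReal hbsum.ne
  have hbfin : ∀ m, b m ≠ ⊤ := fun m => (lt_of_le_of_lt (ENNReal.le_tsum m) hbsum).ne
  -- selection of the sequence
  have hsel : ∀ k : ℕ, ∃ m : ℕ, (k + 1) ≤ m ∧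
      (m : ℝ) * ∑ j ∈ Finset.Icc (m - k) (m + k), β j < 1 / ((k:ℝ) + 1) :=
    fun k => harmonic_pigeonhole β hβ0 hβsum k (k + 1) _ (by positivity)
  choose m hm₁ hm₂ using hsel
  refine ⟨fun k => (m k : ℝ), ?_, ?_⟩
  · apply tendsto_atTop_mono _ tendsto_natCast_atTop_atTop
    intro k
    have : k ≤ m k := le_trans (Nat.le_succ k) (hm₁ k)
    exact_mod_cast this
  intro s₁ s₂ hs₁ hs₂
  -- constants
  set e1 : ℝ := ((n:ℝ) - 1) / n with he1def
  set e2 : ℝ := 1 / (n:ℝ) with he2def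
  have he1pos : 0 < e1 := by positivity
  have he2pos : 0 < e2 := by positivity
  set Cn : ℝ := Real.sqrt Real.pi ^ n / Real.Gamma ((n:ℝ) / 2 + 1) with hCndef
  have hCnpos : 0 < Cn := by
    apply div_pos
    · positivity
    · exact Real.Gamma_pos_of_pos (by positivity)
  set K₂ : ℝ := (n:ℝ) * (s₁ + s₂) * Cn * 2 ^ (n - 1) with hK₂def
  have hK₂pos : 0 < K₂ := by positivity
  set G : ℕ → ℝ := fun k => (1 / ((k:ℝ) + 1)) ^ e1 * K₂ ^ e2 with hGdef
  have hG : Tendsto G atTop (nhds 0) := by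
    have h0 : Tendsto (fun k : ℕ => 1 / ((k:ℝ) + 1)) atTop (nhds 0) :=
      tendsto_one_div_add_atTop_nhds_zero_nat
    have h1 : Tendsto (fun k : ℕ => (1 / ((k:ℝ) + 1)) ^ e1) atTop (nhds 0) := by
      have hc := (Real.continuousAt_rpow_const 0 e1 (Or.inr he1pos.le)).tendsto.comp h0
      rwa [Real.zero_rpow he1pos.ne'] at hc
    have h2 := h1.mul_const (K₂ ^ e2)
    rwa [zero_mul] at h2
  -- squeeze
  refine tendsto_of_tendsto_of_tendsto_of_le_of_le' tendsto_const_nhds hG ?_ ?_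
  · filter_upwards with k
    exact integral_nonneg fun x => by positivity
  · set K₀ : ℕ := ⌈max s₁ s₂⌉₊ with hK₀def
    filter_upwards [eventually_ge_atTop K₀] with k hk
    set M : ℕ := m k with hMdef
    have hMk : k + 1 ≤ M := hm₁ k
    have hs₁k : s₁ ≤ (k:ℝ) := by
      have h1 : s₁ ≤ max s₁ s₂ := le_max_left _ _
      have h2 : max s₁ s₂ ≤ (K₀ : ℝ) := Nat.le_ceil _
      have h3 : (K₀ : ℝ) ≤ (k : ℝ) := by exact_mod_cast hk
      linarith
    have hs₂k : s₂ ≤ (k:ℝ) := by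
      have h1 : s₂ ≤ max s₁ s₂ := le_max_right _ _
      have h2 : max s₁ s₂ ≤ (K₀ : ℝ) := Nat.le_ceil _
      have h3 : (K₀ : ℝ) ≤ (k : ℝ) := by exact_mod_cast hk
      linarith
    have hkM : (k:ℝ) + 1 ≤ (M:ℝ) := by exact_mod_cast hMk
    have hMpos : (0:ℝ) < (M:ℝ) := by linarith
    have hs₂M : s₂ ≤ (M:ℝ) := by linarith
    have hs₁M : s₁ ≤ (M:ℝ) := by linarith
    set S : Set (EuclideanSpace ℝ (Fin n)) :=
      {x : EuclideanSpace ℝ (Fin n) | (M:ℝ) - s₁ ≤ ‖x‖ ∧ ‖x‖ ≤ (M:ℝ) + s₂} with hSdef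
    have hSmeas : MeasurableSet S := by
      have : S = (fun x : EuclideanSpace ℝ (Fin n) => ‖x‖) ⁻¹'
          Set.Icc ((M:ℝ) - s₁) ((M:ℝ) + s₂) := by
        ext x; simp [hSdef, Set.mem_Icc]
      rw [this]
      exact measurable_norm measurableSet_Icc
    -- Step 1 : integral = toReal of lintegral
    set L : ℝ≥0∞ := ∫⁻ x in S, (‖f' x‖₊ : ℝ≥0∞) ^ (2:ℝ) ∂volume with hLdef
    have hstep1 : ∫ x in S, ‖f x‖ ^ 2 ∂volume = L.toReal := by
      rw [integral_eq_lintegral_of_nonneg_ae (Eventually.of_forall fun x => by positivity)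
        (((hf.1.norm.aemeasurable.pow aemeasurable_const).aestronglyMeasurable).restrict)]
      congr 1
      rw [hLdef]
      refine lintegral_congr_ae (ae_restrict_of_ae (hff'.mono fun x hx => ?_))
      show ENNReal.ofReal (‖f x‖ ^ 2) = (‖f' x‖₊ : ℝ≥0∞) ^ (2:ℝ)
      rw [hx, ← Real.rpow_natCast ‖f' x‖ 2,
        ← ENNReal.ofReal_rpow_of_nonneg (norm_nonneg _) (by positivity),
        ofReal_norm, enorm_eq_nnnorm]
      norm_num
    -- Step 2 : Hölder
    have hconj : Real.HolderConjugate (pr / 2) (n:ℝ) := by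
      rw [Real.holderConjugate_iff]
      constructor
      · linarith
      · rw [hpr_def]
        field_simp
        ring
    have hHolder : L ≤ (∫⁻ x in S, g x ∂volume) ^ (2 / pr) * (volume S) ^ ((1:ℝ)/(n:ℝ)) := by
      have hφ : AEMeasurable (fun x : EuclideanSpace ℝ (Fin n) => (‖f' x‖₊ : ℝ≥0∞) ^ (2:ℝ))
          (volume.restrict S) :=
        ((hf'sm.measurable.nnnorm.coe_nnreal_ennreal).pow measurable_const).aemeasurable
      have h := ENNReal.lintegral_mul_le_Lp_mul_Lq (volume.restrict S) hconj hφ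
        (aemeasurable_const (b := (1:ℝ≥0∞)))
      simp only [Pi.mul_apply, mul_one] at h
      have hl : ∫⁻ x in S, ((‖f' x‖₊ : ℝ≥0∞) ^ (2:ℝ)) ^ (pr / 2) ∂volume
          = ∫⁻ x in S, g x ∂volume := by
        refine lintegral_congr fun x => ?_
        rw [← ENNReal.rpow_mul, show 2 * (pr/2) = pr by ring]
      have hr : ∫⁻ _x in S, (1:ℝ≥0∞) ^ (n:ℝ) ∂volume = volume S := by
        simp
      rw [hl, hr] at h
      have hexp : 1 / (pr / 2) = 2 / pr := one_div_div _ _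
      rw [hexp] at h
      exact h
    -- Step 3 : window bound
    set w : ℝ := 1 / (((k:ℝ) + 1) * (M:ℝ)) with hwdef
    have hwpos : 0 < w := by positivity
    have hstep3 : ∫⁻ x in S, g x ∂volume ≤ ENNReal.ofReal w := by
      have hν : ∫⁻ x in S, g x ∂volume = ν S := (withDensity_apply g hSmeas).symm
      have hsub : S ⊆ ⋃ j ∈ Finset.Icc (M - k) (M + k), A j := by
        intro x hx
        obtain ⟨hx1, hx2⟩ := hx
        have hx0 : 0 ≤ ‖x‖ := norm_nonneg x
        have hmem : ⌊‖x‖⌋₊ ∈ Finset.Icc (M - k) (M + k) := by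
          rw [Finset.mem_Icc]
          constructor
          · apply Nat.le_floor
            have hc : ((M - k : ℕ) : ℝ) ≤ (M:ℝ) - (k:ℝ) := by
              rw [Nat.cast_sub (by omega)]
            linarith
          · have h1 : ‖x‖ ≤ ((M + k : ℕ) : ℝ) := by push_cast; linarith
            calc ⌊‖x‖⌋₊ ≤ ⌊((M + k : ℕ) : ℝ)⌋₊ := Nat.floor_le_floor h1
              _ = M + k := Nat.floor_natCast _
        exact Set.mem_biUnion hmem ⟨Nat.floor_le hx0, Nat.lt_floor_add_one ‖x‖⟩
      have h1 : ν S ≤ ∑ j ∈ Finset.Icc (M - k) (M + k), b j := by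
        calc ν S ≤ ν (⋃ j ∈ Finset.Icc (M - k) (M + k), A j) := measure_mono hsub
          _ ≤ ∑ j ∈ Finset.Icc (M - k) (M + k), ν (A j) := measure_biUnion_finset_le _ _
      have h2 : ∑ j ∈ Finset.Icc (M - k) (M + k), b j
          = ENNReal.ofReal (∑ j ∈ Finset.Icc (M - k) (M + k), β j) := by
        rw [ENNReal.ofReal_sum_of_nonneg (fun j _ => hβ0 j)]
        refine Finset.sum_congr rfl fun j _ => ?_
        exact (ENNReal.ofReal_toReal (hbfin j)).symm
      have hm2' : (M:ℝ) * ∑ j ∈ Finset.Icc (M - k) (M + k), β j < 1 / ((k:ℝ) + 1) := hm₂ k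
      have h3 : ∑ j ∈ Finset.Icc (M - k) (M + k), β j ≤ w := by
        rw [hwdef, ← div_div]
        rw [le_div_iff₀ hMpos]
        linarith [hm2']
      calc ∫⁻ x in S, g x ∂volume = ν S := hν
        _ ≤ ∑ j ∈ Finset.Icc (M - k) (M + k), b j := h1
        _ = ENNReal.ofReal (∑ j ∈ Finset.Icc (M - k) (M + k), β j) := h2
        _ ≤ ENNReal.ofReal w := ENNReal.ofReal_le_ofReal h3
    -- Step 4 : volume bound
    set v : ℝ := (n:ℝ) * ((M:ℝ) + s₂) ^ (n - 1) * (s₁ + s₂) * Cn with hvdef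
    have hvpos : 0 < v := by positivity
    have hstep4 : volume S ≤ ENNReal.ofReal v := by
      have hsub : S ⊆ Metric.closedBall (0 : EuclideanSpace ℝ (Fin n)) ((M:ℝ) + s₂) \
          Metric.ball (0 : EuclideanSpace ℝ (Fin n)) ((M:ℝ) - s₁) := by
        rintro x ⟨h1, h2⟩
        constructor
        · rw [Metric.mem_closedBall, dist_zero_right]; exact h2
        · simp only [Metric.mem_ball, dist_zero_right, not_lt]; exact h1
      have hball : Metric.ball (0 : EuclideanSpace ℝ (Fin n)) ((M:ℝ) - s₁) ⊆
          Metric.closedBall (0 : EuclideanSpace ℝ (Fin n)) ((M:ℝ) + s₂) :=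
        Metric.ball_subset_closedBall.trans (Metric.closedBall_subset_closedBall (by linarith))
      have hdiff : volume (Metric.closedBall (0 : EuclideanSpace ℝ (Fin n)) ((M:ℝ) + s₂) \
            Metric.ball (0 : EuclideanSpace ℝ (Fin n)) ((M:ℝ) - s₁))
          = volume (Metric.closedBall (0 : EuclideanSpace ℝ (Fin n)) ((M:ℝ) + s₂)) -
            volume (Metric.ball (0 : EuclideanSpace ℝ (Fin n)) ((M:ℝ) - s₁)) :=
        measure_diff hball measurableSet_ball.nullMeasurableSet measure_ball_lt_top.ne
      have hcb : volume (Metric.closedBall (0 : EuclideanSpace ℝ (Fin n)) ((M:ℝ) + s₂))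
          = ENNReal.ofReal (((M:ℝ) + s₂) ^ n * Cn) := by
        rw [EuclideanSpace.volume_closedBall, Fintype.card_fin,
          ← ENNReal.ofReal_pow (by linarith), ← ENNReal.ofReal_mul (by positivity)]
      have hb2 : volume (Metric.ball (0 : EuclideanSpace ℝ (Fin n)) ((M:ℝ) - s₁))
          = ENNReal.ofReal (((M:ℝ) - s₁) ^ n * Cn) := by
        rw [EuclideanSpace.volume_ball, Fintype.card_fin,
          ← ENNReal.ofReal_pow (by linarith), ← ENNReal.ofReal_mul
            (pow_nonneg (by linarith : (0:ℝ) ≤ (M:ℝ) - s₁) n)]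
      calc volume S ≤ _ := measure_mono hsub
        _ = _ := hdiff
        _ = ENNReal.ofReal (((M:ℝ)+s₂)^n * Cn) - ENNReal.ofReal (((M:ℝ)-s₁)^n * Cn) := by
            rw [hcb, hb2]
        _ = ENNReal.ofReal (((M:ℝ)+s₂)^n * Cn - ((M:ℝ)-s₁)^n * Cn) :=
            (ENNReal.ofReal_sub _ (mul_nonneg (pow_nonneg
              (by linarith : (0:ℝ) ≤ (M:ℝ) - s₁) n) hCnpos.le)).symm
        _ ≤ ENNReal.ofReal v := by
            apply ENNReal.ofReal_le_ofReal
            have h := pow_sub_pow_le_aux (b := (M:ℝ) - s₁) (a := (M:ℝ) + s₂)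
              (by linarith) (by linarith) n
            have heq2 : ((M:ℝ)+s₂) - ((M:ℝ)-s₁) = s₁ + s₂ := by ring
            rw [heq2] at h
            calc ((M:ℝ)+s₂)^n * Cn - ((M:ℝ)-s₁)^n * Cn
                = (((M:ℝ)+s₂)^n - ((M:ℝ)-s₁)^n) * Cn := by ring
              _ ≤ ((n:ℝ) * ((M:ℝ)+s₂)^(n-1) * (s₁+s₂)) * Cn :=
                  mul_le_mul_of_nonneg_right h hCnpos.le
              _ = v := by rw [hvdef]
    -- Steps 5-6 : combine
    have hchain : L ≤ ENNReal.ofReal (w ^ (2/pr) * v ^ ((1:ℝ)/(n:ℝ))) := by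
      calc L ≤ (∫⁻ x in S, g x ∂volume) ^ (2/pr) * (volume S) ^ ((1:ℝ)/(n:ℝ)) := hHolder
        _ ≤ (ENNReal.ofReal w) ^ (2/pr) * (ENNReal.ofReal v) ^ ((1:ℝ)/(n:ℝ)) :=
            mul_le_mul' (ENNReal.rpow_le_rpow hstep3 (by positivity))
              (ENNReal.rpow_le_rpow hstep4 (by positivity))
        _ = ENNReal.ofReal (w ^ (2/pr) * v ^ ((1:ℝ)/(n:ℝ))) := by
            rw [ENNReal.ofReal_rpow_of_nonneg hwpos.le (by positivity),
              ENNReal.ofReal_rpow_of_nonneg hvpos.le (by positivity),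
              ← ENNReal.ofReal_mul (by positivity)]
    have hfin : ∫ x in S, ‖f x‖ ^ 2 ∂volume ≤ w ^ (2/pr) * v ^ ((1:ℝ)/(n:ℝ)) := by
      rw [hstep1]
      calc L.toReal ≤ (ENNReal.ofReal (w ^ (2/pr) * v ^ ((1:ℝ)/(n:ℝ)))).toReal :=
          ENNReal.toReal_mono ENNReal.ofReal_ne_top hchain
        _ = w ^ (2/pr) * v ^ ((1:ℝ)/(n:ℝ)) := ENNReal.toReal_ofReal (by positivity)
    -- Step 7 : real bound
    have hepr : 2 / pr = e1 := by
      rw [hpr_def, he1def, div_div_eq_mul_div]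
      rw [div_eq_div_iff (by positivity) hnpos.ne']
      ring
    have hreal : w ^ e1 * v ^ e2 ≤ G k := by
      have hMe1pos : (0:ℝ) < (M:ℝ) ^ e1 := Real.rpow_pos_of_pos hMpos _
      have hw_eq : w ^ e1 = (1/((k:ℝ)+1)) ^ e1 * (((M:ℝ) ^ e1)⁻¹) := by
        rw [hwdef]
        rw [show (1:ℝ)/(((k:ℝ)+1) * (M:ℝ)) = (1/((k:ℝ)+1)) * ((M:ℝ))⁻¹ by
          field_simp]
        rw [Real.mul_rpow (by positivity) (by positivity), Real.inv_rpow hMpos.le]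
      have hv_le : v ^ e2 ≤ K₂ ^ e2 * (M:ℝ) ^ e1 := by
        have h2M : (M:ℝ) + s₂ ≤ 2 * (M:ℝ) := by linarith
        have hvK : v ≤ K₂ * (M:ℝ) ^ (n-1 : ℕ) := by
          rw [hvdef, hK₂def]
          have hp : ((M:ℝ) + s₂) ^ (n-1) ≤ (2*(M:ℝ)) ^ (n-1) :=
            pow_le_pow_left₀ (by linarith) h2M _
          rw [mul_pow] at hp
          calc (n:ℝ) * ((M:ℝ)+s₂)^(n-1) * (s₁+s₂) * Cn
              ≤ (n:ℝ) * ((2:ℝ)^(n-1) * (M:ℝ)^(n-1)) * (s₁+s₂) * Cn := by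
                apply mul_le_mul_of_nonneg_right _ hCnpos.le
                apply mul_le_mul_of_nonneg_right _ (by linarith)
                exact mul_le_mul_of_nonneg_left hp hnpos.le
            _ = (n:ℝ) * (s₁+s₂) * Cn * 2^(n-1) * (M:ℝ)^(n-1) := by ring
        have h1 : v ^ e2 ≤ (K₂ * (M:ℝ)^(n-1:ℕ)) ^ e2 :=
          Real.rpow_le_rpow hvpos.le hvK he2pos.le
        have h2 : (K₂ * (M:ℝ)^(n-1:ℕ)) ^ e2 = K₂ ^ e2 * (M:ℝ) ^ e1 := by
          rw [Real.mul_rpow hK₂pos.le (by positivity)]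
          congr 1
          rw [← Real.rpow_natCast (M:ℝ) (n-1), ← Real.rpow_mul hMpos.le]
          congr 1
          rw [Nat.cast_sub (by omega), Nat.cast_one, he2def, he1def]
          field_simp
        rw [h2] at h1
        exact h1
      calc w ^ e1 * v ^ e2 ≤ w ^ e1 * (K₂ ^ e2 * (M:ℝ) ^ e1) :=
          mul_le_mul_of_nonneg_left hv_le (Real.rpow_nonneg hwpos.le _)
        _ = (1/((k:ℝ)+1)) ^ e1 * K₂ ^ e2 * ((((M:ℝ)^e1)⁻¹) * (M:ℝ)^e1) := by
            rw [hw_eq]; ring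
        _ = G k := by
            rw [inv_mul_cancel₀ hMe1pos.ne', mul_one, hGdef]
    calc ∫ x in S, ‖f x‖^2 ∂volume ≤ w ^ (2/pr) * v ^ ((1:ℝ)/(n:ℝ)) := hfin
      _ = w ^ e1 * v ^ e2 := by rw [hepr, he2def]
      _ ≤ G k := hreal
end

section
/- Let g be a positive C¹ integrable function on [0,a) such that both g and g' are strictly increasing on [0,a). If a = 2nπ + π + θ for some nonnegative integer n and 0 ≤ θ ≤ π/2, then ∫₀ᵃ g(t) cos t dt < 0. -/
open Real Set MeasureTheory

lemma aux_sin_ge (θ u : ℝ) (h0 : 0 ≤ θ) (h1 : θ ≤ π/2) (hu1 : -θ ≤ u)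
    (hu2 : u ≤ π + θ) : -Real.sin θ ≤ Real.sin u := by
  have hπ := Real.pi_pos
  have hmono := Real.strictMonoOn_sin.monotoneOn
  rcases le_or_gt u 0 with h | h
  · have h1' : Real.sin (-u) ≤ Real.sin θ := by
      apply hmono ⟨by linarith, by linarith⟩ ⟨by linarith, h1⟩ (by linarith)
    rw [Real.sin_neg] at h1'; linarith
  rcases le_or_gt u π with h2 | h2
  · have := Real.sin_nonneg_of_nonneg_of_le_pi h.le h2
    have := Real.sin_nonneg_of_nonneg_of_le_pi h0 (by linarith)
    linarith
  · have hs : Real.sin (u - π) = -Real.sin u := Real.sin_sub_pi u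
    have h1' : Real.sin (u - π) ≤ Real.sin θ := by
      apply hmono ⟨by linarith, by linarith⟩ ⟨by linarith, h1⟩ (by linarith)
    linarith

lemma aux_phi_nonneg (θ : ℝ) (k : ℕ) (h0 : 0 ≤ θ) (h1 : θ ≤ π/2) (t : ℝ)
    (ht1 : 2*(k:ℝ)*π - θ ≤ t) (ht2 : t ≤ 2*(k:ℝ)*π + π + θ) :
    0 ≤ Real.sin t + Real.sin θ := by
  have hs : Real.sin (t - (k:ℤ) * (2*π)) = Real.sin t := Real.sin_sub_int_mul_two_pi t k
  have := aux_sin_ge θ (t - (k:ℤ) * (2*π)) h0 h1 (by push_cast; linarith) (by push_cast; linarith)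
  rw [hs] at this; linarith

lemma aux_pair_trig (θ x : ℝ) (h0 : 0 ≤ θ) (h1 : θ ≤ π) :
    Real.sin (x + 2*θ) ≤ 2 * Real.sin θ + Real.sin x := by
  have h := Real.sin_sub_sin (x + 2*θ) x
  rw [show (x + 2*θ - x)/2 = θ by ring, show (x + 2*θ + x)/2 = x + θ by ring] at h
  have hc := Real.cos_le_one (x + θ)
  have hsθ := Real.sin_nonneg_of_nonneg_of_le_pi h0 h1
  nlinarith

set_option maxHeartbeats 2000000 in
theorem cos_integral_neg_of_increasing
    (a θ : ℝ) (n : ℕ)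
    (g : ℝ → ℝ)
    (hg_pos : ∀ t ∈ Ico (0 : ℝ) a, 0 < g t)
    (hg_C1 : ContDiffOn ℝ 1 g (Ico 0 a))
    (hg_int : IntegrableOn g (Ico 0 a))
    (hg_mono : StrictMonoOn g (Ico 0 a))
    (hg'_mono : StrictMonoOn (derivWithin g (Ico 0 a)) (Ico 0 a))
    (hθ₀ : 0 ≤ θ) (hθ₁ : θ ≤ π / 2)
    (ha : a = 2 * n * π + π + θ) :
    (∫ t in (0 : ℝ)..a, g t * Real.cos t) < 0 := by
  have hπ := Real.pi_pos
  set h : ℝ → ℝ := derivWithin g (Ico 0 a) with hhdef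
  have hnπ : 0 ≤ 2 * (n:ℝ) * π := by positivity
  have ha0 : 0 < a := by rw [ha]; push_cast; nlinarith
  have haπ : π + θ ≤ a := by rw [ha]; push_cast; nlinarith
  have hsθ0 : 0 ≤ Real.sin θ := Real.sin_nonneg_of_nonneg_of_le_pi hθ₀ (by linarith)
  have hgc : ContinuousOn g (Ico 0 a) := hg_C1.continuousOn
  have hhc : ContinuousOn h (Ico 0 a) :=
    hg_C1.continuousOn_derivWithin (uniqueDiffOn_Ico 0 a) le_rfl
  have hder : ∀ x ∈ Ioo (0:ℝ) a, HasDerivAt g (h x) x := by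
    intro x hx
    have hmem : Ico (0:ℝ) a ∈ nhds x :=
      Filter.mem_of_superset (isOpen_Ioo.mem_nhds hx) Ioo_subset_Ico_self
    have hd : DifferentiableAt ℝ g x :=
      ((hg_C1.differentiableOn one_ne_zero) x (Ioo_subset_Ico_self hx)).differentiableAt hmem
    have heq : h x = deriv g x := derivWithin_of_mem_nhds hmem
    rw [heq]; exact hd.hasDerivAt
  have hpos : ∀ x ∈ Ioo (0:ℝ) a, 0 < h x := by
    intro x hx
    obtain ⟨hx0, hxa⟩ := hx
    have hx2 : (0:ℝ) < x/2 := by linarith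
    obtain ⟨c, hc, hceq⟩ := exists_hasDerivAt_eq_slope g h (by linarith : x/2 < x)
      (hgc.mono (by intro y hy; exact ⟨by simp at hy ⊢; linarith [hy.1], by
        rcases hy with ⟨_, h2⟩; linarith⟩))
      (fun y hy => hder y ⟨by linarith [hy.1], by linarith [hy.2]⟩)
    have hgx : g (x/2) < g x :=
      hg_mono ⟨by linarith, by linarith⟩ ⟨by linarith, hxa⟩ (by linarith)
    have hc0 : 0 < h c := by rw [hceq]; apply div_pos (by linarith) (by linarith)
    have : h c < h x := hg'_mono ⟨by linarith [hc.1], by linarith [hc.2]⟩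
      ⟨hx0.le, hxa⟩ hc.2
    linarith
  have h0nn : 0 ≤ h 0 := by
    have hdw : HasDerivWithinAt g (h 0) (Ico 0 a) 0 :=
      ((hg_C1.differentiableOn one_ne_zero) 0 ⟨le_rfl, ha0⟩).hasDerivWithinAt
    have hslope := hasDerivWithinAt_iff_tendsto_slope.mp hdw
    have hfil : nhdsWithin (0:ℝ) (Ioo (0:ℝ) a) ≤ nhdsWithin 0 (Ico 0 a \ {0}) :=
      nhdsWithin_mono 0 (fun y hy => ⟨Ioo_subset_Ico_self hy, ne_of_gt hy.1⟩)
    have hne : (nhdsWithin (0:ℝ) (Ioo (0:ℝ) a)).NeBot :=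
      mem_closure_iff_nhdsWithin_neBot.mp
        (by rw [closure_Ioo (ne_of_lt ha0)]; exact ⟨le_rfl, ha0.le⟩)
    refine ge_of_tendsto (hslope.mono_left hfil) ?_
    filter_upwards [self_mem_nhdsWithin] with y hy
    have hgy : g 0 < g y := hg_mono ⟨le_rfl, ha0⟩ ⟨hy.1.le, hy.2⟩ hy.1
    have : 0 ≤ (g y - g 0) / (y - 0) := by
      apply div_nonneg (by linarith) (by linarith [hy.1])
    simpa [slope_def_field] using this
  have hnn : ∀ t ∈ Ico (0:ℝ) a, 0 ≤ h t := by
    intro t ht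
    rcases eq_or_lt_of_le ht.1 with he | hl
    · rw [← he]; exact h0nn
    · exact (hpos t ⟨hl, ht.2⟩).le
  have hmonoh : MonotoneOn h (Ico 0 a) := hg'_mono.monotoneOn
  -- the integrand for the derivative part
  set F : ℝ → ℝ := fun t => h t * (Real.sin t + Real.sin θ) with hFdef
  have hFc : ContinuousOn F (Ico 0 a) :=
    hhc.mul ((Real.continuous_sin.continuousOn).add continuousOn_const)
  have hFi : ∀ u v : ℝ, 0 ≤ u → 0 ≤ v → u < a → v < a →
      IntervalIntegrable F Real.measureSpace.volume u v := by
    intro u v hu hv hua hva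
    apply (hFc.mono ?_).intervalIntegrable
    intro y hy
    rw [Set.mem_uIcc] at hy
    rcases hy with ⟨h1, h2⟩ | ⟨h1, h2⟩ <;> exact ⟨by linarith, by linarith⟩
  -- gap lemma : F is nonneg where sin t + sin θ ≥ 0
  have hgap : ∀ (k : ℕ) (u v : ℝ), 0 ≤ u → 2*(k:ℝ)*π - θ ≤ u → u ≤ v →
      v ≤ 2*(k:ℝ)*π + π + θ → v < a → 0 ≤ ∫ x in u..v, F x := by
    intro k u v hu0 hu1 huv hv1 hva
    apply intervalIntegral.integral_nonneg huv
    intro x hx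
    have hx1 : 0 ≤ h x := hnn x ⟨le_trans hu0 hx.1, lt_of_le_of_lt hx.2 hva⟩
    have hx2 : 0 ≤ Real.sin x + Real.sin θ :=
      aux_phi_nonneg θ k hθ₀ hθ₁ x (le_trans hu1 hx.1) (le_trans hx.2 hv1)
    exact mul_nonneg hx1 hx2
  -- pair lemma (possibly truncated at y)
  have hpair : ∀ (k : ℕ) (y : ℝ), 2*(k:ℝ)*π + 2*π - θ ≤ y →
      y ≤ 2*(k:ℝ)*π + 3*π - 3*θ → y < a →
      -(2 * h (2*(k:ℝ)*π + 2*π - θ)) * ((2*(k:ℝ)*π + 3*π - 3*θ) - y) ≤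
        (∫ x in (2*(k:ℝ)*π + π + θ)..(2*(k:ℝ)*π + 2*π - θ), F x) +
          ∫ x in (2*(k:ℝ)*π + 2*π - θ)..y, F x := by
    intro k y hy1 hy2 hya
    have hk0 : (0:ℝ) ≤ (k:ℝ) := Nat.cast_nonneg k
    set L : ℝ := 2*(k:ℝ)*π + π + θ with hLdef
    set r : ℝ := 2*(k:ℝ)*π + 2*π - θ with hrdef
    set R : ℝ := 2*(k:ℝ)*π + 3*π - 3*θ with hRdef
    set y' : ℝ := 2*r - y with hy'def
    have hL0 : 0 ≤ L := by rw [hLdef]; nlinarith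
    have hLy' : L ≤ y' := by rw [hy'def, hLdef, hrdef]; rw [hRdef] at hy2; linarith
    have hy'r : y' ≤ r := by rw [hy'def]; rw [hrdef] at hy1 ⊢; linarith
    have hra : r < a := lt_of_le_of_lt hy1 hya
    have hy0 : 0 ≤ y := le_trans (by rw [hrdef]; nlinarith) hy1
    have hy'0 : 0 ≤ y' := le_trans hL0 hLy'
    have hr0 : 0 ≤ r := le_trans hy'0 hy'r
    have hrIco : r ∈ Ico (0:ℝ) a := ⟨hr0, hra⟩
    have hsplit : (∫ x in L..r, F x) = (∫ x in L..y', F x) + ∫ x in y'..r, F x :=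
      (intervalIntegral.integral_add_adjacent_intervals
        (hFi L y' hL0 hy'0 (by linarith) (by linarith))
        (hFi y' r hy'0 hr0 (by linarith) (by linarith))).symm
    have h1 : -(2 * h r) * (R - y) ≤ ∫ x in L..y', F x := by
      have hconst : (∫ _x in L..y', -(2 * h r)) = -(2 * h r) * (y' - L) := by
        rw [intervalIntegral.integral_const, smul_eq_mul]; ring
      have hmono2 : (∫ _x in L..y', -(2 * h r)) ≤ ∫ x in L..y', F x := by
        apply intervalIntegral.integral_mono_on hLy'
          (intervalIntegrable_const) (hFi L y' hL0 hy'0 (by linarith) (by linarith))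
        intro x hx
        have hxIco : x ∈ Ico (0:ℝ) a := ⟨le_trans hL0 hx.1, by linarith [hx.2]⟩
        have hhx0 : 0 ≤ h x := hnn x hxIco
        have hhxr : h x ≤ h r := hmonoh hxIco hrIco (by linarith [hx.2])
        have hsin1 : -1 ≤ Real.sin x := Real.neg_one_le_sin x
        have hsθ1 : Real.sin θ ≤ 1 := Real.sin_le_one θ
        have : -(2:ℝ) ≤ Real.sin x + Real.sin θ := by linarith
        show -(2 * h r) ≤ h x * (Real.sin x + Real.sin θ)
        nlinarith
      have hyL : y' - L = R - y := by rw [hy'def, hLdef, hrdef, hRdef]; ring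
      rw [hconst, hyL] at hmono2
      exact hmono2
    have h2 : 0 ≤ (∫ x in y'..r, F x) + ∫ x in r..y, F x := by
      have hcomp : (∫ x in r..y, F x) = ∫ x in y'..r, F (2*r - x) := by
        rw [intervalIntegral.integral_comp_sub_left F (2*r)]
        rw [show 2*r - r = r by ring, show 2*r - y' = y by rw [hy'def]; ring]
      have hcontcomp : ContinuousOn (fun x => F (2*r - x)) (Set.uIcc y' r) := by
        apply hFc.comp ((continuous_const.sub continuous_id).continuousOn)
        rw [Set.uIcc_of_le hy'r]
        intro x hx
        simp only [Pi.sub_apply, id_eq]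
        exact ⟨by linarith [hx.2], by
          have : 2*r - x ≤ y := by rw [hy'def] at hx; linarith [hx.1]
          linarith⟩
      rw [hcomp, ← intervalIntegral.integral_add
        (hFi y' r hy'0 hr0 (by linarith) (by linarith))
        (hcontcomp.intervalIntegrable)]
      apply intervalIntegral.integral_nonneg hy'r
      intro x hx
      have hxIco : x ∈ Ico (0:ℝ) a := ⟨le_trans hy'0 hx.1, by linarith [hx.2]⟩
      have hσa : 2*r - x ≤ y := by rw [hy'def] at hx; linarith [hx.1]
      have hσIco : (2*r - x) ∈ Ico (0:ℝ) a := ⟨by linarith [hx.2], by linarith⟩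
      have hhx : 0 ≤ h x := hnn x hxIco
      have hhσ : h x ≤ h (2*r - x) := hmonoh hxIco hσIco (by linarith [hx.2])
      have hφσ : 0 ≤ Real.sin (2*r - x) + Real.sin θ := by
        apply aux_phi_nonneg θ (k+1) hθ₀ hθ₁
        · push_cast; rw [hrdef]; linarith [hx.2]
        · push_cast; rw [hrdef] at hσa ⊢; rw [hRdef] at hy2; linarith
      have hσs : Real.sin (2*r - x) = -Real.sin (x + 2*θ) := by
        have h1' := Real.sin_add_int_mul_two_pi (-(x + 2*θ)) (2*(k:ℤ) + 2)
        have harg : (-(x + 2*θ)) + ((2*(k:ℤ) + 2 : ℤ):ℝ) * (2*π) = 2*r - x := by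
          push_cast; rw [hrdef]; ring
        rw [harg] at h1'
        rw [h1', Real.sin_neg]
      have hφsum : 0 ≤ (Real.sin x + Real.sin θ) + (Real.sin (2*r - x) + Real.sin θ) := by
        rw [hσs]
        have := aux_pair_trig θ x hθ₀ (by linarith)
        linarith
      show 0 ≤ h x * (Real.sin x + Real.sin θ) +
        h (2*r - x) * (Real.sin (2*r - x) + Real.sin θ)
      nlinarith [mul_le_mul_of_nonneg_right hhσ hφσ,
        mul_nonneg hhx hφsum]
    rw [hsplit]
    linarith
  -- lower bound constant δ
  set δ : ℝ := ∫ x in (0:ℝ)..(π/2), h x * Real.sin x with hδdef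
  have hπ2a : π/2 < a := by linarith
  have hδint : IntervalIntegrable (fun x => h x * Real.sin x)
      Real.measureSpace.volume 0 (π/2) := by
    apply ContinuousOn.intervalIntegrable
    apply (hhc.mono ?_).mul (Real.continuous_sin.continuousOn)
    intro y hy
    rw [Set.uIcc_of_le (by linarith : (0:ℝ) ≤ π/2)] at hy
    exact ⟨hy.1, by linarith [hy.2]⟩
  have hδpos : 0 < δ := by
    apply intervalIntegral.intervalIntegral_pos_of_pos_on hδint ?_ (by linarith)
    intro x hx
    exact mul_pos (hpos x ⟨hx.1, by linarith [hx.2]⟩)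
      (Real.sin_pos_of_pos_of_lt_pi hx.1 (by linarith [hx.2]))
  have hbase : δ ≤ ∫ x in (0:ℝ)..(π/2), F x := by
    apply intervalIntegral.integral_mono_on (by linarith : (0:ℝ) ≤ π/2) hδint
      (hFi 0 (π/2) le_rfl (by linarith) ha0 hπ2a)
    intro x hx
    have hhx : 0 ≤ h x := hnn x ⟨hx.1, by linarith [hx.2]⟩
    show h x * Real.sin x ≤ h x * (Real.sin x + Real.sin θ)
    nlinarith
  -- chain points
  set W : ℕ → ℝ := fun m => if m = 0 then π/2 else 2*(m:ℝ)*π + π - 3*θ with hWdef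
  have hWlb : ∀ m : ℕ, 2*(m:ℝ)*π - θ ≤ W m := by
    intro m
    cases m with
    | zero => simp [hWdef]; linarith
    | succ m => simp [hWdef]; push_cast; linarith
  have hW0 : ∀ m : ℕ, 0 ≤ W m := by
    intro m
    cases m with
    | zero => simp [hWdef]; linarith
    | succ m =>
      simp [hWdef]; push_cast
      have : (0:ℝ) ≤ (m:ℝ) := Nat.cast_nonneg m
      nlinarith
  have hWub : ∀ m : ℕ, W m ≤ 2*(m:ℝ)*π + π + θ := by
    intro m
    cases m with
    | zero => simp [hWdef]; linarith
    | succ m => simp [hWdef]; push_cast; linarith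
  have hWa : ∀ m : ℕ, m + 1 ≤ n → W m < a := by
    intro m hm
    have : (m:ℝ) + 1 ≤ (n:ℝ) := by exact_mod_cast hm
    calc W m ≤ 2*(m:ℝ)*π + π + θ := hWub m
    _ < a := by rw [ha]; push_cast; nlinarith
  -- the inductive chain
  have hclaim : ∀ m : ℕ, m + 1 ≤ n → δ ≤ ∫ x in (0:ℝ)..(W m), F x := by
    intro m
    induction m with
    | zero =>
      intro _
      simpa [hWdef] using hbase
    | succ m ih =>
      intro hm1
      have hmn : m + 1 ≤ n := by omega
      have hind := ih hmn
      have hm1n : (m:ℝ) + 2 ≤ (n:ℝ) := by exact_mod_cast hm1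
      set L : ℝ := 2*(m:ℝ)*π + π + θ with hLdef
      set r : ℝ := 2*(m:ℝ)*π + 2*π - θ with hrdef
      have hWm : W (m+1) = 2*(m:ℝ)*π + 3*π - 3*θ := by
        simp [hWdef]; push_cast; ring
      have hWma : W (m+1) < a := hWa (m+1) hm1
      have hm0 : (0:ℝ) ≤ (m:ℝ) := Nat.cast_nonneg m
      have hWmlb := hWlb m
      have hWm0 := hW0 m
      have hWmub := hWub m
      have hWmlta : W m < a := hWa m hmn
      have hLa : L < a := by rw [ha, hLdef]; push_cast; nlinarith
      have hra : r < a := by rw [ha, hrdef]; push_cast; nlinarith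
      have hL0 : 0 ≤ L := by rw [hLdef]; nlinarith
      have hr0 : 0 ≤ r := by rw [hrdef]; nlinarith
      have hWL : W m ≤ L := by rw [hLdef]; exact hWmub
      have hLr : L ≤ r := by rw [hLdef, hrdef]; linarith
      have hrW : r ≤ W (m+1) := by rw [hrdef, hWm]; linarith
      have hgap1 : 0 ≤ ∫ x in (W m)..L, F x :=
        hgap m (W m) L hWm0 hWmlb hWL (by rw [hLdef]) hLa
      have hpair1 := hpair m (W (m+1)) (by rw [hWm]; linarith)
        (le_of_eq hWm) hWma
      rw [show (2*(m:ℝ)*π + 3*π - 3*θ) - W (m+1) = 0 by rw [hWm]; ring] at hpair1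
      have hsplit1 : (∫ x in (0:ℝ)..(W (m+1)), F x) =
          (∫ x in (0:ℝ)..(W m), F x) + ((∫ x in (W m)..L, F x) +
            ((∫ x in L..r, F x) + ∫ x in r..(W (m+1)), F x)) := by
        rw [intervalIntegral.integral_add_adjacent_intervals
          (hFi L r hL0 hr0 hLa hra)
          (hFi r (W (m+1)) hr0 (hW0 (m+1)) hra hWma)]
        rw [intervalIntegral.integral_add_adjacent_intervals
          (hFi (W m) L hWm0 hL0 hWmlta hLa)
          (hFi L (W (m+1)) hL0 (hW0 (m+1)) hLa hWma)]
        rw [intervalIntegral.integral_add_adjacent_intervals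
          (hFi 0 (W m) le_rfl hWm0 ha0 hWmlta)
          (hFi (W m) (W (m+1)) hWm0 (hW0 (m+1)) hWmlta hWma)]
      rw [hsplit1]
      have : -(2 * h r) * 0 = 0 := by ring
      rw [← hLdef, ← hrdef] at hpair1
      nlinarith [hpair1]
  -- main lower bound for ∫ F on [0, b]
  set C : ℝ := if n = 0 then 0 else 2 * h (2*(n:ℝ)*π - θ) with hCdef
  have hK : ∀ b : ℝ, π/2 ≤ b → 2*(n:ℝ)*π - θ ≤ b → b < a →
      δ - C*(a-b) ≤ ∫ x in (0:ℝ)..b, F x := by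
    intro b hbπ hbn hba
    have hb0 : (0:ℝ) ≤ b := by linarith
    cases n with
    | zero =>
      have hC : C = 0 := by rw [hCdef]; simp
      have ha' : a = π + θ := by rw [ha]; push_cast; ring
      have hsplit : (∫ x in (0:ℝ)..b, F x) =
          (∫ x in (0:ℝ)..(π/2), F x) + ∫ x in (π/2)..b, F x :=
        (intervalIntegral.integral_add_adjacent_intervals
          (hFi 0 (π/2) le_rfl (by linarith) ha0 hπ2a)
          (hFi (π/2) b (by linarith) hb0 hπ2a hba)).symm
      have hgap0 : 0 ≤ ∫ x in (π/2)..b, F x := by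
        apply hgap 0 (π/2) b (by linarith) (by push_cast; linarith) hbπ
          (by push_cast; rw [ha'] at hba; linarith) hba
      rw [hC, hsplit]; linarith
    | succ m =>
      have hC : C = 2 * h (2*((m:ℝ)+1)*π - θ) := by
        have hcast : ((m+1:ℕ):ℝ) = (m:ℝ)+1 := by push_cast; ring
        rw [hCdef, if_neg (Nat.succ_ne_zero m), hcast]
      have hm0 : (0:ℝ) ≤ (m:ℝ) := Nat.cast_nonneg m
      have hncast : ((Nat.succ m : ℕ):ℝ) = (m:ℝ)+1 := by push_cast; ring
      rw [hncast] at hbn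
      have haeq : a = 2*((m:ℝ)+1)*π + π + θ := by rw [ha]; push_cast; ring
      set L : ℝ := 2*(m:ℝ)*π + π + θ with hLdef
      set r : ℝ := 2*(m:ℝ)*π + 2*π - θ with hrdef
      set R : ℝ := 2*(m:ℝ)*π + 3*π - 3*θ with hRdef
      have hrn : r = 2*((m:ℝ)+1)*π - θ := by rw [hrdef]; ring
      set y : ℝ := min b R with hydef
      have hclaim1 : δ ≤ ∫ x in (0:ℝ)..(W m), F x := hclaim m (by omega)
      have hWmlb := hWlb m
      have hWm0 := hW0 m
      have hWmub := hWub m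
      have hWmlta : W m < a := hWa m (by omega)
      have hLa : L < a := by rw [haeq, hLdef]; nlinarith
      have hra : r < a := by rw [haeq, hrdef]; nlinarith
      have hRa : R ≤ a := by rw [haeq, hRdef]; nlinarith
      have hL0 : 0 ≤ L := by rw [hLdef]; nlinarith
      have hr0 : 0 ≤ r := by rw [hrdef]; nlinarith
      have hWL : W m ≤ L := by rw [hLdef]; exact hWmub
      have hLr : L ≤ r := by rw [hLdef, hrdef]; linarith
      have hry : r ≤ y := by
        apply le_min ?_ (by rw [hrdef, hRdef]; linarith)
        rw [hrn]; exact hbn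
      have hyR : y ≤ R := min_le_right b R
      have hyb : y ≤ b := min_le_left b R
      have hya : y < a := lt_of_le_of_lt hyb hba
      have hy0 : 0 ≤ y := le_trans hr0 hry
      have hgap1 : 0 ≤ ∫ x in (W m)..L, F x :=
        hgap m (W m) L hWm0 hWmlb hWL (by rw [hLdef]) hLa
      have hpair1 := hpair m y (by rw [← hrdef]; exact hry) (by rw [← hRdef]; exact hyR) hya
      rw [← hLdef, ← hrdef, ← hRdef] at hpair1
      have hgap2 : 0 ≤ ∫ x in y..b, F x := by
        apply hgap (m+1) y b hy0 ?_ hyb ?_ hba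
        · push_cast; rw [hrn] at hry; linarith
        · push_cast; rw [haeq] at hba; linarith
      have hsplit : (∫ x in (0:ℝ)..b, F x) =
          (∫ x in (0:ℝ)..(W m), F x) + ((∫ x in (W m)..L, F x) +
            ((∫ x in L..r, F x) + ((∫ x in r..y, F x) + ∫ x in y..b, F x))) := by
        rw [intervalIntegral.integral_add_adjacent_intervals
          (hFi r y hr0 hy0 hra hya) (hFi y b hy0 hb0 hya hba)]
        rw [intervalIntegral.integral_add_adjacent_intervals
          (hFi L r hL0 hr0 hLa hra) (hFi r b hr0 hb0 hra hba)]
        rw [intervalIntegral.integral_add_adjacent_intervals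
          (hFi (W m) L hWm0 hL0 hWmlta hLa) (hFi L b hL0 hb0 hLa hba)]
        rw [intervalIntegral.integral_add_adjacent_intervals
          (hFi 0 (W m) le_rfl hWm0 ha0 hWmlta) (hFi (W m) b hWm0 hb0 hWmlta hba)]
      have hhr0 : 0 ≤ h r := hnn r ⟨hr0, hra⟩
      have hRy : R - y ≤ a - b := by
        rcases le_or_gt b R with hbR | hbR
        · rw [hydef, min_eq_left hbR]; linarith
        · rw [hydef, min_eq_right hbR.le]; linarith
      have hCineq : 2 * h r * (R - y) ≤ C * (a - b) := by
        rw [hC, ← hrn]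
        apply mul_le_mul_of_nonneg_left hRy (by linarith)
      rw [hsplit]
      linarith [hpair1, hCineq, hclaim1, hgap1, hgap2]
  -- integration by parts identity
  have hFTC : ∀ b : ℝ, 0 < b → b < a →
      (∫ t in (0:ℝ)..b, g t * Real.cos t) =
        g b * Real.sin b - (∫ x in (0:ℝ)..b, F x) + Real.sin θ * (g b - g 0) := by
    intro b hb0 hba
    have hsub : Icc (0:ℝ) b ⊆ Ico 0 a := fun y hy => ⟨hy.1, lt_of_le_of_lt hy.2 hba⟩
    have hint1 : IntervalIntegrable (fun x => h x * Real.sin x)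
        Real.measureSpace.volume 0 b :=
      ContinuousOn.intervalIntegrable_of_Icc hb0.le
        ((hhc.mono hsub).mul Real.continuous_sin.continuousOn)
    have hint2 : IntervalIntegrable (fun x => g x * Real.cos x)
        Real.measureSpace.volume 0 b :=
      ContinuousOn.intervalIntegrable_of_Icc hb0.le
        ((hgc.mono hsub).mul Real.continuous_cos.continuousOn)
    have hinth : IntervalIntegrable h Real.measureSpace.volume 0 b :=
      ContinuousOn.intervalIntegrable_of_Icc hb0.le (hhc.mono hsub)
    have heq1 : (∫ y in (0:ℝ)..b, (h y * Real.sin y + g y * Real.cos y)) =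
        g b * Real.sin b - g 0 * Real.sin 0 := by
      apply intervalIntegral.integral_eq_sub_of_hasDeriv_right_of_le hb0.le
        ((hgc.mono hsub).mul Real.continuous_sin.continuousOn)
        (fun x hx => (((hder x ⟨hx.1, lt_trans hx.2 hba⟩).mul
          (Real.hasDerivAt_sin x))).hasDerivWithinAt)
        (hint1.add hint2)
    have heq2 : (∫ y in (0:ℝ)..b, h y) = g b - g 0 :=
      intervalIntegral.integral_eq_sub_of_hasDeriv_right_of_le hb0.le (hgc.mono hsub)
        (fun x hx => ((hder x ⟨hx.1, lt_trans hx.2 hba⟩)).hasDerivWithinAt) hinth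
    have heq3 : (∫ y in (0:ℝ)..b, (h y * Real.sin y + g y * Real.cos y)) =
        (∫ y in (0:ℝ)..b, h y * Real.sin y) + ∫ y in (0:ℝ)..b, g y * Real.cos y :=
      intervalIntegral.integral_add hint1 hint2
    have heq4 : (∫ x in (0:ℝ)..b, F x) =
        (∫ y in (0:ℝ)..b, h y * Real.sin y) + Real.sin θ * ∫ y in (0:ℝ)..b, h y := by
      rw [← intervalIntegral.integral_const_mul, ← intervalIntegral.integral_add hint1
        (hinth.const_mul (Real.sin θ))]
      apply intervalIntegral.integral_congr
      intro x _
      show h x * (Real.sin x + Real.sin θ) = h x * Real.sin x + Real.sin θ * h x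
      ring
    rw [Real.sin_zero, mul_zero, sub_zero] at heq1
    rw [heq2] at heq4
    rw [heq3] at heq1
    linarith
  -- tail of the integral of g tends to zero
  have htail : ∀ ε : ℝ, 0 < ε → ∀ c : ℝ, 0 ≤ c → c < a →
      ∃ b : ℝ, c ≤ b ∧ b < a ∧ (∫ t in Ico b a, g t) < ε ∧ a - b < ε := by
    intro ε hε c hc0 hc
    have hac : 0 < a - c := by linarith
    set sfun : ℕ → Set ℝ := fun m => Ico 0 (a - (a-c)/((m:ℝ)+1)) with hsf
    have hmono : Monotone sfun := by
      intro i j hij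
      apply Ico_subset_Ico le_rfl
      have h1 : ((i:ℝ)+1) ≤ ((j:ℝ)+1) := by
        have : (i:ℝ) ≤ (j:ℝ) := by exact_mod_cast hij
        linarith
      gcongr
    have hunion : (⋃ m, sfun m) = Ico 0 a := by
      ext x
      simp only [hsf, mem_iUnion, mem_Ico]
      constructor
      · rintro ⟨m, h1, h2⟩
        refine ⟨h1, lt_of_lt_of_le h2 ?_⟩
        have : 0 < (a-c)/((m:ℝ)+1) := by positivity
        linarith
      · rintro ⟨h1, h2⟩
        obtain ⟨m, hm⟩ := exists_nat_gt ((a-c)/(a-x))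
        refine ⟨m, h1, ?_⟩
        have hax : 0 < a - x := by linarith
        have hm1 : 0 < (m:ℝ)+1 := by positivity
        have : (a-c)/((m:ℝ)+1) < a - x := by
          rw [div_lt_iff₀ hm1]
          have h3 : (a-c)/(a-x) < (m:ℝ)+1 := by linarith
          rw [div_lt_iff₀ hax] at h3
          linarith [mul_comm (a-x) ((m:ℝ)+1)]
        linarith
    have htd := tendsto_setIntegral_of_monotone (μ := Real.measureSpace.volume)
      (f := g) (fun m => measurableSet_Ico) hmono (by rw [hunion]; exact hg_int)
    rw [hunion, Metric.tendsto_atTop] at htd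
    obtain ⟨N1, hN1⟩ := htd ε hε
    obtain ⟨N2, hN2⟩ := exists_nat_gt ((a-c)/ε)
    set m := max N1 N2 with hm
    set b := a - (a-c)/((m:ℝ)+1) with hbdef
    have hm1 : (0:ℝ) < (m:ℝ)+1 := by positivity
    have hm1' : (1:ℝ) ≤ (m:ℝ)+1 := by
      have : (0:ℝ) ≤ (m:ℝ) := Nat.cast_nonneg m
      linarith
    have hble : c ≤ b := by
      rw [hbdef]
      have : (a-c)/((m:ℝ)+1) ≤ (a-c) := div_le_self hac.le hm1'
      linarith
    have hblt : b < a := by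
      rw [hbdef]
      have : 0 < (a-c)/((m:ℝ)+1) := by positivity
      linarith
    have habe : a - b < ε := by
      rw [hbdef]
      have hN2' : (a-c)/ε < (m:ℝ)+1 := by
        have h1 : (N2:ℝ) ≤ (m:ℝ) := by
          exact_mod_cast le_max_right N1 N2
        linarith
      rw [div_lt_iff₀ hε] at hN2'
      have : (a-c)/((m:ℝ)+1) < ε := by
        rw [div_lt_iff₀ hm1]
        linarith
      linarith
    have hIb := hN1 m (le_max_left N1 N2)
    rw [← hbdef] at hIb
    have h0b : (0:ℝ) ≤ b := le_trans hc0 hble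
    have hsplitI : (∫ t in Ico (0:ℝ) a, g t) =
        (∫ t in Ico (0:ℝ) b, g t) + ∫ t in Ico b a, g t := by
      rw [← Ico_union_Ico_eq_Ico h0b hblt.le]
      exact setIntegral_union Set.Ico_disjoint_Ico_same measurableSet_Ico
        (hg_int.mono_set (Ico_subset_Ico le_rfl hblt.le))
        (hg_int.mono_set (Ico_subset_Ico h0b le_rfl))
    refine ⟨b, hble, hblt, ?_, habe⟩
    rw [Real.dist_eq] at hIb
    have habs := abs_lt.mp hIb
    linarith [habs.1, habs.2]
  -- final assembly
  have hC0 : 0 ≤ C := by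
    rw [hCdef]
    rcases Nat.eq_zero_or_pos n with hn | hn
    · simp [hn]
    · rw [if_neg (Nat.pos_iff_ne_zero.mp hn)]
      have hn1 : (1:ℝ) ≤ (n:ℝ) := by exact_mod_cast hn
      have hmem : (2*(n:ℝ)*π - θ) ∈ Ico (0:ℝ) a := by
        constructor
        · nlinarith
        · rw [ha]; push_cast; nlinarith
      linarith [hnn _ hmem]
  have hna : 2*(n:ℝ)*π - θ < a := by rw [ha]; push_cast; linarith
  set c0 : ℝ := max (π/2) (2*(n:ℝ)*π - θ) with hc0def
  have hc0a : c0 < a := max_lt hπ2a hna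
  have hc00 : 0 ≤ c0 := le_trans (by linarith) (le_max_left _ _)
  have hεpos : 0 < δ / (2 + C) / 2 := by positivity
  obtain ⟨b, hbc, hba, hbtail, hbd⟩ := htail (δ / (2 + C) / 2) hεpos c0 hc00 hc0a
  set ε : ℝ := δ / (2 + C) / 2 with hεdef
  have hbπ2 : π/2 ≤ b := le_trans (le_max_left _ _) hbc
  have hbnθ : 2*(n:ℝ)*π - θ ≤ b := le_trans (le_max_right _ _) hbc
  have hb0 : 0 < b := lt_of_lt_of_le (by linarith) hbπ2
  have hKb := hK b hbπ2 hbnθ hba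
  have hFTCb := hFTC b hb0 hba
  -- sin a = -sin θ
  have hsina : Real.sin a = -Real.sin θ := by
    have h1 := Real.sin_add_int_mul_two_pi (π + θ) n
    rw [show (π + θ) + ((n:ℤ):ℝ)*(2*π) = a by rw [ha]; push_cast; ring] at h1
    rw [h1, show π + θ = θ + π by ring, Real.sin_add_pi]
  -- sin b + sin θ ≤ a - b
  have hsinb : Real.sin b + Real.sin θ ≤ a - b := by
    have hss := Real.sin_sub_sin b a
    have habs1 : |Real.sin ((b-a)/2)| ≤ |(b-a)/2| := Real.abs_sin_le_abs
    have habs2 : |(b-a)/2| = (a-b)/2 := by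
      rw [abs_of_nonpos (by linarith)]; ring
    have habs3 : |Real.cos ((b+a)/2)| ≤ 1 := Real.abs_cos_le_one _
    rw [habs2] at habs1
    have h1 : Real.sin b - Real.sin a ≤ 2 * ((a-b)/2) * 1 := by
      rw [hss]
      have hb1 := le_abs_self (Real.sin ((b-a)/2))
      have hb2 := neg_abs_le (Real.sin ((b-a)/2))
      have hc1 := le_abs_self (Real.cos ((b+a)/2))
      have hc2 := neg_abs_le (Real.cos ((b+a)/2))
      have hnn1 : 0 ≤ |Real.sin ((b-a)/2)| := abs_nonneg _
      have hnn2 : 0 ≤ |Real.cos ((b+a)/2)| := abs_nonneg _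
      nlinarith
    rw [hsina] at h1
    linarith
  set T : ℝ := ∫ t in Ico b a, g t with hTdef
  have hT0 : 0 ≤ T := setIntegral_nonneg measurableSet_Ico
    (fun t ht => (hg_pos t ⟨le_trans hb0.le ht.1, ht.2⟩).le)
  have hgbT : g b * (Real.sin b + Real.sin θ) ≤ T := by
    rcases le_or_gt (Real.sin b + Real.sin θ) 0 with hsb | hsb
    · have := mul_nonpos_of_nonneg_of_nonpos (hg_pos b ⟨hb0.le, hba⟩).le hsb
      linarith
    · have h1 : g b * (Real.sin b + Real.sin θ) ≤ g b * (a - b) :=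
        mul_le_mul_of_nonneg_left hsinb (hg_pos b ⟨hb0.le, hba⟩).le
      have h2 : g b * (a - b) ≤ T := by
        have h3 := setIntegral_ge_of_const_le (μ := Real.measureSpace.volume)
          (s := Ico b a) (f := g) (c := g b) measurableSet_Ico
          (by rw [Real.volume_Ico]; exact ENNReal.ofReal_ne_top)
          (fun x hx => hg_mono.monotoneOn ⟨hb0.le, hba⟩
            ⟨le_trans hb0.le hx.1, hx.2⟩ hx.1)
          (hg_int.mono_set (fun x hx => ⟨le_trans hb0.le hx.1, hx.2⟩))
        rw [Real.volume_real_Ico_of_le (by linarith), smul_eq_mul] at h3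
        linarith
      linarith
  -- integrability of g * cos
  have hgcos_int : IntegrableOn (fun t => g t * Real.cos t) (Ico 0 a) := by
    have h1 := hg_int.bdd_mul (c := 1) (Real.continuous_cos.aestronglyMeasurable)
      (Filter.Eventually.of_forall (fun x => by simpa using Real.abs_cos_le_one x))
    exact h1.congr (Filter.Eventually.of_forall (fun x => mul_comm _ _))
  have hii1 : IntervalIntegrable (fun t => g t * Real.cos t)
      Real.measureSpace.volume 0 b := by
    rw [intervalIntegrable_iff_integrableOn_Ioc_of_le hb0.le]
    exact hgcos_int.mono_set (fun x hx => ⟨hx.1.le, lt_of_le_of_lt hx.2 hba⟩)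
  have hii2 : IntervalIntegrable (fun t => g t * Real.cos t)
      Real.measureSpace.volume b a := by
    rw [intervalIntegrable_iff_integrableOn_Ioc_of_le hba.le]
    have hIoo : IntegrableOn (fun t => g t * Real.cos t) (Ioo b a) :=
      hgcos_int.mono_set (fun x hx => ⟨le_trans hb0.le hx.1.le, hx.2⟩)
    exact hIoo.congr_set_ae Ioo_ae_eq_Ioc.symm
  have hsplitI : (∫ t in (0:ℝ)..a, g t * Real.cos t) =
      (∫ t in (0:ℝ)..b, g t * Real.cos t) + ∫ t in b..a, g t * Real.cos t :=
    (intervalIntegral.integral_add_adjacent_intervals hii1 hii2).symm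
  have htail2 : (∫ t in b..a, g t * Real.cos t) ≤ T := by
    rw [intervalIntegral.integral_of_le hba.le, integral_Ioc_eq_integral_Ioo]
    have hTo : T = ∫ t in Ioo b a, g t := by rw [hTdef, integral_Ico_eq_integral_Ioo]
    rw [hTo]
    apply setIntegral_mono_on
      (hgcos_int.mono_set (fun x hx => ⟨le_trans hb0.le hx.1.le, hx.2⟩))
      (hg_int.mono_set (fun x hx => ⟨le_trans hb0.le hx.1.le, hx.2⟩))
      measurableSet_Ioo
    intro x hx
    have hx0 : 0 < g x := hg_pos x ⟨by linarith [hx.1], hx.2⟩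
    nlinarith [Real.cos_le_one x]
  have hg00 : 0 < g 0 := hg_pos 0 ⟨le_rfl, ha0⟩
  have hsθg0 : 0 ≤ Real.sin θ * g 0 := mul_nonneg hsθ0 hg00.le
  have hCab : C * (a - b) ≤ C * ε := mul_le_mul_of_nonneg_left hbd.le hC0
  have hCε : (2 + C) * ε = δ / 2 := by
    rw [hεdef]; field_simp
  have hmain : (∫ t in (0:ℝ)..b, g t * Real.cos t) ≤
      T - Real.sin θ * g 0 - δ + C*(a-b) := by
    rw [hFTCb]
    nlinarith [hgbT, hKb]
  rw [hsplitI]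
  nlinarith [hmain, htail2, hbtail, hCab, hCε, hT0]
end

section
/- Let g be a positive C¹ integrable function on [0,a) with g(0) = 0 such that both g and g' are strictly increasing on [0,a). If a = 2nπ + π/2 + θ for some nonnegative integer n and 0 ≤ θ ≤ π/2, then ∫₀ᵃ g(t) sin t dt > 0. -/
open Real Set MeasureTheory

private lemma sin_add_nat (x : ℝ) (m : ℕ) : Real.sin (x + 2*m*π) = Real.sin x := by
  have h := Real.sin_add_int_mul_two_pi x (m : ℤ)
  push_cast at h
  rw [← h]
  congr 1
  ring

private lemma sin_3pi2 : Real.sin (3*π/2) = -1 := by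
  rw [show (3*π/2:ℝ) = -(π/2) + 2*π by ring, Real.sin_add_two_pi, Real.sin_neg,
    Real.sin_pi_div_two]

private lemma key_bound {a : ℝ} {h : ℝ → ℝ} (hcont : ContinuousOn h (Ico 0 a))
    {p q C : ℝ} (hpq : p ≤ q) (hsub : Icc p q ⊆ Ico 0 a)
    (hpt : ∀ t ∈ Icc p q, C * Real.cos t ≤ h t * Real.cos t) :
    C * (Real.sin q - Real.sin p) ≤ ∫ t in p..q, h t * Real.cos t := by
  have hint : IntervalIntegrable (fun t => h t * Real.cos t) volume p q := by
    apply ContinuousOn.intervalIntegrable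
    rw [uIcc_of_le hpq]
    exact (hcont.mono hsub).mul Real.continuous_cos.continuousOn
  have h1 : ∫ t in p..q, C * Real.cos t = C * (Real.sin q - Real.sin p) := by
    rw [intervalIntegral.integral_const_mul, integral_cos]
  calc C * (Real.sin q - Real.sin p) = ∫ t in p..q, C * Real.cos t := h1.symm
    _ ≤ ∫ t in p..q, h t * Real.cos t :=
      intervalIntegral.integral_mono_on hpq
        ((continuous_const.mul Real.continuous_cos).intervalIntegrable _ _) hint hpt

private lemma cos_nonneg_window {m : ℕ} {t : ℝ} (h1 : 2*m*π - π/2 ≤ t) (h2 : t ≤ 2*m*π + π/2) :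
    0 ≤ Real.cos t := by
  have e : Real.cos (t - (m:ℤ) * (2*π)) = Real.cos t := Real.cos_sub_int_mul_two_pi t m
  rw [← e]
  apply Real.cos_nonneg_of_mem_Icc
  constructor <;> (push_cast at h1 h2 ⊢ <;> skip) <;> linarith

private lemma cos_nonpos_window {m : ℕ} {t : ℝ} (h1 : 2*m*π + π/2 ≤ t) (h2 : t ≤ 2*m*π + 3*π/2) :
    Real.cos t ≤ 0 := by
  have e : Real.cos (t - (m:ℤ) * (2*π)) = Real.cos t := Real.cos_sub_int_mul_two_pi t m
  rw [← e]
  apply Real.cos_nonpos_of_pi_div_two_le_of_le <;> (push_cast at h1 h2 ⊢ <;> skip) <;> linarith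

private lemma hcos_intble {a : ℝ} {h : ℝ → ℝ} (hcont : ContinuousOn h (Ico 0 a))
    {p q : ℝ} (h0 : 0 ≤ p) (hq : q < a) (hpq : p ≤ q) :
    IntervalIntegrable (fun t => h t * Real.cos t) volume p q := by
  apply ContinuousOn.intervalIntegrable
  rw [uIcc_of_le hpq]
  have hsub : Icc p q ⊆ Ico 0 a := fun t ht => ⟨le_trans h0 ht.1, lt_of_le_of_lt ht.2 hq⟩
  exact (hcont.mono hsub).mul Real.continuous_cos.continuousOn

private lemma abel_chunk {a : ℝ} {h : ℝ → ℝ} (hcont : ContinuousOn h (Ico 0 a))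
    (hmono : MonotoneOn h (Ico 0 a)) (hnn : ∀ t ∈ Ico 0 a, 0 ≤ h t) :
    ∀ m : ℕ, 1 ≤ m → ∀ x : ℝ, 2*m*π - π/2 ≤ x → x ≤ 2*m*π + π/2 → x < a →
      (m : ℝ) * h (2*m*π - π/2) * (Real.sin x - 1) ≤ ∫ t in (π/2)..x, h t * Real.cos t := by
  have hπ := Real.pi_pos
  intro m hm
  induction m, hm using Nat.le_induction with
  | base =>
    intro x hx1 hx2 hxa
    push_cast at hx1 hx2 ⊢
    rw [show ((2:ℝ)*1*π - π/2) = 3*π/2 by ring]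
    have hx3 : 3*π/2 ≤ x := by linarith
    have hx5 : x ≤ 5*π/2 := by linarith
    have h32a : (3*π/2 : ℝ) < a := lt_of_le_of_lt hx3 hxa
    have hmem32 : (3*π/2 : ℝ) ∈ Ico (0:ℝ) a := ⟨by linarith, h32a⟩
    -- piece 1 : [π/2, 3π/2]
    have B1 : h (3*π/2) * (Real.sin (3*π/2) - Real.sin (π/2)) ≤
        ∫ t in (π/2)..(3*π/2), h t * Real.cos t := by
      apply key_bound hcont (by linarith)
      · intro t ht
        exact ⟨by linarith [ht.1], lt_of_le_of_lt ht.2 h32a⟩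
      · intro t ht
        apply mul_le_mul_of_nonpos_right
        · exact hmono ⟨by linarith [ht.1], lt_of_le_of_lt ht.2 h32a⟩ hmem32 ht.2
        · exact cos_nonpos_window (m := 0) (by push_cast; linarith [ht.1])
            (by push_cast; linarith [ht.2])
    -- piece 2 : [3π/2, x]
    have B2 : h (3*π/2) * (Real.sin x - Real.sin (3*π/2)) ≤
        ∫ t in (3*π/2)..x, h t * Real.cos t := by
      apply key_bound hcont hx3
      · intro t ht
        exact ⟨by linarith [ht.1], lt_of_le_of_lt ht.2 hxa⟩
      · intro t ht
        apply mul_le_mul_of_nonneg_right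
        · exact hmono hmem32 ⟨by linarith [ht.1], lt_of_le_of_lt ht.2 hxa⟩ ht.1
        · exact cos_nonneg_window (m := 1) (by push_cast; linarith [ht.1])
            (by push_cast; linarith [ht.2])
    have hsplit : (∫ t in (π/2)..(3*π/2), h t * Real.cos t) + ∫ t in (3*π/2)..x, h t * Real.cos t
        = ∫ t in (π/2)..x, h t * Real.cos t :=
      intervalIntegral.integral_add_adjacent_intervals
        (hcos_intble hcont (by linarith) h32a (by linarith))
        (hcos_intble hcont (by linarith) hxa hx3)
    rw [← hsplit]
    rw [sin_3pi2, Real.sin_pi_div_two] at B1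
    rw [sin_3pi2] at B2
    linarith [B1, B2]
  | succ m hm ih =>
    intro x hx1 hx2 hxa
    have hm1 : (1:ℝ) ≤ (m:ℝ) := by exact_mod_cast hm
    have hmπ : (0:ℝ) ≤ (m:ℝ)*π := by positivity
    have hππ : π ≤ (m:ℝ)*π := by nlinarith
    push_cast at hx1 hx2 ⊢
    set x' := x - 2*π with hx'def
    set p : ℝ := 2*(m:ℝ)*π + π/2 with hpdef
    set c : ℝ := 2*(m:ℝ)*π + 3*π/2 with hcdef
    have hx'1 : 2*(m:ℝ)*π - π/2 ≤ x' := by simp only [hx'def]; linarith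
    have hx'2 : x' ≤ p := by simp only [hx'def, hpdef]; linarith
    have hcx : c ≤ x := by simp only [hcdef]; linarith
    have hx'a : x' < a := by simp only [hx'def]; linarith
    have hca : c < a := lt_of_le_of_lt hcx hxa
    have hc0 : (0:ℝ) ≤ c := by simp only [hcdef]; linarith
    have hcmem : c ∈ Ico (0:ℝ) a := ⟨hc0, hca⟩
    have hp2x' : π/2 ≤ x' := by simp only [hx'def]; linarith
    have hpc : p ≤ c := by simp only [hpdef, hcdef]; linarith
    have hp0 : (0:ℝ) ≤ p := by simp only [hpdef]; linarith
    have hsinx' : Real.sin x' = Real.sin x := by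
      simp only [hx'def]; exact Real.sin_sub_two_pi x
    have hsinp : Real.sin p = 1 := by
      rw [hpdef, add_comm, sin_add_nat, Real.sin_pi_div_two]
    have hsinc : Real.sin c = -1 := by
      rw [hcdef, add_comm, sin_add_nat, sin_3pi2]
    -- IH on [π/2, x']
    have B1 : (m : ℝ) * h (2*(m:ℝ)*π - π/2) * (Real.sin x' - 1) ≤
        ∫ t in (π/2)..x', h t * Real.cos t := by
      have := ih x' (by push_cast; linarith) (by push_cast; simp only [hx'def]; linarith) hx'a
      push_cast at this
      exact this
    -- [x', p] : nonneg
    have B2 : (0:ℝ) ≤ ∫ t in x'..p, h t * Real.cos t := by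
      have := key_bound hcont (C := 0) hx'2
        (fun t ht => ⟨by simp only [hx'def, hpdef] at ht; linarith [ht.1], lt_of_le_of_lt ht.2 (lt_of_le_of_lt hpc hca)⟩)
        (fun t ht => by
          rw [zero_mul]
          apply mul_nonneg
          · exact hnn t ⟨by simp only [hx'def, hpdef] at ht; linarith [ht.1],
              lt_of_le_of_lt ht.2 (lt_of_le_of_lt hpc hca)⟩
          · exact cos_nonneg_window (m := m)
              (by push_cast; simp only [hx'def, hpdef] at ht; linarith [ht.1])
              (by push_cast; simp only [hx'def, hpdef] at ht; linarith [ht.2]))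
      linarith [this]
    -- [p, c] : cos ≤ 0
    have B3 : h c * (Real.sin c - Real.sin p) ≤ ∫ t in p..c, h t * Real.cos t := by
      apply key_bound hcont hpc
      · intro t ht
        exact ⟨le_trans hp0 ht.1, lt_of_le_of_lt ht.2 hca⟩
      · intro t ht
        apply mul_le_mul_of_nonpos_right
        · exact hmono ⟨le_trans hp0 ht.1, lt_of_le_of_lt ht.2 hca⟩ hcmem ht.2
        · exact cos_nonpos_window (m := m)
            (by push_cast; simp only [hpdef, hcdef] at ht; linarith [ht.1])
            (by push_cast; simp only [hpdef, hcdef] at ht; linarith [ht.2])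
    -- [c, x] : cos ≥ 0
    have B4 : h c * (Real.sin x - Real.sin c) ≤ ∫ t in c..x, h t * Real.cos t := by
      apply key_bound hcont hcx
      · intro t ht
        exact ⟨le_trans hc0 ht.1, lt_of_le_of_lt ht.2 hxa⟩
      · intro t ht
        apply mul_le_mul_of_nonneg_right
        · exact hmono hcmem ⟨le_trans hc0 ht.1, lt_of_le_of_lt ht.2 hxa⟩ ht.1
        · exact cos_nonneg_window (m := m+1)
            (by push_cast; simp only [hcdef] at ht; linarith [ht.1])
            (by push_cast; simp only [hcdef] at ht; linarith [ht.2])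
    have hq0 : (0:ℝ) ≤ π/2 := by linarith
    have hsplit1 : (∫ t in (π/2)..x', h t * Real.cos t) + ∫ t in x'..p, h t * Real.cos t
        = ∫ t in (π/2)..p, h t * Real.cos t :=
      intervalIntegral.integral_add_adjacent_intervals
        (hcos_intble hcont hq0 hx'a hp2x')
        (hcos_intble hcont (by linarith [hp2x']) (lt_of_le_of_lt hpc hca) hx'2)
    have hsplit2 : (∫ t in (π/2)..p, h t * Real.cos t) + ∫ t in p..c, h t * Real.cos t
        = ∫ t in (π/2)..c, h t * Real.cos t :=
      intervalIntegral.integral_add_adjacent_intervals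
        (hcos_intble hcont hq0 (lt_of_le_of_lt hpc hca) (by linarith [hp2x', hx'2]))
        (hcos_intble hcont hp0 hca hpc)
    have hsplit3 : (∫ t in (π/2)..c, h t * Real.cos t) + ∫ t in c..x, h t * Real.cos t
        = ∫ t in (π/2)..x, h t * Real.cos t :=
      intervalIntegral.integral_add_adjacent_intervals
        (hcos_intble hcont hq0 hca (by linarith [hp2x', hx'2, hpc]))
        (hcos_intble hcont hc0 hxa hcx)
    rw [← hsplit3, ← hsplit2, ← hsplit1]
    rw [hsinx'] at B1
    rw [hsinc, hsinp] at B3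
    rw [hsinc] at B4
    -- monotonicity: h (2mπ - π/2) ≤ h c
    have hmm : h (2*(m:ℝ)*π - π/2) ≤ h c := by
      apply hmono _ hcmem (by simp only [hcdef]; linarith)
      exact ⟨by linarith, lt_of_le_of_lt (by simp only [hcdef]; linarith) hca⟩
    have hsle : Real.sin x ≤ 1 := Real.sin_le_one x
    have key : (0:ℝ) ≤ (m:ℝ) * ((h c - h (2*(m:ℝ)*π - π/2)) * (1 - Real.sin x)) := by
      apply mul_nonneg (by positivity) (mul_nonneg (by linarith) (by linarith))
    rw [show 2*((m:ℝ)+1)*π - π/2 = c by simp only [hcdef]; ring]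
    linarith [B1, B2, B3, B4, key]

theorem sin_integral_pos_of_increasing
    (a θ : ℝ) (n : ℕ)
    (g : ℝ → ℝ)
    (hg_pos : ∀ t ∈ Ioo (0 : ℝ) a, 0 < g t)
    (hg_C1 : ContDiffOn ℝ 1 g (Ico 0 a))
    (hg_int : IntegrableOn g (Ico 0 a))
    (hg_mono : StrictMonoOn g (Ico 0 a))
    (hg'_mono : StrictMonoOn (derivWithin g (Ico 0 a)) (Ico 0 a))
    (hθ₀ : 0 ≤ θ) (hθ₁ : θ ≤ π / 2)
    (hg0 : g 0 = 0)
    (ha : a = 2 * n * π + π / 2 + θ) :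
    0 < ∫ t in (0 : ℝ)..a, g t * Real.sin t := by
  have hπ := Real.pi_pos
  have hgs_int : IntegrableOn (fun t => g t * Real.sin t) (Ico 0 a) := by
    apply Integrable.mono hg_int
      (hg_int.aestronglyMeasurable.mul (Real.continuous_sin.aestronglyMeasurable.restrict))
    filter_upwards with t
    simp only [Pi.mul_apply]
    rw [norm_mul]
    apply mul_le_of_le_one_right (norm_nonneg _)
    rw [Real.norm_eq_abs]
    exact Real.abs_sin_le_one t
  rcases Nat.eq_zero_or_pos n with hn | hn
  · -- n = 0 : integrand is positive on (0, a)
    subst hn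
    have haπ : a ≤ π := by rw [ha]; push_cast; linarith
    have ha0 : 0 < a := by rw [ha]; push_cast; linarith
    apply intervalIntegral.intervalIntegral_pos_of_pos_on
    · rw [intervalIntegrable_iff_integrableOn_Ioc_of_le ha0.le,
        integrableOn_Ioc_iff_integrableOn_Ioo]
      exact hgs_int.mono_set Ioo_subset_Ico_self
    · intro t ht
      exact mul_pos (hg_pos t ht)
        (Real.sin_pos_of_pos_of_lt_pi ht.1 (lt_of_lt_of_le ht.2 haπ))
    · exact ha0
  · -- n ≥ 1
    have hn1 : (1:ℝ) ≤ (n:ℝ) := by exact_mod_cast hn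
    have hnπ : π ≤ (n:ℝ)*π := by nlinarith
    set b : ℝ := 2*(n:ℝ)*π + π/2 with hbdef
    have hba : b ≤ a := by rw [ha]; push_cast; linarith
    have hπ2a : π/2 < a := by
      apply lt_of_lt_of_le _ hba
      rw [hbdef]; linarith
    set h := derivWithin g (Ico 0 a) with hhdef
    have hcont_g : ContinuousOn g (Ico 0 a) := hg_C1.continuousOn
    have hcont_h : ContinuousOn h (Ico 0 a) :=
      hg_C1.continuousOn_derivWithin (uniqueDiffOn_Ico 0 a) le_rfl
    have hmono_h : MonotoneOn h (Ico 0 a) := hg'_mono.monotoneOn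
    have hderiv : ∀ t ∈ Ioo (0:ℝ) a, HasDerivAt g (h t) t := by
      intro t ht
      have h1 : HasDerivWithinAt g (h t) (Ico 0 a) t :=
        ((hg_C1.differentiableOn one_ne_zero) t (Ioo_subset_Ico_self ht)).hasDerivWithinAt
      exact h1.hasDerivAt (Filter.mem_of_superset (Ioo_mem_nhds ht.1 ht.2) Ioo_subset_Ico_self)
    have hnn_h : ∀ t ∈ Ico (0:ℝ) a, 0 ≤ h t := by
      intro t ht
      have hta : t < a := ht.2
      have hds : HasDerivWithinAt g (h t) (Ico 0 a) t :=
        ((hg_C1.differentiableOn one_ne_zero) t ht).hasDerivWithinAt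
      have hslope := hasDerivWithinAt_iff_tendsto_slope.mp hds
      have hsub : Ioo t a ⊆ Ico 0 a \ {t} := fun s hs =>
        ⟨⟨le_trans ht.1 hs.1.le, hs.2⟩, ne_of_gt hs.1⟩
      have hne : (nhdsWithin t (Ioo t a)).NeBot := by
        apply mem_closure_iff_nhdsWithin_neBot.mp
        rw [closure_Ioo (ne_of_lt hta)]
        exact ⟨le_rfl, hta.le⟩
      apply ge_of_tendsto (hslope.mono_left (nhdsWithin_mono _ hsub))
      filter_upwards [self_mem_nhdsWithin] with s hs
      rw [slope_def_field]
      apply div_nonneg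
      · exact sub_nonneg.2 ((hg_mono.monotoneOn) ht ⟨le_trans ht.1 hs.1.le, hs.2⟩ hs.1.le)
      · linarith [hs.1]
    have hgs_intble : ∀ p q : ℝ, 0 ≤ p → q < a → p ≤ q →
        IntervalIntegrable (fun t => g t * Real.sin t) volume p q := by
      intro p q h0 hq hpq
      apply ContinuousOn.intervalIntegrable
      rw [uIcc_of_le hpq]
      exact (hcont_g.mono (fun t ht => ⟨le_trans h0 ht.1, lt_of_le_of_lt ht.2 hq⟩)).mul
        Real.continuous_sin.continuousOn
    have hε : 0 < ∫ t in (0:ℝ)..(π/2), g t * Real.sin t := by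
      apply intervalIntegral.intervalIntegral_pos_of_pos_on
        (hgs_intble 0 (π/2) le_rfl hπ2a (by linarith)) _ (by linarith)
      intro t ht
      exact mul_pos (hg_pos t ⟨ht.1, lt_trans ht.2 hπ2a⟩)
        (Real.sin_pos_of_pos_of_lt_pi ht.1 (by linarith [ht.2]))
    -- main pointwise estimate
    have main : ∀ x : ℝ, 2*(n:ℝ)*π < x → x < b →
        (∫ t in (0:ℝ)..(π/2), g t * Real.sin t) - (∫ t in x..b, g t)
          + (n:ℝ) * h (2*(n:ℝ)*π - π/2) * (Real.sin x - 1)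
          ≤ ∫ t in (0:ℝ)..x, g t * Real.sin t := by
      intro x hx1 hx2
      have hx2' : x < 2*(n:ℝ)*π + π/2 := by rw [hbdef] at hx2; exact hx2
      have hxa : x < a := lt_of_lt_of_le hx2 hba
      have hx0 : (0:ℝ) < x := lt_trans (by nlinarith) hx1
      have hπ2x : π/2 ≤ x := by linarith
      have hsplit : (∫ t in (0:ℝ)..(π/2), g t * Real.sin t)
          + ∫ t in (π/2)..x, g t * Real.sin t
          = ∫ t in (0:ℝ)..x, g t * Real.sin t :=
        intervalIntegral.integral_add_adjacent_intervals
          (hgs_intble 0 (π/2) le_rfl hπ2a (by linarith))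
          (hgs_intble (π/2) x (by linarith) hxa hπ2x)
      have hibp : ∫ t in (π/2)..x, g t * Real.sin t
          = -(g x * Real.cos x) + ∫ t in (π/2)..x, h t * Real.cos t := by
        have hIBP := intervalIntegral.integral_mul_deriv_eq_deriv_mul
          (u := g) (u' := h) (v := fun t => -Real.cos t) (v' := Real.sin)
          (a := π/2) (b := x)
          (by rw [uIcc_of_le hπ2x]
              intro t ht
              exact hderiv t ⟨lt_of_lt_of_le (by linarith) ht.1, lt_of_le_of_lt ht.2 hxa⟩)
          (fun t _ => by simpa using (Real.hasDerivAt_cos t).fun_neg)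
          (by apply ContinuousOn.intervalIntegrable
              rw [uIcc_of_le hπ2x]
              exact hcont_h.mono (fun t ht => ⟨by linarith [ht.1], lt_of_le_of_lt ht.2 hxa⟩))
          (Real.continuous_sin.intervalIntegrable _ _)
        rw [hIBP]
        simp only [Real.cos_pi_div_two, neg_zero, mul_zero, sub_zero, mul_neg,
          intervalIntegral.integral_neg, sub_neg_eq_add]
      have hchunk := abel_chunk hcont_h hmono_h hnn_h n hn x
        (by push_cast; linarith) (by push_cast; linarith) hxa
      have hcosx_nonneg : 0 ≤ Real.cos x :=
        cos_nonneg_window (m := n) (by push_cast; linarith) (by push_cast; linarith)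
      have hcosx_le : Real.cos x ≤ b - x := by
        have e : Real.cos x = Real.sin (b - x) := by
          rw [show b - x = (π/2 - x) + 2*(n:ℝ)*π by rw [hbdef]; ring, sin_add_nat,
            Real.sin_pi_div_two_sub]
        rw [e]
        exact Real.sin_le (by linarith)
      have hgx_nonneg : 0 ≤ g x := (hg_pos x ⟨hx0, hxa⟩).le
      have hgb : g x * Real.cos x ≤ ∫ t in x..b, g t := by
        apply le_trans (mul_le_mul_of_nonneg_left hcosx_le hgx_nonneg)
        rw [intervalIntegral.integral_of_le hx2.le, integral_Ioc_eq_integral_Ioo]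
        have hconst : ∫ _ in Ioo x b, g x = g x * (b - x) := by
          rw [setIntegral_const, smul_eq_mul, Real.volume_real_Ioo,
            max_eq_left (by linarith), mul_comm]
        rw [← hconst]
        apply setIntegral_mono_on
        · exact integrableOn_const (by rw [Real.volume_Ioo]; exact ENNReal.ofReal_ne_top)
        · exact hg_int.mono_set (fun t ht => ⟨le_trans hx0.le ht.1.le, lt_of_lt_of_le ht.2 hba⟩)
        · exact measurableSet_Ioo
        · intro t ht
          exact (hg_mono.monotoneOn ⟨hx0.le, hxa⟩
            ⟨le_trans hx0.le ht.1.le, lt_of_lt_of_le ht.2 hba⟩ ht.1.le)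
      rw [← hsplit, hibp]
      linarith [hchunk, hgb]
    -- limits
    have hIcc_int : IntegrableOn (fun t => g t * Real.sin t) (Icc 0 a) :=
      (integrableOn_Icc_iff_integrableOn_Ico).2 hgs_int
    have hgIcc_int : IntegrableOn g (Icc 0 a) := (integrableOn_Icc_iff_integrableOn_Ico).2 hg_int
    have hb0 : (0:ℝ) < b := by rw [hbdef]; linarith
    have h2nb : 2*(n:ℝ)*π < b := by rw [hbdef]; linarith
    have hmemb : b ∈ uIcc (0:ℝ) b := by rw [uIcc_of_le hb0.le]; exact ⟨hb0.le, le_rfl⟩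
    have huIccsub : uIcc (0:ℝ) b ⊆ Icc 0 a := by
      rw [uIcc_of_le hb0.le]; exact Icc_subset_Icc le_rfl hba
    have hIccb : Icc (0:ℝ) b ∈ nhdsWithin b (Iio b) := Icc_mem_nhdsLT_of_mem ⟨hb0, le_rfl⟩
    have huIccmem : uIcc (0:ℝ) b ∈ nhdsWithin b (Iio b) := by rw [uIcc_of_le hb0.le]; exact hIccb
    have hT1 : Filter.Tendsto (fun x => ∫ t in (0:ℝ)..x, g t * Real.sin t)
        (nhdsWithin b (Iio b)) (nhds (∫ t in (0:ℝ)..b, g t * Real.sin t)) := by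
      have hcontΦ := intervalIntegral.continuousOn_primitive_interval
        (a := 0) (b := b) (μ := volume) (hIcc_int.mono_set huIccsub)
      exact (hcontΦ b hmemb).mono_left (nhdsWithin_le_of_mem huIccmem)
    have hT2 : Filter.Tendsto (fun x => ∫ t in x..b, g t) (nhdsWithin b (Iio b)) (nhds 0) := by
      have hcont2 := intervalIntegral.continuousOn_primitive_interval_left
        (a := 0) (b := b) (μ := volume) (hgIcc_int.mono_set huIccsub)
      have h1 := (hcont2 b hmemb).mono_left (nhdsWithin_le_of_mem huIccmem)
      simpa using h1
    have hsinb : Real.sin b = 1 := by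
      rw [hbdef, add_comm, sin_add_nat, Real.sin_pi_div_two]
    have hT3 : Filter.Tendsto (fun x => (∫ t in (0:ℝ)..(π/2), g t * Real.sin t)
        - (∫ t in x..b, g t) + (n:ℝ) * h (2*(n:ℝ)*π - π/2) * (Real.sin x - 1))
        (nhdsWithin b (Iio b)) (nhds (∫ t in (0:ℝ)..(π/2), g t * Real.sin t)) := by
      have hsin : Filter.Tendsto (fun x => Real.sin x) (nhdsWithin b (Iio b)) (nhds 1) := by
        rw [← hsinb]
        exact (Real.continuous_sin.tendsto b).mono_left nhdsWithin_le_nhds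
      have hfin : Filter.Tendsto (fun x => (∫ t in (0:ℝ)..(π/2), g t * Real.sin t)
          - (∫ t in x..b, g t) + (n:ℝ) * h (2*(n:ℝ)*π - π/2) * (Real.sin x - 1))
          (nhdsWithin b (Iio b))
          (nhds ((∫ t in (0:ℝ)..(π/2), g t * Real.sin t) - 0
            + (n:ℝ) * h (2*(n:ℝ)*π - π/2) * (1 - 1))) :=
        (Filter.Tendsto.sub tendsto_const_nhds hT2).add
          (Filter.Tendsto.mul tendsto_const_nhds (hsin.sub tendsto_const_nhds))
      simpa using hfin
    have hJ : (∫ t in (0:ℝ)..(π/2), g t * Real.sin t) ≤ ∫ t in (0:ℝ)..b, g t * Real.sin t := by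
      refine le_of_tendsto_of_tendsto hT3 hT1 ?_
      filter_upwards [Ioo_mem_nhdsLT_of_mem (⟨h2nb, le_rfl⟩ : b ∈ Ioc (2*(n:ℝ)*π) b)]
        with x hx
      exact main x hx.1 hx.2
    have hsplitb : (∫ t in (0:ℝ)..b, g t * Real.sin t) + ∫ t in b..a, g t * Real.sin t
        = ∫ t in (0:ℝ)..a, g t * Real.sin t := by
      apply intervalIntegral.integral_add_adjacent_intervals
      · exact (hIcc_int.mono_set huIccsub).intervalIntegrable
      · apply IntegrableOn.intervalIntegrable
        apply hIcc_int.mono_set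
        rw [uIcc_of_le hba]
        exact Icc_subset_Icc hb0.le le_rfl
    have htail : 0 ≤ ∫ t in b..a, g t * Real.sin t := by
      rw [intervalIntegral.integral_of_le hba, integral_Ioc_eq_integral_Ioo]
      apply setIntegral_nonneg measurableSet_Ioo
      intro t ht
      have hbt : b < t := ht.1
      have hta : t < a := ht.2
      rw [hbdef] at hbt
      have hta' : t < 2*(n:ℝ)*π + π/2 + θ := by rw [ha] at hta; push_cast at hta; exact hta
      have ht0 : 0 < t := by linarith
      apply mul_nonneg (hg_pos t ⟨ht0, hta⟩).le
      have e : Real.sin t = Real.sin (t - (n:ℤ)*(2*π)) := (Real.sin_sub_int_mul_two_pi t n).symm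
      rw [e]
      apply Real.sin_nonneg_of_nonneg_of_le_pi
      · push_cast; linarith
      · push_cast; linarith
    linarith [hε, hJ, htail, hsplitb]
end

section
/- Let g be a positive C¹ integrable function on [0,a) with g(0) = 0 such that both g and g' are strictly increasing on [0,a). If a = 2nπ + 3π/2 + θ for some nonnegative integer n and 0 ≤ θ ≤ π/2, then ∫₀ᵃ g(t) sin t dt < 0. -/
open Real Set MeasureTheory intervalIntegral Filter Topology

lemma sin_block_bound (F : ℝ → ℝ) (L : ℝ) (hL1 : π ≤ L) (hL2 : L ≤ 2*π)
    (hcont : ContinuousOn F (Icc 0 L)) (hmono : MonotoneOn F (Icc 0 L)) :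
    (∫ s in (0:ℝ)..L, F s * Real.sin s) ≤ F π * (1 - Real.cos L) := by
  have hπ := Real.pi_pos
  have h0L : (0:ℝ) ≤ L - π := by linarith
  have hLπ : L - π ≤ π := by linarith
  have hFS : ContinuousOn (fun s => F s * Real.sin s) (Icc 0 L) :=
    hcont.mul Real.continuous_sin.continuousOn
  have hi : ∀ c d : ℝ, 0 ≤ c → c ≤ d → d ≤ L →
      IntervalIntegrable (fun s => F s * Real.sin s) volume c d := by
    intro c d hc hcd hdL
    apply ContinuousOn.intervalIntegrable
    apply hFS.mono
    rw [uIcc_of_le hcd]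
    exact Icc_subset_Icc hc hdL
  have hFπcont : ContinuousOn (fun u => F (π + u) * Real.sin u) (Icc 0 (L - π)) := by
    apply ContinuousOn.mul _ Real.continuous_sin.continuousOn
    apply hcont.comp (continuous_const.add continuous_id).continuousOn
    intro u hu
    have h1 := hu.1
    have h2 := hu.2
    simp only [Pi.add_apply, id_eq]
    exact ⟨by linarith, by linarith⟩
  have hiFπ : IntervalIntegrable (fun u => F (π + u) * Real.sin u) volume 0 (L - π) := by
    apply ContinuousOn.intervalIntegrable
    rwa [uIcc_of_le h0L]
  have hkey : ∀ u : ℝ, F (π + u) * Real.sin (π + u) = -(F (π + u) * Real.sin u) := by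
    intro u
    rw [add_comm π u, Real.sin_add_pi]
    ring
  have hC : (∫ s in π..L, F s * Real.sin s)
      = - ∫ u in (0:ℝ)..(L-π), F (π + u) * Real.sin u := by
    have h1 : (∫ u in (0:ℝ)..(L-π), F (π + u) * Real.sin (π + u))
        = ∫ s in (π+0)..(π+(L-π)), F s * Real.sin s :=
      intervalIntegral.integral_comp_add_left (fun s => F s * Real.sin s) π
    rw [show π + 0 = π by ring, show π + (L - π) = L by ring] at h1
    rw [← h1]
    simp only [hkey]
    rw [intervalIntegral.integral_neg]
  have hsplit1 : (∫ s in (0:ℝ)..(L-π), F s * Real.sin s) + (∫ s in (L-π)..π, F s * Real.sin s)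
      = ∫ s in (0:ℝ)..π, F s * Real.sin s :=
    integral_add_adjacent_intervals (hi 0 (L-π) le_rfl h0L (by linarith))
      (hi (L-π) π h0L hLπ hL1)
  have hsplit2 : (∫ s in (0:ℝ)..π, F s * Real.sin s) + (∫ s in π..L, F s * Real.sin s)
      = ∫ s in (0:ℝ)..L, F s * Real.sin s :=
    integral_add_adjacent_intervals (hi 0 π le_rfl hπ.le hL1) (hi π L hπ.le hL1 le_rfl)
  have hAC : (∫ s in (0:ℝ)..(L-π), F s * Real.sin s)
      ≤ (∫ u in (0:ℝ)..(L-π), F (π + u) * Real.sin u) := by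
    apply intervalIntegral.integral_mono_on h0L (hi 0 (L-π) le_rfl h0L (by linarith)) hiFπ
    intro x hx
    have hsx : 0 ≤ Real.sin x := Real.sin_nonneg_of_nonneg_of_le_pi hx.1 (by linarith [hx.2])
    have hFx : F x ≤ F (π + x) := by
      apply hmono ⟨hx.1, by linarith [hx.2]⟩ ⟨by linarith [hx.1], by linarith [hx.2]⟩
      linarith
    nlinarith
  have hπmem : π ∈ Icc (0:ℝ) L := ⟨hπ.le, hL1⟩
  have hB : (∫ s in (L-π)..π, F s * Real.sin s) ≤ F π * (1 - Real.cos L) := by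
    have h1 : (∫ s in (L-π)..π, F s * Real.sin s) ≤ ∫ s in (L-π)..π, F π * Real.sin s := by
      apply intervalIntegral.integral_mono_on hLπ (hi (L-π) π h0L hLπ hL1)
      · apply ContinuousOn.intervalIntegrable
        exact (continuousOn_const.mul Real.continuous_sin.continuousOn)
      · intro x hx
        have hsx : 0 ≤ Real.sin x := Real.sin_nonneg_of_nonneg_of_le_pi (by linarith [hx.1])
          hx.2
        have hFx : F x ≤ F π := hmono ⟨by linarith [hx.1], by linarith [hx.2]⟩ hπmem hx.2
        nlinarith
    have h2 : (∫ s in (L-π)..π, F π * Real.sin s) = F π * (1 - Real.cos L) := by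
      rw [intervalIntegral.integral_const_mul, integral_sin, Real.cos_pi]
      have : Real.cos (L - π) = -Real.cos L := by
        rw [Real.cos_sub, Real.cos_pi, Real.sin_pi]
        ring
      rw [this]; ring
    linarith
  linarith [hAC, hB, hsplit1, hsplit2, hC]

lemma cos_head_bound (F : ℝ → ℝ) (c : ℝ) (hc1 : π/2 ≤ c) (hc2 : c ≤ 3*π/2)
    (hcont : ContinuousOn F (Icc 0 c)) (hmono : MonotoneOn F (Icc 0 c)) :
    (∫ s in (0:ℝ)..c, F s * Real.cos s) ≤ F (π/2) * Real.sin c := by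
  have hπ := Real.pi_pos
  have h2 : (0:ℝ) ≤ π/2 := by linarith
  have hi : ∀ x y : ℝ, 0 ≤ x → x ≤ y → y ≤ c →
      IntervalIntegrable (fun s => F s * Real.cos s) volume x y := by
    intro x y hx hxy hyc
    apply ContinuousOn.intervalIntegrable
    apply (hcont.mul Real.continuous_cos.continuousOn).mono
    rw [uIcc_of_le hxy]
    exact Icc_subset_Icc hx hyc
  have hmem2 : π/2 ∈ Icc (0:ℝ) c := ⟨h2, hc1⟩
  have hsplit : (∫ s in (0:ℝ)..(π/2), F s * Real.cos s) + (∫ s in (π/2)..c, F s * Real.cos s)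
      = ∫ s in (0:ℝ)..c, F s * Real.cos s :=
    integral_add_adjacent_intervals (hi 0 (π/2) le_rfl h2 hc1) (hi (π/2) c h2 hc1 le_rfl)
  have hP1 : (∫ s in (0:ℝ)..(π/2), F s * Real.cos s) ≤ F (π/2) := by
    have h1 : (∫ s in (0:ℝ)..(π/2), F s * Real.cos s)
        ≤ ∫ s in (0:ℝ)..(π/2), F (π/2) * Real.cos s := by
      apply intervalIntegral.integral_mono_on h2 (hi 0 (π/2) le_rfl h2 hc1)
      · exact ContinuousOn.intervalIntegrable
          (continuousOn_const.mul Real.continuous_cos.continuousOn)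
      · intro x hx
        have hcx : 0 ≤ Real.cos x := Real.cos_nonneg_of_mem_Icc ⟨by linarith [hx.1], hx.2⟩
        have hFx : F x ≤ F (π/2) := hmono ⟨hx.1, by linarith [hx.2]⟩ hmem2 hx.2
        nlinarith
    have h2' : (∫ s in (0:ℝ)..(π/2), F (π/2) * Real.cos s) = F (π/2) := by
      rw [intervalIntegral.integral_const_mul, integral_cos]
      simp
    linarith
  have hP2 : (∫ s in (π/2)..c, F s * Real.cos s) ≤ F (π/2) * (Real.sin c - 1) := by
    have h1 : (∫ s in (π/2)..c, F s * Real.cos s)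
        ≤ ∫ s in (π/2)..c, F (π/2) * Real.cos s := by
      apply intervalIntegral.integral_mono_on hc1 (hi (π/2) c h2 hc1 le_rfl)
      · exact ContinuousOn.intervalIntegrable
          (continuousOn_const.mul Real.continuous_cos.continuousOn)
      · intro x hx
        have hcx : Real.cos x ≤ 0 :=
          Real.cos_nonpos_of_pi_div_two_le_of_le hx.1 (by linarith [hx.2])
        have hFx : F (π/2) ≤ F x := hmono hmem2 ⟨by linarith [hx.1], hx.2⟩ hx.1
        nlinarith
    have h2' : (∫ s in (π/2)..c, F (π/2) * Real.cos s) = F (π/2) * (Real.sin c - 1) := by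
      rw [intervalIntegral.integral_const_mul, integral_cos]
      simp
    linarith
  linarith [hsplit, hP1, hP2]

lemma choose_delta (X Y : ℝ) (hX : 0 < X) (hY : 0 < Y) :
    ∃ δ : ℝ, 0 < δ ∧ δ ≤ π/4 ∧ X * δ ≤ Y / 2 := by
  have hπ := Real.pi_pos
  refine ⟨min (π/4) (Y/(2*X)), lt_min (by linarith) (div_pos hY (by linarith)),
    min_le_left _ _, ?_⟩
  have h1 : min (π/4) (Y/(2*X)) ≤ Y/(2*X) := min_le_right _ _
  have h2 : X * min (π/4) (Y/(2*X)) ≤ X * (Y/(2*X)) :=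
    mul_le_mul_of_nonneg_left h1 hX.le
  have h3 : X * (Y/(2*X)) = Y/2 := by
    field_simp
  linarith

set_option maxHeartbeats 1000000 in
theorem sin_integral_neg_of_increasing
    (a θ : ℝ) (n : ℕ)
    (g : ℝ → ℝ)
    (hg_pos : ∀ t ∈ Ioo (0 : ℝ) a, 0 < g t)
    (hg_C1 : ContDiffOn ℝ 1 g (Ico 0 a))
    (hg_int : IntegrableOn g (Ico 0 a))
    (hg_mono : StrictMonoOn g (Ico 0 a))
    (hg'_mono : StrictMonoOn (derivWithin g (Ico 0 a)) (Ico 0 a))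
    (hθ₀ : 0 ≤ θ) (hθ₁ : θ ≤ π / 2)
    (hg0 : g 0 = 0)
    (ha : a = 2 * n * π + 3 * π / 2 + θ) :
    (∫ t in (0 : ℝ)..a, g t * Real.sin t) < 0 := by
  have hπ := Real.pi_pos
  have hn0 : (0:ℝ) ≤ 2*(n:ℝ)*π := by positivity
  have ha_lb : 2*(n:ℝ)*π + 3*π/2 ≤ a := by rw [ha]; linarith
  have ha_ub : a ≤ 2*(n:ℝ)*π + 2*π := by rw [ha]; linarith
  have hapos : 0 < a := by linarith
  obtain ⟨f, hfdef⟩ : ∃ f : ℝ → ℝ, f = derivWithin g (Ico 0 a) := ⟨_, rfl⟩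
  rw [← hfdef] at hg'_mono
  have hg_cont : ContinuousOn g (Ico 0 a) := hg_C1.continuousOn
  have hf_cont : ContinuousOn f (Ico 0 a) := by
    rw [hfdef]
    exact hg_C1.continuousOn_derivWithin (uniqueDiffOn_Ico 0 a) le_rfl
  have hf_mono : MonotoneOn f (Ico 0 a) := hg'_mono.monotoneOn
  have hsub : ∀ x : ℝ, x < a → Icc (0:ℝ) x ⊆ Ico 0 a :=
    fun x hx t ht => ⟨ht.1, lt_of_le_of_lt ht.2 hx⟩
  have hf_monoIcc : ∀ x : ℝ, x < a → MonotoneOn f (Icc 0 x) :=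
    fun x hx u hu v hv huv => hf_mono (hsub x hx hu) (hsub x hx hv) huv
  have hderiv_at : ∀ x ∈ Ioo (0:ℝ) a, HasDerivAt g (f x) x := by
    intro x hx
    have hmem : Ico (0:ℝ) a ∈ 𝓝 x := Ico_mem_nhds hx.1 hx.2
    have hdiff : DifferentiableAt ℝ g x :=
      ((hg_C1.differentiableOn one_ne_zero) x ⟨hx.1.le, hx.2⟩).differentiableAt hmem
    have heq : f x = deriv g x := by rw [hfdef]; exact derivWithin_of_mem_nhds hmem
    rw [heq]
    exact hdiff.hasDerivAt
  have hq4 : π/4 ∈ Ioo (0:ℝ) a := ⟨by linarith, by linarith⟩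
  have hf4 : 0 ≤ f (π/4) := by
    have hd : HasDerivWithinAt g (f (π/4)) (Ioi (π/4)) (π/4) :=
      (hderiv_at _ hq4).hasDerivWithinAt
    have ht : Filter.Tendsto (slope g (π/4)) (nhdsWithin (π/4) (Ioi (π/4))) (nhds (f (π/4))) := by
      have h1 := hasDerivWithinAt_iff_tendsto_slope.1 hd
      rwa [Set.diff_singleton_eq_self (by simp)] at h1
    refine ge_of_tendsto ht ?_
    filter_upwards [Ioo_mem_nhdsGT_of_mem (⟨le_rfl, hq4.2⟩ : π/4 ∈ Ico (π/4) a)] with y hy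
    rw [slope_def_field]
    apply div_nonneg _ (by linarith [hy.1] : (0:ℝ) ≤ y - π/4)
    have := hg_mono ⟨hq4.1.le, hq4.2⟩ ⟨by linarith [hy.1], hy.2⟩ hy.1
    linarith
  have hq2 : π/2 ∈ Ico (0:ℝ) a := ⟨by linarith, by linarith⟩
  have hf2pos : 0 < f (π/2) :=
    lt_of_le_of_lt hf4 (hg'_mono ⟨by linarith, hq4.2⟩ hq2 (by linarith))
  have hCmem : 2*(n:ℝ)*π + π/2 ∈ Ico (0:ℝ) a := ⟨by linarith, by linarith⟩
  have hf2C : f (π/2) ≤ f (2*(n:ℝ)*π + π/2) := hf_mono hq2 hCmem (by linarith)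
  have hCpos : 0 < f (2*(n:ℝ)*π + π/2) := lt_of_lt_of_le hf2pos hf2C
  have hC0 : f (2*(n:ℝ)*π + π/2) ≠ 0 := ne_of_gt hCpos
  obtain ⟨δ, hδpos, hδ4, hCδ⟩ := choose_delta (f (2*(n:ℝ)*π + π/2)) (f (π/2)) hCpos hf2pos
  obtain ⟨b, hbdef⟩ : ∃ b : ℝ, b = 2*(n:ℝ)*π + 3*π/2 - δ := ⟨_, rfl⟩
  have hb_lb : 2*(n:ℝ)*π + 5*π/4 ≤ b := by rw [hbdef]; linarith
  have hb_pos : 0 < b := by linarith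
  have hb_lt_a : b < a := by rw [hbdef]; linarith
  have hbmem : b ∈ Ico (0:ℝ) a := ⟨hb_pos.le, hb_lt_a⟩
  have hgb_pos : 0 < g b := hg_pos b ⟨hb_pos, hb_lt_a⟩
  have hg_Ioo : IntegrableOn g (Ioo 0 a) := hg_int.mono_set Ioo_subset_Ico_self
  have hg_Ioc : IntegrableOn g (Ioc 0 a) := (integrableOn_Ioc_iff_integrableOn_Ioo).2 hg_Ioo
  have hGS : IntegrableOn (fun t => g t * Real.sin t) (Ioc 0 a) := by
    have h := hg_Ioc.bdd_mul (Real.continuous_sin.aestronglyMeasurable)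
      (Filter.Eventually.of_forall (fun x => by rw [Real.norm_eq_abs]; exact Real.abs_sin_le_one x))
    have heq : (fun t => g t * Real.sin t) = (fun t => Real.sin t * g t) := by
      funext t; ring
    rw [heq]
    exact h
  have hIab : IntervalIntegrable (fun t => g t * Real.sin t) volume 0 a :=
    (intervalIntegrable_iff_integrableOn_Ioc_of_le hapos.le).2 hGS
  have hI0b : IntervalIntegrable (fun t => g t * Real.sin t) volume 0 b := by
    apply ContinuousOn.intervalIntegrable
    rw [uIcc_of_le hb_pos.le]
    exact (hg_cont.mono (hsub b hb_lt_a)).mul Real.continuous_sin.continuousOn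
  have hIba : IntervalIntegrable (fun t => g t * Real.sin t) volume b a := by
    apply hIab.mono_set
    rw [uIcc_of_le hb_lt_a.le, uIcc_of_le hapos.le]
    exact Icc_subset_Icc hb_pos.le le_rfl
  have hsin_nonpos : ∀ x : ℝ, b ≤ x → x ≤ a → Real.sin x ≤ 0 := by
    intro x h1 h2
    have hx' : Real.sin x = Real.sin (x - (n:ℝ)*(2*π)) := (Real.sin_sub_nat_mul_two_pi x n).symm
    have h3 : π ≤ x - (n:ℝ)*(2*π) := by linarith
    have h4 : x - (n:ℝ)*(2*π) ≤ 2*π := by linarith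
    have h5 := Real.sin_nonneg_of_nonneg_of_le_pi (x := x - (n:ℝ)*(2*π) - π)
      (by linarith) (by linarith)
    have heq : x - (n:ℝ)*(2*π) = (x - (n:ℝ)*(2*π) - π) + π := by ring
    rw [hx', heq, Real.sin_add_pi]
    linarith
  have hcosa : Real.cos a = Real.sin θ := by
    have h1 : a = (θ + π + π/2) + (n:ℝ) * (2*π) := by rw [ha]; push_cast; ring
    rw [h1, Real.cos_add_nat_mul_two_pi, Real.cos_add_pi_div_two, Real.sin_add_pi]
    ring
  have hcosa0 : 0 ≤ Real.cos a := by
    rw [hcosa]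
    exact Real.sin_nonneg_of_nonneg_of_le_pi hθ₀ (by linarith)
  have hconst : IntervalIntegrable (fun t => g b * Real.sin t) volume b a :=
    (continuousOn_const.mul Real.continuous_sin.continuousOn).intervalIntegrable
  have htail : (∫ t in b..a, g t * Real.sin t) ≤ g b * (Real.cos b - Real.cos a) := by
    have h1 : (∫ t in b..a, g t * Real.sin t) ≤ ∫ t in b..a, g b * Real.sin t := by
      apply intervalIntegral.integral_mono_ae_restrict hb_lt_a.le hIba hconst
      have hae : ∀ᵐ x ∂(volume.restrict (Icc b a)), x ≠ a := by
        apply ae_restrict_of_ae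
        rw [MeasureTheory.ae_iff]
        have hset : {x : ℝ | ¬ x ≠ a} = {a} := by ext x; simp
        rw [hset]
        exact measure_singleton a
      filter_upwards [hae, ae_restrict_mem measurableSet_Icc] with x hxa hx
      have hxa' : x < a := lt_of_le_of_ne hx.2 hxa
      have hgx : g b ≤ g x := hg_mono.monotoneOn hbmem ⟨by linarith [hx.1], hxa'⟩ hx.1
      have hsx := hsin_nonpos x hx.1 hx.2
      nlinarith
    have h2 : (∫ t in b..a, g b * Real.sin t) = g b * (Real.cos b - Real.cos a) := by
      rw [intervalIntegral.integral_const_mul, integral_sin]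
    linarith
  have hFC_int : ∀ x y : ℝ, 0 ≤ x → x ≤ y → y < a →
      IntervalIntegrable (fun t => f t * Real.cos t) volume x y := by
    intro x y hx hxy hy
    apply ContinuousOn.intervalIntegrable
    apply (hf_cont.mul Real.continuous_cos.continuousOn).mono
    rw [uIcc_of_le hxy]
    exact fun t ht => ⟨le_trans hx ht.1, lt_of_le_of_lt ht.2 hy⟩
  have hibp : (∫ t in (0:ℝ)..b, (f t * Real.cos t - g t * Real.sin t))
      = g b * Real.cos b - g 0 * Real.cos 0 := by
    apply intervalIntegral.integral_eq_sub_of_hasDeriv_right_of_le hb_pos.le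
    · exact (hg_cont.mono (hsub b hb_lt_a)).mul Real.continuous_cos.continuousOn
    · intro x hx
      have hd : HasDerivAt (fun t => g t * Real.cos t)
          (f x * Real.cos x - g x * Real.sin x) x := by
        have h1 := (hderiv_at x ⟨hx.1, hx.2.trans hb_lt_a⟩).mul (Real.hasDerivAt_cos x)
        convert h1 using 1
        all_goals first | rfl | ring
      exact hd.hasDerivWithinAt
    · exact (hFC_int 0 b le_rfl hb_pos.le hb_lt_a).sub hI0b
  have hIBP2 : (∫ t in (0:ℝ)..b, g t * Real.sin t)
      = (∫ t in (0:ℝ)..b, f t * Real.cos t) - g b * Real.cos b := by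
    rw [intervalIntegral.integral_sub (hFC_int 0 b le_rfl hb_pos.le hb_lt_a) hI0b] at hibp
    rw [hg0] at hibp
    have h0 : (0:ℝ) * Real.cos 0 = 0 := by ring
    rw [h0] at hibp
    linarith
  have hkeycos : ∀ (m : ℕ) (s : ℝ), Real.cos (2*(m:ℝ)*π + 3*π/2 + s) = Real.sin s := by
    intro m s
    have h1 : 2*(m:ℝ)*π + 3*π/2 + s = (s + π + π/2) + (m:ℝ)*(2*π) := by ring
    rw [h1, Real.cos_add_nat_mul_two_pi, Real.cos_add_pi_div_two, Real.sin_add_pi]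
    ring
  have hblock : ∀ (m : ℕ) (L : ℝ), π ≤ L → L ≤ 2*π → 2*(m:ℝ)*π + 3*π/2 + L < a →
      (∫ t in (2*(m:ℝ)*π + 3*π/2)..(2*(m:ℝ)*π + 3*π/2 + L), f t * Real.cos t)
        ≤ f (2*(m:ℝ)*π + 3*π/2 + π) * (1 - Real.cos L) := by
    intro m L hL1 hL2 hLa
    have hm0 : (0:ℝ) ≤ 2*(m:ℝ)*π := by positivity
    have h1 : (∫ x in (0:ℝ)..L, (fun t => f t * Real.cos t) ((2*(m:ℝ)*π + 3*π/2) + x))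
        = ∫ x in ((2*(m:ℝ)*π + 3*π/2)+0)..((2*(m:ℝ)*π + 3*π/2)+L), f x * Real.cos x :=
      intervalIntegral.integral_comp_add_left (fun t => f t * Real.cos t) _
    rw [add_zero] at h1
    rw [← h1]
    have h2 : ∀ x : ℝ, f ((2*(m:ℝ)*π + 3*π/2) + x) * Real.cos ((2*(m:ℝ)*π + 3*π/2) + x)
        = f ((2*(m:ℝ)*π + 3*π/2) + x) * Real.sin x := by
      intro x
      rw [hkeycos m x]
    simp only [h2]
    have hres := sin_block_bound (fun s => f ((2*(m:ℝ)*π + 3*π/2) + s)) L hL1 hL2 ?_ ?_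
    · exact hres
    · apply hf_cont.comp (continuous_const.add continuous_id).continuousOn
      intro u hu
      have h3 := hu.1
      have h4 := hu.2
      simp only [Pi.add_apply, id_eq]
      exact ⟨by linarith, by linarith⟩
    · intro u hu v hv huv
      apply hf_mono
      · exact ⟨by linarith [hu.1], by linarith [hu.2]⟩
      · exact ⟨by linarith [hv.1], by linarith [hv.2]⟩
      · linarith
  have lemA : ∀ m : ℕ, 2*(m:ℝ)*π + 3*π/2 < a →
      (∫ t in (0:ℝ)..(2*(m:ℝ)*π + 3*π/2), f t * Real.cos t) ≤ -f (π/2) := by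
    intro m
    induction m with
    | zero =>
      intro hma
      simp only [Nat.cast_zero] at hma ⊢
      rw [show (2:ℝ)*0*π + 3*π/2 = 3*π/2 by ring] at hma ⊢
      have hres := cos_head_bound f (3*π/2) (by linarith) le_rfl
        (hf_cont.mono (hsub _ hma)) (hf_monoIcc _ hma)
      have hsin : Real.sin (3*π/2) = -1 := by
        rw [show 3*π/2 = π + π/2 by ring, Real.sin_add_pi_div_two, Real.cos_pi]
      rw [hsin] at hres
      linarith
    | succ k ih =>
      intro hma
      push_cast at hma ⊢
      rw [show 2*((k:ℝ)+1)*π + 3*π/2 = 2*(k:ℝ)*π + 3*π/2 + 2*π by ring] at hma ⊢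
      have hk0 : (0:ℝ) ≤ 2*(k:ℝ)*π := by positivity
      have hka : 2*(k:ℝ)*π + 3*π/2 < a := by linarith
      have h1 := ih hka
      have hsplit := integral_add_adjacent_intervals
        (hFC_int 0 (2*(k:ℝ)*π + 3*π/2) le_rfl (by linarith) hka)
        (hFC_int (2*(k:ℝ)*π + 3*π/2) (2*(k:ℝ)*π + 3*π/2 + 2*π) (by linarith) (by linarith) hma)
      have h2 := hblock k (2*π) (by linarith) le_rfl hma
      rw [Real.cos_two_pi] at h2
      have hz : f (2*(k:ℝ)*π + 3*π/2 + π) * (1 - 1) = 0 := by ring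
      rw [hz] at h2
      linarith
  have hK : (∫ t in (0:ℝ)..b, f t * Real.cos t) < 0 := by
    rcases Nat.eq_zero_or_pos n with hn | hn
    · subst hn
      have hb_eq : b = 3*π/2 - δ := by rw [hbdef]; push_cast; ring
      have hhead := cos_head_bound f b (by rw [hb_eq]; linarith) (by rw [hb_eq]; linarith)
        (hf_cont.mono (hsub b hb_lt_a)) (hf_monoIcc b hb_lt_a)
      have hsinb : Real.sin b = -Real.cos δ := by
        rw [hb_eq, show 3*π/2 - δ = (π - δ) + π/2 by ring, Real.sin_add_pi_div_two,
          Real.cos_pi_sub]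
      have hcosδ : 0 < Real.cos δ := Real.cos_pos_of_mem_Ioo ⟨by linarith, by linarith⟩
      rw [hsinb] at hhead
      nlinarith
    · obtain ⟨m, rfl⟩ : ∃ m, n = m + 1 := ⟨n - 1, (Nat.succ_pred_eq_of_pos hn).symm⟩
      have hm0 : (0:ℝ) ≤ 2*(m:ℝ)*π := by positivity
      have hcast : ((m+1 : ℕ) : ℝ) = (m:ℝ) + 1 := by push_cast; ring
      have hcma : 2*(m:ℝ)*π + 3*π/2 < a := by
        rw [hcast] at ha_lb
        linarith
      have h1 := lemA m hcma
      have hb_eq : b = 2*(m:ℝ)*π + 3*π/2 + (2*π - δ) := by rw [hbdef, hcast]; ring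
      have hcb : 2*(m:ℝ)*π + 3*π/2 ≤ b := by rw [hb_eq]; linarith
      have hsplit := integral_add_adjacent_intervals
        (hFC_int 0 (2*(m:ℝ)*π + 3*π/2) le_rfl (by linarith) hcma)
        (hFC_int (2*(m:ℝ)*π + 3*π/2) b (by linarith) hcb hb_lt_a)
      have h2 := hblock m (2*π - δ) (by linarith) (by linarith)
        (by rw [← hb_eq]; exact hb_lt_a)
      rw [← hb_eq] at h2
      have hcL : Real.cos (2*π - δ) = Real.cos δ := by
        rw [Real.cos_sub, Real.cos_two_pi, Real.sin_two_pi]; ring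
      have hfc : f (2*(m:ℝ)*π + 3*π/2 + π) = f (2*((m+1:ℕ):ℝ)*π + π/2) := by
        congr 1
        push_cast
        ring
      rw [hcL, hfc] at h2
      have hδcos : 1 - Real.cos δ ≤ δ := by
        have := Real.one_sub_sq_div_two_le_cos (x := δ)
        nlinarith
      have hCbound : f (2*((m+1:ℕ):ℝ)*π + π/2) * (1 - Real.cos δ) ≤ f (π/2) / 2 := by
        have h3 : f (2*((m+1:ℕ):ℝ)*π + π/2) * (1 - Real.cos δ)
            ≤ f (2*((m+1:ℕ):ℝ)*π + π/2) * δ := by nlinarith [Real.cos_le_one δ]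
        linarith [hCδ]
      linarith
  have hsplitall := integral_add_adjacent_intervals hI0b hIba
  have hexp : g b * (Real.cos b - Real.cos a) = g b * Real.cos b - g b * Real.cos a := by ring
  have hgbcosa : 0 ≤ g b * Real.cos a := mul_nonneg hgb_pos.le hcosa0
  linarith [hsplitall, hIBP2, htail, hK, hgbcosa, hexp]
end

section
/- Let g be a C¹ function on [0, 2π] with g' strictly increasing. Then ∫₀^{2π} g(t) cos t dt > 0. -/
open Real Set intervalIntegral MeasureTheory

theorem integral_cos_pos_of_deriv_strict_mono
    (g : ℝ → ℝ)
    (hg_C1 : ContDiffOn ℝ 1 g (Icc 0 (2 * π)))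
    (hg'_mono : StrictMonoOn (derivWithin g (Icc 0 (2 * π))) (Icc 0 (2 * π))) :
    0 < ∫ t in (0 : ℝ)..(2 * π), g t * Real.cos t := by
  have hpi : (0:ℝ) < π := Real.pi_pos
  have h2pi : (0:ℝ) ≤ 2 * π := by positivity
  set S : Set ℝ := Icc 0 (2 * π) with hS
  set f : ℝ → ℝ := derivWithin g S with hf
  have huIcc : Set.uIcc (0:ℝ) (2 * π) = S := uIcc_of_le h2pi
  -- continuity of f on S
  have hfc : ContinuousOn f S := by
    exact hg_C1.continuousOn_derivWithin (uniqueDiffOn_Icc (by positivity)) le_rfl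
  have hgc : ContinuousOn g S := hg_C1.continuousOn
  -- integration by parts
  have hparts : ∫ t in (0:ℝ)..(2 * π), g t * Real.cos t
      = g (2*π) * Real.sin (2*π) - g 0 * Real.sin 0 - ∫ t in (0:ℝ)..(2*π), f t * Real.sin t := by
    apply integral_mul_deriv_eq_deriv_mul_of_hasDeriv_right
    · rw [huIcc]; exact hgc
    · exact Real.continuous_sin.continuousOn
    · intro x hx
      rw [min_eq_left h2pi, max_eq_right h2pi] at hx
      have hxS : x ∈ S := Ioo_subset_Icc_self hx
      have h1 : HasDerivWithinAt g (f x) S x :=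
        ((hg_C1.differentiableOn one_ne_zero) x hxS).hasDerivWithinAt
      exact (h1.hasDerivAt (Icc_mem_nhds hx.1 hx.2)).hasDerivWithinAt
    · intro x _
      exact (Real.hasDerivAt_sin x).hasDerivWithinAt
    · exact (hfc.mono (by rw [huIcc])).intervalIntegrable
    · exact (Real.continuous_cos.continuousOn).intervalIntegrable
  rw [hparts, Real.sin_two_pi, Real.sin_zero]
  simp only [mul_zero, sub_zero, zero_sub]
  rw [neg_pos]
  -- split the integral at π and substitute
  have hsub : S ⊆ S := subset_rfl
  have hsplit : (∫ t in (0:ℝ)..(2*π), f t * Real.sin t)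
      = (∫ t in (0:ℝ)..π, f t * Real.sin t) + ∫ t in π..(2*π), f t * Real.sin t := by
    rw [integral_add_adjacent_intervals]
    · apply ContinuousOn.intervalIntegrable
      apply (hfc.mono ?_).mul Real.continuous_sin.continuousOn
      rw [uIcc_of_le hpi.le]
      exact Icc_subset_Icc le_rfl (by linarith)
    · apply ContinuousOn.intervalIntegrable
      apply (hfc.mono ?_).mul Real.continuous_sin.continuousOn
      rw [uIcc_of_le (by linarith : π ≤ 2*π)]
      exact Icc_subset_Icc hpi.le le_rfl
  have hshift : (∫ t in π..(2*π), f t * Real.sin t)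
      = ∫ t in (0:ℝ)..π, f (t + π) * Real.sin (t + π) := by
    rw [intervalIntegral.integral_comp_add_right (fun t => f t * Real.sin t) π]
    norm_num
    ring_nf
  have hsinpi : ∀ t : ℝ, Real.sin (t + π) = - Real.sin t := fun t => by
    rw [Real.sin_add]; simp
  have hshift' : (∫ t in π..(2*π), f t * Real.sin t)
      = - ∫ t in (0:ℝ)..π, f (t + π) * Real.sin t := by
    rw [hshift, ← intervalIntegral.integral_neg]
    congr 1; ext t; rw [hsinpi]; ring
  rw [hsplit, hshift']
  have key : 0 < ∫ t in (0:ℝ)..π, (f (t + π) - f t) * Real.sin t := by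
    apply intervalIntegral_pos_of_pos_on
    · apply ContinuousOn.intervalIntegrable
      rw [uIcc_of_le hpi.le]
      apply ContinuousOn.mul _ Real.continuous_sin.continuousOn
      apply ContinuousOn.sub
      · apply (hfc.comp (Continuous.continuousOn (by continuity)))
        intro t ht
        refine ⟨?_, ?_⟩ <;> (beta_reduce; linarith [ht.1, ht.2])
      · exact hfc.mono (Icc_subset_Icc le_rfl (by linarith))
    · intro t ht
      have h1 : t ∈ S := ⟨ht.1.le, by linarith [ht.2]⟩
      have h2 : t + π ∈ S := ⟨by linarith [ht.1], by linarith [ht.2]⟩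
      have hlt : f t < f (t + π) := hg'_mono h1 h2 (by linarith)
      have hsin : 0 < Real.sin t := Real.sin_pos_of_pos_of_lt_pi ht.1 ht.2
      exact mul_pos (sub_pos.mpr hlt) hsin
    · exact hpi
  have heq : (∫ t in (0:ℝ)..π, (f (t + π) - f t) * Real.sin t)
      = (∫ t in (0:ℝ)..π, f (t + π) * Real.sin t) - ∫ t in (0:ℝ)..π, f t * Real.sin t := by
    rw [← intervalIntegral.integral_sub]
    · congr 1; ext t; ring
    · apply ContinuousOn.intervalIntegrable
      rw [uIcc_of_le hpi.le]
      apply (hfc.comp (Continuous.continuousOn (by continuity)) ?_).mul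
        Real.continuous_sin.continuousOn
      intro t ht; refine ⟨?_, ?_⟩ <;> (beta_reduce; linarith [ht.1, ht.2])
    · apply ContinuousOn.intervalIntegrable
      rw [uIcc_of_le hpi.le]
      exact (hfc.mono (Icc_subset_Icc le_rfl (by linarith))).mul
        Real.continuous_sin.continuousOn
  linarith [key, heq ▸ key]
end

section
/- Let g be a nonnegative continuous integrable strictly increasing function on [0,a) where a = π/2 + kπ for a nonnegative even integer k. Then ∫₀ᵃ g(t) cos t dt > 0. -/
open Real Set MeasureTheory

theorem integral_cos_pos_of_strict_mono_even
    (a : ℝ) (k : ℕ) (hk : Even k)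
    (g : ℝ → ℝ)
    (hg_nonneg : ∀ t ∈ Ico (0 : ℝ) a, 0 ≤ g t)
    (hg_cont : ContinuousOn g (Ico 0 a))
    (hg_int : IntegrableOn g (Ico 0 a))
    (hg_mono : StrictMonoOn g (Ico 0 a))
    (ha : a = π / 2 + k * π) :
    0 < ∫ t in (0 : ℝ)..a, g t * Real.cos t := by
  obtain ⟨m, hm⟩ := hk
  have hpi := Real.pi_pos
  set f : ℝ → ℝ := fun t => g t * Real.cos t with hf_def
  have ha' : a = π / 2 + (2 * (m : ℝ)) * π := by
    rw [ha, hm]; push_cast; ring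
  have hpa : π / 2 ≤ a := by
    have : (0:ℝ) ≤ 2 * (m:ℝ) * π := by positivity
    linarith
  -- integrability of f on Ico 0 a
  have hf_int : IntegrableOn f (Ico 0 a) := by
    have h := hg_int.bdd_mul Real.continuous_cos.aestronglyMeasurable.restrict
      (c := 1) (Filter.Eventually.of_forall fun x => by simpa using Real.abs_cos_le_one x)
    have heq : (fun x => Real.cos x * g x) = f := by funext t; simp [hf_def]; ring
    rwa [heq] at h
  have hsub : ∀ u v : ℝ, 0 ≤ u → u ≤ v → v ≤ a → IntervalIntegrable f volume u v := by
    intro u v hu huv hv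
    rw [intervalIntegrable_iff_integrableOn_Ioc_of_le huv,
      integrableOn_Ioc_iff_integrableOn_Ioo]
    exact hf_int.mono_set fun x hx => ⟨le_trans hu hx.1.le, lt_of_lt_of_le hx.2 hv⟩
  set d : ℕ → ℝ := fun j => π / 2 + 2 * (j : ℝ) * π with hd_def
  have hd0 : d 0 = π / 2 := by simp [hd_def]
  have hdm : d m = a := by rw [hd_def, ha']
  have hd_le : ∀ j : ℕ, j ≤ m → d j ≤ a := by
    intro j hj
    have : (j : ℝ) ≤ (m : ℝ) := by exact_mod_cast hj
    rw [hd_def, ha']; simp only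
    nlinarith
  have hd_pos : ∀ j : ℕ, 0 ≤ d j := by
    intro j; rw [hd_def]; positivity
  have hd_succ : ∀ j : ℕ, d (j + 1) = d j + 2 * π := by
    intro j; simp only [hd_def]; push_cast; ring
  -- each block is nonnegative
  have hblock : ∀ j : ℕ, j < m → 0 ≤ ∫ t in d j..d (j + 1), f t := by
    intro j hj
    have hj1 : (j : ℝ) + 1 ≤ (m : ℝ) := by exact_mod_cast hj
    have hda : d j + 2 * π ≤ a := by
      have := hd_le (j + 1) hj
      rw [hd_succ] at this; exact this
    have h1 : IntervalIntegrable f volume (d j) (d j + π) :=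
      hsub _ _ (hd_pos j) (by linarith) (by linarith)
    have h2 : IntervalIntegrable f volume (d j + π) (d j + 2 * π) :=
      hsub _ _ (by have := hd_pos j; linarith) (by linarith) hda
    have h2' : IntervalIntegrable (fun t => f (t + π)) volume (d j) (d j + π) := by
      have h := h2.comp_add_right π
      have e1 : d j + π - π = d j := by ring
      have e2 : d j + 2 * π - π = d j + π := by ring
      rwa [e1, e2] at h
    have hshift : (∫ t in d j..d j + π, f (t + π)) = ∫ t in d j + π..d j + 2 * π, f t := by
      rw [intervalIntegral.integral_comp_add_right f π]
      congr 1; ring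
    have hsplit : (∫ t in d j..d (j + 1), f t)
        = ∫ t in d j..d j + π, (f t + f (t + π)) := by
      rw [hd_succ, ← intervalIntegral.integral_add_adjacent_intervals h1 h2, ← hshift,
        ← intervalIntegral.integral_add h1 h2']
    rw [hsplit]
    apply intervalIntegral.integral_nonneg_of_ae_restrict (by linarith)
    have hne : ∀ᵐ t : ℝ, t ≠ d j + π := by
      rw [ae_iff]
      simp only [ne_eq, not_not, Set.setOf_eq_eq_singleton, Real.volume_singleton]
    filter_upwards [ae_restrict_mem measurableSet_Icc, ae_restrict_of_ae hne] with t ht htne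
    have ht1 : d j ≤ t := ht.1
    have ht2 : t < d j + π := lt_of_le_of_ne ht.2 htne
    have hcos : Real.cos t ≤ 0 := by
      have hc : Real.cos (t - (j : ℤ) * (2 * π)) = Real.cos t :=
        Real.cos_sub_int_mul_two_pi t j
      rw [← hc]
      apply Real.cos_nonpos_of_pi_div_two_le_of_le
      · rw [hd_def] at ht1; push_cast; linarith
      · rw [hd_def] at ht2; push_cast; linarith
    have htmem : t ∈ Ico (0:ℝ) a := ⟨le_trans (hd_pos j) ht1, by linarith⟩
    have htpmem : t + π ∈ Ico (0:ℝ) a := ⟨by linarith [htmem.1], by linarith⟩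
    have hgle : g t ≤ g (t + π) := (hg_mono htmem htpmem (by linarith)).le
    simp only [hf_def, Pi.add_apply, Pi.zero_apply, Real.cos_add_pi]
    nlinarith [mul_nonneg (sub_nonneg.mpr hgle) (neg_nonneg.mpr hcos)]
  -- sum decomposition
  have hsum : (∫ t in (d 0)..(d m), f t) = ∑ j ∈ Finset.range m, ∫ t in d j..d (j + 1), f t := by
    refine (intervalIntegral.sum_integral_adjacent_intervals fun j hj => ?_).symm
    refine hsub _ _ (hd_pos j) ?_ (hd_le (j + 1) hj)
    rw [hd_succ]; linarith
  have hsplit0 : (∫ t in (0:ℝ)..a, f t)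
      = (∫ t in (0:ℝ)..π / 2, f t) + ∫ t in (π / 2)..a, f t :=
    (intervalIntegral.integral_add_adjacent_intervals
      (hsub 0 (π / 2) le_rfl (by linarith) hpa)
      (hsub (π / 2) a (by linarith) hpa le_rfl)).symm
  have hpos : 0 < ∫ t in (0:ℝ)..π / 2, f t := by
    apply intervalIntegral.intervalIntegral_pos_of_pos_on
      (hsub 0 (π / 2) le_rfl (by linarith) hpa)
    · intro x hx
      have hx0 : 0 < x := hx.1
      have hxa : x < a := lt_of_lt_of_le hx.2 hpa
      have hg0 : 0 ≤ g 0 := hg_nonneg 0 ⟨le_rfl, by linarith⟩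
      have hgx : g 0 < g x := hg_mono ⟨le_rfl, by linarith⟩ ⟨hx0.le, hxa⟩ hx0
      have hcos : 0 < Real.cos x := Real.cos_pos_of_mem_Ioo ⟨by linarith, hx.2⟩
      exact mul_pos (by linarith) hcos
    · linarith
  have hrest : 0 ≤ ∫ t in (π / 2)..a, f t := by
    rw [← hd0, ← hdm, hsum]
    exact Finset.sum_nonneg fun j hj => hblock j (Finset.mem_range.1 hj)
  rw [hsplit0]
  linarith
end

section
/- Let g be a nonnegative continuous integrable strictly increasing function on [0,a) where a = π/2 + kπ for a positive odd integer k. Then ∫₀ᵃ g(t) cos t dt < 0. -/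
open Real Set MeasureTheory

theorem integral_cos_neg_of_strict_mono_odd
    (a : ℝ) (k : ℕ) (hk : Odd k) (hkpos : 0 < k)
    (g : ℝ → ℝ)
    (hg_nonneg : ∀ t ∈ Ico (0 : ℝ) a, 0 ≤ g t)
    (hg_cont : ContinuousOn g (Ico 0 a))
    (hg_int : IntegrableOn g (Ico 0 a))
    (hg_mono : StrictMonoOn g (Ico 0 a))
    (ha : a = π / 2 + k * π) :
    (∫ t in (0 : ℝ)..a, g t * Real.cos t) < 0 := by
  have hπ := Real.pi_pos
  set f : ℝ → ℝ := fun t => g t * Real.cos t with hfdef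
  have hk1 : (1 : ℝ) ≤ (k : ℝ) := by exact_mod_cast hkpos
  have ha32 : 3 * π / 2 ≤ a := by rw [ha]; nlinarith
  -- integrability of f on Ico 0 a
  have hf_int : IntegrableOn f (Ico 0 a) := by
    have h1 : IntegrableOn (fun x => Real.cos x * g x) (Ico 0 a) :=
      hg_int.bdd_mul (c := 1) Real.continuous_cos.aestronglyMeasurable
        (ae_of_all _ fun x => by simpa using Real.abs_cos_le_one x)
    exact h1.congr_fun (fun x _ => mul_comm _ _) measurableSet_Ico
  -- interval integrability on subintervals of [0,a]
  have hsub : ∀ c d : ℝ, 0 ≤ c → 0 ≤ d → c ≤ a → d ≤ a →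
      IntervalIntegrable f volume c d := by
    intro c d hc hd hca hda
    rw [intervalIntegrable_iff]
    apply hf_int.mono_set_ae
    rw [MeasureTheory.ae_le_set]
    refine measure_mono_null ?_ (measure_singleton a)
    intro x hx
    simp only [mem_diff, Set.mem_uIoc, mem_Ico, not_and, not_lt, mem_singleton_iff] at hx ⊢
    obtain ⟨h1, h2⟩ := hx
    have hx0 : 0 ≤ x := by rcases h1 with ⟨u, v⟩ | ⟨u, v⟩ <;> linarith
    have hxa : x ≤ a := by rcases h1 with ⟨u, v⟩ | ⟨u, v⟩ <;> linarith
    exact le_antisymm hxa (h2 hx0)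
  -- membership helper
  have hmem : ∀ x : ℝ, 0 ≤ x → x < a → x ∈ Ico (0 : ℝ) a := fun x h1 h2 => ⟨h1, h2⟩
  -- pair lemma: a nonpositive contribution of each pair of half-periods
  have pair : ∀ c : ℝ, 0 ≤ c → c + 2 * π ≤ a →
      (∀ s ∈ Set.Icc c (c + π), 0 ≤ Real.cos s) →
      (∫ t in c..(c + 2 * π), f t) ≤ 0 := by
    intro c hc hca hcos
    have i1 : IntervalIntegrable f volume c (c + π) :=
      hsub c (c + π) hc (by linarith) (by linarith) (by linarith)
    have i2 : IntervalIntegrable f volume (c + π) (c + 2 * π) :=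
      hsub (c + π) (c + 2 * π) (by linarith) (by linarith) (by linarith) (by linarith)
    have hshift : (∫ t in (c + π)..(c + 2 * π), f t) = ∫ x in c..(c + π), f (x + π) := by
      rw [intervalIntegral.integral_comp_add_right f π]
      norm_num [two_mul]
      ring_nf
    have i2' : IntervalIntegrable (fun x => f (x + π)) volume c (c + π) := by
      have := i2.comp_add_right π
      have e1 : c + π - π = c := by ring
      have e2 : c + 2 * π - π = c + π := by ring
      rwa [e1, e2] at this
    have hsplit : (∫ t in c..(c + 2 * π), f t)
        = ∫ x in c..(c + π), (f x + f (x + π)) := by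
      rw [intervalIntegral.integral_add i1 i2', ← hshift,
        intervalIntegral.integral_add_adjacent_intervals i1 i2]
    rw [hsplit]
    rw [intervalIntegral.integral_of_le (by linarith), integral_Ioc_eq_integral_Ioo]
    apply MeasureTheory.setIntegral_nonpos measurableSet_Ioo
    intro x hx
    obtain ⟨hx1, hx2⟩ := hx
    have hx0 : 0 ≤ x := le_trans hc hx1.le
    have hxa : x < a := by linarith
    have hxpa : x + π < a := by linarith
    have hgle : g x ≤ g (x + π) :=
      hg_mono.monotoneOn (hmem x hx0 hxa) (hmem (x + π) (by linarith) hxpa) (by linarith)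
    have hcosx : 0 ≤ Real.cos x := hcos x ⟨hx1.le, hx2.le⟩
    have : f x + f (x + π) = (g x - g (x + π)) * Real.cos x := by
      simp only [hfdef, Real.cos_add_pi]; ring
    rw [this]
    exact mul_nonpos_of_nonpos_of_nonneg (by linarith) hcosx
  -- continuity of g on compact subintervals
  have hg_cont' : ContinuousOn g (Icc 0 π) :=
    hg_cont.mono (fun x hx => ⟨hx.1, by obtain ⟨_, h2⟩ := hx; nlinarith⟩)
  -- the first full period: strictly negative
  have base : (∫ t in (0 : ℝ)..π, f t) < 0 := by
    have hrefl : (∫ t in (π / 2)..π, f t) = ∫ x in (0 : ℝ)..(π / 2), f (π - x) := by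
      rw [intervalIntegral.integral_comp_sub_left f π,
        show π - π / 2 = π / 2 from by ring, sub_zero]
    have hcf : ContinuousOn f (Icc 0 π) :=
      hg_cont'.mul Real.continuous_cos.continuousOn
    have i1 : IntervalIntegrable f volume 0 (π / 2) :=
      (hcf.mono (fun x hx => ⟨hx.1, by obtain ⟨_, h2⟩ := hx; linarith⟩)).intervalIntegrable_of_Icc
        (by linarith)
    have i2 : IntervalIntegrable f volume (π / 2) π :=
      (hcf.mono (fun x hx => ⟨by obtain ⟨h1, _⟩ := hx; linarith, hx.2⟩)).intervalIntegrable_of_Icc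
        (by linarith)
    have i2' : IntervalIntegrable (fun x => f (π - x)) volume 0 (π / 2) := by
      have := i2.comp_sub_left π
      have e1 : π - π / 2 = π / 2 := by ring
      rw [e1, sub_self] at this
      exact this.symm
    have hsplit : (∫ t in (0 : ℝ)..π, f t)
        = ∫ x in (0 : ℝ)..(π / 2), (f x + f (π - x)) := by
      rw [intervalIntegral.integral_add i1 i2', ← hrefl,
        intervalIntegral.integral_add_adjacent_intervals i1 i2]
    have hposint : (0 : ℝ) < ∫ x in (0 : ℝ)..(π / 2), (g (π - x) - g x) * Real.cos x := by
      apply intervalIntegral.intervalIntegral_pos_of_pos_on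
      · apply ContinuousOn.intervalIntegrable_of_Icc (by linarith)
        apply ContinuousOn.mul
        · apply ContinuousOn.sub
          · apply hg_cont'.comp (continuous_const.sub continuous_id).continuousOn
            intro x hx
            simp only [mem_Icc, id_eq, Pi.sub_apply] at hx ⊢
            constructor <;> linarith [hx.1, hx.2]
          · exact hg_cont'.mono (fun x hx => ⟨hx.1, by obtain ⟨_, h2⟩ := hx; linarith⟩)
        · exact Real.continuous_cos.continuousOn
      · intro x hx
        obtain ⟨hx1, hx2⟩ := hx
        have hcosx : 0 < Real.cos x := Real.cos_pos_of_mem_Ioo ⟨by linarith, by linarith⟩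
        have hglt : g x < g (π - x) :=
          hg_mono (hmem x hx1.le (by linarith)) (hmem (π - x) (by linarith) (by linarith))
            (by linarith)
        exact mul_pos (by linarith) hcosx
      · linarith
    have heq : (∫ x in (0 : ℝ)..(π / 2), (f x + f (π - x)))
        = - ∫ x in (0 : ℝ)..(π / 2), (g (π - x) - g x) * Real.cos x := by
      rw [← intervalIntegral.integral_neg]
      apply intervalIntegral.integral_congr
      intro x _
      simp only [hfdef, Real.cos_pi_sub]
      ring
    rw [hsplit, heq]
    linarith
  -- quarter period [π, 3π/2]: nonpositive
  have tail : (∫ t in π..(3 * π / 2), f t) ≤ 0 := by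
    rw [intervalIntegral.integral_of_le (by linarith), integral_Ioc_eq_integral_Ioo]
    apply MeasureTheory.setIntegral_nonpos measurableSet_Ioo
    intro x hx
    obtain ⟨hx1, hx2⟩ := hx
    have hcosx : Real.cos x ≤ 0 :=
      Real.cos_nonpos_of_pi_div_two_le_of_le (by linarith) (by linarith)
    have hgx : 0 ≤ g x := hg_nonneg x (hmem x (by linarith) (by linarith))
    exact mul_nonpos_of_nonneg_of_nonpos hgx hcosx
  have base2 : (∫ t in (0 : ℝ)..(3 * π / 2), f t) < 0 := by
    have i1 : IntervalIntegrable f volume 0 π :=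
      hsub 0 π le_rfl (by linarith) (by linarith) (by linarith)
    have i2 : IntervalIntegrable f volume π (3 * π / 2) :=
      hsub π (3 * π / 2) (by linarith) (by linarith) (by linarith) (by linarith)
    rw [← intervalIntegral.integral_add_adjacent_intervals i1 i2]
    linarith
  -- main induction over pairs
  have main : ∀ n : ℕ, 3 * π / 2 + 2 * n * π ≤ a →
      (∫ t in (0 : ℝ)..(3 * π / 2 + 2 * n * π), f t) < 0 := by
    intro n
    induction n with
    | zero => intro _; simpa using base2
    | succ n ih =>
      intro hle
      push_cast at hle
      set c : ℝ := 3 * π / 2 + 2 * (n : ℝ) * π with hc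
      clear_value c
      have hle2 : c + 2 * π ≤ a := by rw [hc]; linarith
      have hle' : 3 * π / 2 + 2 * (n : ℝ) * π ≤ a := by linarith [hπ.le]
      have hc0 : 0 ≤ c := by rw [hc]; positivity
      have hcos : ∀ s ∈ Set.Icc c (c + π), 0 ≤ Real.cos s := by
        intro s hs
        obtain ⟨hs1, hs2⟩ := hs
        have hper : Real.cos s = Real.cos (s - ((n : ℝ) + 1) * (2 * π)) := by
          have h2 := Real.cos_add_int_mul_two_pi (s - ((n : ℝ) + 1) * (2 * π)) ((n : ℤ) + 1)
          rw [← h2]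
          push_cast
          ring_nf
        rw [hper]
        apply Real.cos_nonneg_of_mem_Icc
        refine Set.mem_Icc.2 ⟨by rw [hc] at hs1; linarith, by rw [hc] at hs2; linarith⟩
      have hpr := pair c hc0 hle2 hcos
      have hbnd : (3 * π / 2 + 2 * ((n : ℕ) + 1 : ℕ) * π : ℝ) = c + 2 * π := by
        rw [hc]; push_cast; ring
      rw [hbnd]
      have i1 : IntervalIntegrable f volume 0 c :=
        hsub 0 c le_rfl hc0 (by linarith) (by linarith)
      have i2 : IntervalIntegrable f volume c (c + 2 * π) :=
        hsub c (c + 2 * π) hc0 (by linarith) (by linarith) (by linarith)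
      rw [← intervalIntegral.integral_add_adjacent_intervals i1 i2]
      have hih := ih (by linarith [hπ.le])
      linarith
  -- conclude
  obtain ⟨m, hm⟩ := hk
  have hae : a = 3 * π / 2 + 2 * (m : ℝ) * π := by
    rw [ha, hm]; push_cast; ring
  have := main m (le_of_eq hae.symm)
  rwa [← hae] at this
end

section
/- Let φ : ℝ → ℝ be a positive even C² function that is increasing on [0,1]. Then the entire function G(z) = ∫_{-1}^{1} φ(t) e^{-itz} dt has only real zeros. -/
open Real Set intervalIntegral Finset Filter Topology Polynomial

namespace FRZ

/-- Per-factor Blaschke inequality. -/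
lemma factor_ineq (a ξ : ℂ) (ha : ‖a‖ ≤ 1) (hξ : ‖ξ‖ ≤ 1) :
    ‖ξ - a‖ ≤ ‖1 - a * (starRingEnd ℂ) ξ‖ := by
  have key : Complex.normSq (ξ - a) + (1 - Complex.normSq ξ) * (1 - Complex.normSq a)
      = Complex.normSq (1 - a * (starRingEnd ℂ) ξ) := by
    simp only [Complex.normSq_apply, Complex.sub_re, Complex.sub_im, Complex.mul_re,
      Complex.mul_im, Complex.one_re, Complex.one_im, Complex.conj_re, Complex.conj_im]
    ring
  have h1 : Complex.normSq ξ ≤ 1 := by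
    rw [← Complex.sq_norm]; nlinarith [norm_nonneg ξ]
  have h2 : Complex.normSq a ≤ 1 := by
    rw [← Complex.sq_norm]; nlinarith [norm_nonneg a]
  have e1 : ‖ξ - a‖ ^ 2 = Complex.normSq (ξ - a) := Complex.sq_norm _
  have e2 : ‖1 - a * (starRingEnd ℂ) ξ‖ ^ 2 = Complex.normSq (1 - a * (starRingEnd ℂ) ξ) :=
    Complex.sq_norm _
  nlinarith [norm_nonneg (ξ - a), norm_nonneg (1 - a * (starRingEnd ℂ) ξ)]

lemma prod_norm_le (ξ : ℂ) (hξ : ‖ξ‖ ≤ 1) (s : Multiset ℂ) (hs : ∀ a ∈ s, ‖a‖ ≤ 1) :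
    (s.map fun a => ‖ξ - a‖).prod ≤ (s.map fun a => ‖1 - a * (starRingEnd ℂ) ξ‖).prod :=
  Multiset.prod_map_le_prod_map₀ _ _ (fun i _ => norm_nonneg _)
    (fun i hi => factor_ineq i ξ (hs i hi) hξ)

/-- Eneström–Kakeya. -/
lemma EK (m : ℕ) (b : ℕ → ℝ) (hpos : ∀ k, k ≤ m → 0 < b k)
    (hmono : ∀ k, k < m → b k ≤ b (k + 1)) (a : ℂ)
    (ha : (∑ k ∈ Finset.range (m + 1), (b k : ℂ) * a ^ k) = 0) : ‖a‖ ≤ 1 := by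
  by_contra hcon
  push_neg at hcon
  have ha1 : (1:ℝ) ≤ ‖a‖ := le_of_lt hcon
  have hmul : (∑ k ∈ Finset.range (m + 1), (b k : ℂ) * a ^ (k + 1)) = 0 := by
    have := congrArg (· * a) ha
    simpa [Finset.sum_mul, mul_assoc, pow_succ] using this
  have key : (b m : ℂ) * a ^ (m + 1)
      = (b 0 : ℂ) + ∑ k ∈ Finset.range m, ((b (k+1) : ℂ) - (b k : ℂ)) * a ^ (k + 1) := by
    have e1 : (∑ k ∈ Finset.range (m + 1), (b k : ℂ) * a ^ (k + 1))
        = (∑ k ∈ Finset.range m, (b k : ℂ) * a ^ (k + 1)) + (b m : ℂ) * a ^ (m+1) :=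
      Finset.sum_range_succ _ m
    have e2 : (∑ k ∈ Finset.range (m + 1), (b k : ℂ) * a ^ k)
        = (∑ k ∈ Finset.range m, (b (k+1) : ℂ) * a ^ (k + 1)) + (b 0 : ℂ) := by
      simpa using Finset.sum_range_succ' (fun k => (b k : ℂ) * a ^ k) m
    have := sub_eq_zero.mpr (hmul.trans ha.symm)
    rw [e1, e2] at this
    have : (∑ k ∈ Finset.range m, (b k : ℂ) * a ^ (k + 1)) + (b m : ℂ) * a ^ (m+1)
        - ((∑ k ∈ Finset.range m, (b (k+1) : ℂ) * a ^ (k + 1)) + (b 0 : ℂ)) = 0 := this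
    have hsub : (∑ k ∈ Finset.range m, (((b (k+1) : ℂ) - (b k : ℂ))) * a ^ (k + 1))
        = (∑ k ∈ Finset.range m, (b (k+1) : ℂ) * a ^ (k + 1))
          - ∑ k ∈ Finset.range m, (b k : ℂ) * a ^ (k + 1) := by
      rw [← Finset.sum_sub_distrib]
      refine Finset.sum_congr rfl fun k _ => by ring
    rw [hsub]
    linear_combination this
  -- now bound norms
  have hbm : 0 < b m := hpos m le_rfl
  have hnorm : b m * ‖a‖ ^ (m + 1) ≤ b m * ‖a‖ ^ m := by
    have hle : ‖(b m : ℂ) * a ^ (m + 1)‖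
        ≤ b 0 + ∑ k ∈ Finset.range m, (b (k+1) - b k) * ‖a‖ ^ (k + 1) := by
      rw [key]
      refine le_trans (norm_add_le _ _) ?_
      gcongr
      · simp [abs_of_pos (hpos 0 (Nat.zero_le m))]
      refine le_trans (norm_sum_le _ _) ?_
      refine Finset.sum_le_sum fun k hk => ?_
      rw [norm_mul, norm_pow]
      have : ‖((b (k+1) : ℂ) - (b k : ℂ))‖ = b (k+1) - b k := by
        rw [show ((b (k+1) : ℂ) - (b k : ℂ)) = (((b (k+1) - b k : ℝ)) : ℂ) by push_cast; ring,
          Complex.norm_real, Real.norm_eq_abs, abs_of_nonneg]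
        exact sub_nonneg.mpr (hmono k (Finset.mem_range.mp hk))
      rw [this]
    have hRHS : b 0 + (∑ k ∈ Finset.range m, (b (k+1) - b k) * ‖a‖ ^ (k + 1))
        ≤ b m * ‖a‖ ^ m := by
      have h0 : b 0 ≤ b 0 * ‖a‖ ^ m := by
        nlinarith [one_le_pow₀ ha1 (n := m), hpos 0 (Nat.zero_le m)]
      have hterm : ∀ k ∈ Finset.range m,
          (b (k+1) - b k) * ‖a‖ ^ (k + 1) ≤ (b (k+1) - b k) * ‖a‖ ^ m := by
        intro k hk
        have hk' := Finset.mem_range.mp hk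
        have : ‖a‖ ^ (k+1) ≤ ‖a‖ ^ m := pow_le_pow_right₀ ha1 hk'
        nlinarith [sub_nonneg.mpr (hmono k hk')]
      have := Finset.sum_le_sum hterm
      have htel : (∑ k ∈ Finset.range m, (b (k+1) - b k) * ‖a‖ ^ m)
          = (b m - b 0) * ‖a‖ ^ m := by
        rw [← Finset.sum_mul, Finset.sum_range_sub (fun k => b k)]
      nlinarith []
    calc b m * ‖a‖ ^ (m+1) = ‖(b m : ℂ) * a ^ (m + 1)‖ := by
          rw [norm_mul, norm_pow, Complex.norm_real, Real.norm_eq_abs, abs_of_pos hbm]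
      _ ≤ _ := le_trans hle hRHS
  have hpow : (0:ℝ) < ‖a‖ ^ m := pow_pos (lt_of_lt_of_le one_pos ha1) m
  have hps : ‖a‖ ^ (m+1) = ‖a‖ ^ m * ‖a‖ := pow_succ _ _
  nlinarith [hnorm, mul_pos hbm hpow, hcon, hps]


lemma norm_mprod (s : Multiset ℂ) : ‖s.prod‖ = (s.map fun z => ‖z‖).prod := by
  induction s using Multiset.induction_on with
  | empty => simp
  | cons a s ih => simp [norm_mul, ih]

lemma prod_scale (c : ℝ) (f : ℂ → ℝ) (s : Multiset ℂ) :
    (s.map fun a => c * f a).prod = c ^ Multiset.card s * (s.map f).prod := by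
  induction s using Multiset.induction_on with
  | empty => simp
  | cons a s ih => simp [ih, pow_succ]; ring

lemma lemP (m : ℕ) (b : ℕ → ℝ) (hpos : ∀ k, k ≤ m → 0 < b k)
    (hmono : ∀ k, k < m → b k ≤ b (k + 1)) (ξ : ℂ) (h0 : ξ ≠ 0) (hξ : ‖ξ‖ ≤ 1) :
    ‖∑ k ∈ Finset.range (m + 1), (b k : ℂ) * ξ ^ k‖
      ≤ ‖ξ‖ ^ m * ‖∑ k ∈ Finset.range (m + 1), (b k : ℂ) * (((starRingEnd ℂ) ξ)⁻¹) ^ k‖ := by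
  set η : ℂ := ((starRingEnd ℂ) ξ)⁻¹ with hη
  set p : Polynomial ℂ := ∑ k ∈ Finset.range (m + 1), Polynomial.C ((b k : ℂ)) * Polynomial.X ^ k
    with hp
  have heval : ∀ x : ℂ, p.eval x = ∑ k ∈ Finset.range (m + 1), (b k : ℂ) * x ^ k := by
    intro x; simp [hp, Polynomial.eval_finset_sum]
  have hcoeff : ∀ j, p.coeff j = if j ≤ m then (b j : ℂ) else 0 := by
    intro j
    rw [hp, Polynomial.finset_sum_coeff]
    simp [Polynomial.coeff_C_mul, Polynomial.coeff_X_pow, Finset.sum_ite_eq, Nat.lt_succ_iff]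
  have hbm0 : (b m : ℂ) ≠ 0 := by exact_mod_cast (hpos m le_rfl).ne'
  have hcm : p.coeff m = (b m : ℂ) := by rw [hcoeff]; simp
  have hpne : p ≠ 0 := fun h => by rw [h] at hcm; simp at hcm; exact hbm0 hcm.symm
  have hdeg : p.natDegree = m := by
    refine le_antisymm (Polynomial.natDegree_le_iff_coeff_eq_zero.mpr fun j hj => ?_)
      (Polynomial.le_natDegree_of_ne_zero (by rw [hcm]; exact hbm0))
    rw [hcoeff]; simp [Nat.not_le.mpr hj]
  have hlc : p.leadingCoeff = (b m : ℂ) := by rw [Polynomial.leadingCoeff, hdeg, hcm]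
  have hsplits : p.Splits := IsAlgClosed.splits p
  have hcard : Multiset.card p.roots = m := by
    rw [← hdeg]; exact Polynomial.splits_iff_card_roots.mp hsplits
  have hfact : p = Polynomial.C ((b m : ℂ)) *
      (p.roots.map fun a => Polynomial.X - Polynomial.C a).prod := by
    conv_lhs => rw [hsplits.eq_prod_roots]
    rw [hlc]
  have hroots : ∀ a ∈ p.roots, ‖a‖ ≤ 1 := by
    intro a haa
    refine EK m b hpos hmono a ?_
    have := (Polynomial.mem_roots hpne).mp haa
    rw [← heval a]; exact this
  have hevalfact : ∀ x : ℂ, p.eval x = (b m : ℂ) * ((p.roots.map fun a => x - a).prod) := by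
    intro x
    conv_lhs => rw [hfact]
    rw [Polynomial.eval_mul, Polynomial.eval_C, Polynomial.eval_multiset_prod, Multiset.map_map]
    simp [Function.comp]
  have hnormeval : ∀ x : ℂ, ‖p.eval x‖ = b m * ((p.roots.map fun a => ‖x - a‖).prod) := by
    intro x
    rw [hevalfact, norm_mul, norm_mprod, Multiset.map_map]
    congr 1
    rw [Complex.norm_real, Real.norm_eq_abs, abs_of_pos (hpos m le_rfl)]
  have hbmpos := hpos m le_rfl
  have hcξ : (starRingEnd ℂ) ξ ≠ 0 := by simpa using h0
  have hfacteq : ∀ a : ℂ, ‖ξ‖ * ‖η - a‖ = ‖1 - a * (starRingEnd ℂ) ξ‖ := by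
    intro a
    have hnc : ‖(starRingEnd ℂ) ξ‖ = ‖ξ‖ := by
      simp
    rw [← hnc, ← norm_mul]
    congr 1
    field_simp [hη]
    rw [mul_sub, mul_inv_cancel₀ hcξ]
  calc ‖∑ k ∈ Finset.range (m + 1), (b k : ℂ) * ξ ^ k‖ = ‖p.eval ξ‖ := by rw [heval]
    _ = b m * ((p.roots.map fun a => ‖ξ - a‖).prod) := hnormeval ξ
    _ ≤ b m * ((p.roots.map fun a => ‖1 - a * (starRingEnd ℂ) ξ‖).prod) := by
        have := prod_norm_le ξ hξ p.roots hroots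
        exact mul_le_mul_of_nonneg_left this (le_of_lt hbmpos)
    _ = b m * ((p.roots.map fun a => ‖ξ‖ * ‖η - a‖).prod) := by
        congr 1
        exact congrArg Multiset.prod (Multiset.map_congr rfl fun a _ => (hfacteq a).symm)
    _ = ‖ξ‖ ^ m * (b m * ((p.roots.map fun a => ‖η - a‖).prod)) := by
        rw [prod_scale, hcard]; ring
    _ = ‖ξ‖ ^ m * ‖p.eval η‖ := by rw [hnormeval]
    _ = ‖ξ‖ ^ m * ‖∑ k ∈ Finset.range (m + 1), (b k : ℂ) * η ^ k‖ := by rw [heval]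

lemma exp_diff_bound (v : ℂ) (u : ℝ) (hu : 0 ≤ u) (hv : v.re ≤ u) {s t : ℝ}
    (hs0 : 0 ≤ s) (hst : s ≤ t) (ht1 : t ≤ 1) (hb : ‖v‖ * (t - s) ≤ 1) :
    ‖Complex.exp (t * v) - Complex.exp (s * v)‖ ≤ Real.exp u * (2 * (‖v‖ * (t - s))) := by
  have hfac : Complex.exp ((t:ℂ) * v) - Complex.exp ((s:ℂ) * v)
      = Complex.exp ((s:ℂ) * v) * (Complex.exp (((t - s : ℝ):ℂ) * v) - 1) := by
    rw [mul_sub, ← Complex.exp_add, mul_one]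
    push_cast
    ring_nf
  rw [hfac, norm_mul]
  have h1 : ‖Complex.exp ((s:ℂ) * v)‖ ≤ Real.exp u := by
    rw [Complex.norm_exp]
    apply Real.exp_le_exp.mpr
    have : ((s:ℂ) * v).re = s * v.re := by
      simp [Complex.mul_re]
    rw [this]
    nlinarith [mul_nonneg (sub_nonneg.mpr (hst.trans ht1)) hu, mul_nonneg hs0 (sub_nonneg.mpr hv)]
  have h2 : ‖Complex.exp (((t - s : ℝ):ℂ) * v) - 1‖ ≤ 2 * (‖v‖ * (t - s)) := by
    have habs0 : ‖((t - s : ℝ):ℂ) * v‖ = ‖v‖ * (t - s) := by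
      rw [norm_mul, Complex.norm_real, Real.norm_eq_abs, abs_of_nonneg (sub_nonneg.mpr hst)]
      ring
    have habs : ‖((t - s : ℝ):ℂ) * v‖ ≤ 1 := by rw [habs0]; exact hb
    have := Complex.norm_exp_sub_one_le habs
    rw [habs0] at this
    simpa using this
  calc ‖Complex.exp ((s:ℂ) * v)‖ * ‖Complex.exp (((t - s : ℝ):ℂ) * v) - 1‖
      ≤ Real.exp u * (2 * (‖v‖ * (t - s))) := by
        apply mul_le_mul h1 h2 (norm_nonneg _) (Real.exp_nonneg u)

lemma riemann_bound (φ : ℝ → ℝ) (hc : Continuous φ) (hφpos : ∀ t, 0 < φ t)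
    (v : ℂ) (u : ℝ) (hu : 0 < u) (hv : v.re ≤ u) {n : ℕ} (hn : 1 ≤ n) (hnv : ‖v‖ ≤ n) :
    ‖(∑ k ∈ Finset.range n, ((∫ t in ((k : ℝ)/n)..(((k : ℝ)+1)/n), φ t : ℝ) : ℂ)
        * Complex.exp ((((k : ℝ)/n : ℝ) : ℂ) * v))
      - ∫ t in (0:ℝ)..1, (φ t : ℂ) * Complex.exp ((t : ℂ) * v)‖
      ≤ (2 * Real.exp u * ‖v‖ * (∫ t in (0:ℝ)..1, φ t)) / n := by
  have hn0 : (0:ℝ) < n := by exact_mod_cast hn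
  set f : ℝ → ℂ := fun t => (φ t : ℂ) * Complex.exp ((t : ℂ) * v) with hf
  have hfc : Continuous f :=
    (Complex.continuous_ofReal.comp hc).mul ((Complex.continuous_ofReal.mul continuous_const).cexp)
  set a : ℕ → ℝ := fun k => k / n with ha
  have hmono : ∀ k : ℕ, a k ≤ a (k+1) := by
    intro k
    have h1 : ((k:ℝ)) ≤ ((k+1:ℕ):ℝ) := by push_cast; linarith
    exact (div_le_div_iff_of_pos_right hn0).mpr h1
  have ha0 : a 0 = 0 := by simp [ha]
  have han : a n = 1 := by
    simp only [ha]; field_simp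
  have hints : ∀ k < n, IntervalIntegrable f MeasureTheory.volume (a k) (a (k+1)) :=
    fun k _ => hfc.intervalIntegrable _ _
  have hintsφ : ∀ k < n, IntervalIntegrable φ MeasureTheory.volume (a k) (a (k+1)) :=
    fun k _ => hc.intervalIntegrable _ _
  have hsplitf : (∑ k ∈ Finset.range n, ∫ t in a k..a (k+1), f t) = ∫ t in (0:ℝ)..1, f t := by
    rw [intervalIntegral.sum_integral_adjacent_intervals hints, ha0, han]
  have hsplitφ : (∑ k ∈ Finset.range n, ∫ t in a k..a (k+1), φ t) = ∫ t in (0:ℝ)..1, φ t := by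
    rw [intervalIntegral.sum_integral_adjacent_intervals hintsφ, ha0, han]
  set c : ℝ := Real.exp u * (2 * (‖v‖ * (1/n))) with hcdef
  have hsumeq : (∑ k ∈ Finset.range n, ((∫ t in ((k : ℝ)/n)..(((k : ℝ)+1)/n), φ t : ℝ) : ℂ)
        * Complex.exp ((((k : ℝ)/n : ℝ) : ℂ) * v))
      = ∑ k ∈ Finset.range n, ((∫ t in a k..a (k+1), φ t : ℝ) : ℂ)
          * Complex.exp (((a k : ℝ) : ℂ) * v) := by
    refine Finset.sum_congr rfl fun k _ => ?_
    have h2 : a (k+1) = ((k:ℝ)+1)/n := by simp only [ha]; push_cast; ring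
    have h1 : a k = (k:ℝ)/n := rfl
    rw [h2, h1]
  rw [hsumeq, ← hsplitf, ← Finset.sum_sub_distrib]
  have hterm : ∀ k ∈ Finset.range n,
      ‖((∫ t in a k..a (k+1), φ t : ℝ) : ℂ) * Complex.exp (((a k : ℝ) : ℂ) * v)
        - ∫ t in a k..a (k+1), f t‖ ≤ c * ∫ t in a k..a (k+1), φ t := by
    intro k hk
    have hkn := Finset.mem_range.mp hk
    have hab := hmono k
    have hak0 : 0 ≤ a k := by
      simp only [ha]; positivity
    have hak1 : a (k+1) ≤ 1 := by
      rw [show a (k+1) = ((k+1:ℕ):ℝ)/n from rfl, div_le_one hn0]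
      exact_mod_cast Nat.succ_le_of_lt hkn
    have hlen : a (k+1) - a k = 1/n := by
      simp only [ha]; push_cast; ring
    have hconst : ((∫ t in a k..a (k+1), φ t : ℝ) : ℂ) * Complex.exp (((a k : ℝ) : ℂ) * v)
        = ∫ t in a k..a (k+1), (φ t : ℂ) * Complex.exp (((a k : ℝ) : ℂ) * v) := by
      rw [intervalIntegral.integral_mul_const, intervalIntegral.integral_ofReal]
    have hgc : Continuous fun t => (φ t : ℂ) * Complex.exp (((a k : ℝ) : ℂ) * v) :=
      (Complex.continuous_ofReal.comp hc).mul continuous_const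
    rw [hconst, ← intervalIntegral.integral_sub (hgc.intervalIntegrable _ _) (hints k hkn)]
    refine le_trans (intervalIntegral.norm_integral_le_integral_norm hab) ?_
    have hpoint : ∀ t ∈ Icc (a k) (a (k+1)),
        ‖(φ t : ℂ) * Complex.exp (((a k : ℝ) : ℂ) * v) - f t‖ ≤ φ t * c := by
      intro t ht
      have hfactor : (φ t : ℂ) * Complex.exp (((a k : ℝ) : ℂ) * v) - f t
          = (φ t : ℂ) * (Complex.exp (((a k : ℝ) : ℂ) * v) - Complex.exp ((t:ℂ) * v)) := by
        rw [hf]; ring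
      rw [hfactor, norm_mul, Complex.norm_real, Real.norm_eq_abs,
        abs_of_pos (hφpos t), norm_sub_rev]
      have hb1 : ‖v‖ * (t - a k) ≤ 1 := by
        have h1 : ‖v‖ * (t - a k) ≤ ‖v‖ * (1/n) := by
          have := ht.2
          have hda : t - a k ≤ 1/n := by rw [← hlen]; linarith
          exact mul_le_mul_of_nonneg_left hda (norm_nonneg v)
        have h2 : ‖v‖ * (1/n) ≤ 1 := by
          rw [mul_one_div]
          exact (div_le_one hn0).mpr hnv
        linarith
      have := exp_diff_bound v u hu.le hv hak0 ht.1 (le_trans ht.2 hak1) hb1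
      refine le_trans (mul_le_mul_of_nonneg_left this (hφpos t).le) ?_
      have hcle : Real.exp u * (2 * (‖v‖ * (t - a k))) ≤ c := by
        rw [hcdef]
        have hda : t - a k ≤ 1/n := by rw [← hlen]; linarith [ht.2]
        have h3 := mul_le_mul_of_nonneg_left hda (norm_nonneg v)
        nlinarith [Real.exp_pos u]
      exact mul_le_mul_of_nonneg_left hcle (hφpos t).le
    have hmon := intervalIntegral.integral_mono_on hab
      (Continuous.intervalIntegrable (μ := MeasureTheory.volume) (hgc.sub hfc).norm _ _)
      (Continuous.intervalIntegrable (μ := MeasureTheory.volume) (hc.mul continuous_const) _ _) hpoint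
    refine le_trans hmon ?_
    simp only [Pi.mul_apply]
    rw [intervalIntegral.integral_mul_const, hcdef]
    ring_nf
    exact le_refl _
  refine le_trans (norm_sum_le _ _) ?_
  refine le_trans (Finset.sum_le_sum hterm) ?_
  rw [← Finset.mul_sum, hsplitφ, hcdef]
  ring_nf
  exact le_refl _

lemma lemA (φ : ℝ → ℝ) (hc : Continuous φ) (hφpos : ∀ t, 0 < φ t)
    (hm : MonotoneOn φ (Icc 0 1)) (w : ℂ) (hw : 0 < w.re) :
    ‖∫ t in (0:ℝ)..1, (φ t : ℂ) * Complex.exp ((t:ℂ) * (-w))‖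
      ≤ Real.exp (-w.re) * ‖∫ t in (0:ℝ)..1, (φ t : ℂ) * Complex.exp ((t:ℂ) * w)‖ := by
  set Nw : ℂ := ∫ t in (0:ℝ)..1, (φ t : ℂ) * Complex.exp ((t:ℂ) * w) with hNw
  set Nmw : ℂ := ∫ t in (0:ℝ)..1, (φ t : ℂ) * Complex.exp ((t:ℂ) * (-w)) with hNmw
  set P : ℕ → ℂ := fun m => ∑ k ∈ Finset.range (m+1),
      ((∫ t in ((k : ℝ)/((m+1 : ℕ) : ℝ))..(((k : ℝ)+1)/((m+1 : ℕ) : ℝ)), φ t : ℝ) : ℂ)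
        * Complex.exp ((((k : ℝ)/((m+1 : ℕ) : ℝ) : ℝ) : ℂ) * w) with hP
  set Q : ℕ → ℂ := fun m => ∑ k ∈ Finset.range (m+1),
      ((∫ t in ((k : ℝ)/((m+1 : ℕ) : ℝ))..(((k : ℝ)+1)/((m+1 : ℕ) : ℝ)), φ t : ℝ) : ℂ)
        * Complex.exp ((((k : ℝ)/((m+1 : ℕ) : ℝ) : ℝ) : ℂ) * (-w)) with hQ
  -- per-m inequality
  have hkey : ∀ m : ℕ, ‖Q m‖ ≤ (Real.exp (-(w.re)/((m+1:ℕ):ℝ)))^m * ‖P m‖ := by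
    intro m
    set n : ℕ := m + 1 with hn
    have hn0 : (0:ℝ) < ((n:ℕ):ℝ) := by positivity
    set b : ℕ → ℝ := fun k => ∫ t in ((k : ℝ)/((n : ℕ) : ℝ))..(((k : ℝ)+1)/((n : ℕ) : ℝ)), φ t
      with hb
    have hbpos : ∀ k, k ≤ m → 0 < b k := by
      intro k hk
      apply intervalIntegral.intervalIntegral_pos_of_pos_on
        (Continuous.intervalIntegrable (μ := MeasureTheory.volume) hc _ _)
        (fun x _ => hφpos x)
      rw [div_lt_div_iff₀ hn0 hn0]
      nlinarith [hn0]
    have hbmono : ∀ k, k < m → b k ≤ b (k + 1) := by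
      intro k hk
      have hshift : b (k+1) = ∫ t in ((k : ℝ)/((n : ℕ) : ℝ))..(((k : ℝ)+1)/((n : ℕ) : ℝ)),
          φ (t + 1/((n : ℕ) : ℝ)) := by
        rw [hb]
        simp only []
        rw [intervalIntegral.integral_comp_add_right (fun t => φ t) (1/((n : ℕ) : ℝ))]
        have e1 : (k : ℝ)/((n : ℕ) : ℝ) + 1/((n : ℕ) : ℝ) = ((k+1:ℕ) : ℝ)/((n : ℕ) : ℝ) := by
          push_cast; ring
        have e2 : ((k : ℝ)+1)/((n : ℕ) : ℝ) + 1/((n : ℕ) : ℝ)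
            = (((k+1:ℕ) : ℝ)+1)/((n : ℕ) : ℝ) := by
          push_cast; ring
        rw [e1, e2]
      rw [hshift]
      apply intervalIntegral.integral_mono_on
        (by rw [div_le_div_iff₀ hn0 hn0]; nlinarith [hn0])
        (Continuous.intervalIntegrable (μ := MeasureTheory.volume) hc _ _)
        (Continuous.intervalIntegrable (μ := MeasureTheory.volume)
          (hc.comp (continuous_id.add continuous_const)) _ _)
      intro t ht
      have hkn : ((k:ℝ) + 2) ≤ ((n:ℕ):ℝ) := by
        have : (k + 2 : ℕ) ≤ n := by omega
        exact_mod_cast this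
      have ht0 : 0 ≤ t := le_trans (by positivity) ht.1
      have hpos1n : (0:ℝ) < 1/((n:ℕ):ℝ) := by positivity
      have ht1 : t + 1/((n : ℕ) : ℝ) ≤ 1 := by
        have h2 : t ≤ ((k:ℝ)+1)/((n:ℕ):ℝ) := ht.2
        have e3 : ((k:ℝ)+1)/((n:ℕ):ℝ) + 1/((n:ℕ):ℝ) = ((k:ℝ)+2)/((n:ℕ):ℝ) := by ring
        have h3 : ((k:ℝ)+2)/((n:ℕ):ℝ) ≤ 1 := by rw [div_le_one hn0]; exact hkn
        linarith
      have := hm (a := t) (b := t + 1/((n:ℕ):ℝ)) ⟨ht0, by linarith⟩ ⟨by linarith, ht1⟩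
        (le_add_of_nonneg_right hpos1n.le)
      simpa using this
    set r : ℝ := (((n:ℕ):ℝ))⁻¹ with hr
    set ξ : ℂ := Complex.exp ((r : ℂ) * (-w)) with hξdef
    have hξ0 : ξ ≠ 0 := Complex.exp_ne_zero _
    have hre : ((r:ℂ) * (-w)).re = r * (-w.re) := by
      simp [Complex.mul_re]
    have hξnorm : ‖ξ‖ = Real.exp (-(w.re)/((n:ℕ):ℝ)) := by
      rw [hξdef, Complex.norm_exp, hre, hr]
      congr 1
      field_simp
    have hξle : ‖ξ‖ ≤ 1 := by
      rw [hξnorm]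
      calc Real.exp (-(w.re)/((n:ℕ):ℝ)) ≤ Real.exp 0 := by
            apply Real.exp_le_exp.mpr
            apply div_nonpos_of_nonpos_of_nonneg (by linarith) hn0.le
        _ = 1 := Real.exp_zero
    have hξk : ∀ k : ℕ, ξ ^ k = Complex.exp ((((k:ℝ)/((n:ℕ):ℝ) : ℝ) : ℂ) * (-w)) := by
      intro k
      rw [hξdef, ← Complex.exp_nat_mul]
      congr 1
      rw [hr]
      push_cast
      field_simp
    have hηk : ∀ k : ℕ, (((starRingEnd ℂ) ξ)⁻¹) ^ k
        = (starRingEnd ℂ) (Complex.exp ((((k:ℝ)/((n:ℕ):ℝ) : ℝ) : ℂ) * w)) := by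
      intro k
      have hconjξ : (starRingEnd ℂ) ξ = Complex.exp ((r:ℂ) * (-(starRingEnd ℂ) w)) := by
        rw [hξdef, ← Complex.exp_conj]
        congr 1
        simp [map_mul]
      rw [hconjξ, ← Complex.exp_neg, ← Complex.exp_nat_mul, ← Complex.exp_conj]
      congr 1
      rw [map_mul, Complex.conj_ofReal, hr]
      push_cast
      field_simp
    have hQeq : Q m = ∑ k ∈ Finset.range (m+1), ((b k : ℝ) : ℂ) * ξ ^ k := by
      rw [hQ]
      refine Finset.sum_congr rfl fun k _ => ?_
      rw [hξk]
    have hPconj : (∑ k ∈ Finset.range (m+1), ((b k : ℝ) : ℂ) * (((starRingEnd ℂ) ξ)⁻¹) ^ k)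
        = (starRingEnd ℂ) (P m) := by
      rw [hP, map_sum]
      refine Finset.sum_congr rfl fun k _ => ?_
      rw [map_mul, Complex.conj_ofReal, hηk k]
    have hlp := lemP m b hbpos hbmono ξ hξ0 hξle
    rw [hQeq]
    calc ‖∑ k ∈ Finset.range (m+1), ((b k : ℝ) : ℂ) * ξ ^ k‖
        ≤ ‖ξ‖ ^ m * ‖∑ k ∈ Finset.range (m+1), ((b k : ℝ) : ℂ) * (((starRingEnd ℂ) ξ)⁻¹) ^ k‖ :=
          hlp
      _ = (Real.exp (-(w.re)/((n:ℕ):ℝ)))^m * ‖P m‖ := by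
          rw [hξnorm, hPconj]
          congr 1
          simp
  -- limits
  have hintφ : (0:ℝ) ≤ ∫ t in (0:ℝ)..1, φ t := by
    apply intervalIntegral.integral_nonneg (by norm_num)
    exact fun t _ => (hφpos t).le
  have hlim_aux : ∀ (v : ℂ), v.re ≤ w.re →
      Tendsto (fun m : ℕ => ∑ k ∈ Finset.range (m+1),
        ((∫ t in ((k : ℝ)/((m+1 : ℕ) : ℝ))..(((k : ℝ)+1)/((m+1 : ℕ) : ℝ)), φ t : ℝ) : ℂ)
        * Complex.exp ((((k : ℝ)/((m+1 : ℕ) : ℝ) : ℝ) : ℂ) * v)) atTop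
      (𝓝 (∫ t in (0:ℝ)..1, (φ t : ℂ) * Complex.exp ((t:ℂ) * v))) := by
    intro v hv
    rw [← tendsto_sub_nhds_zero_iff]
    apply squeeze_zero_norm'
      (a := fun m : ℕ => (2 * Real.exp w.re * ‖v‖ * (∫ t in (0:ℝ)..1, φ t)) / ((m+1 : ℕ) : ℝ))
    · filter_upwards [eventually_ge_atTop (Nat.ceil ‖v‖)] with m hm'
      apply riemann_bound φ hc hφpos v w.re hw hv (Nat.le_add_left 1 m)
      calc ‖v‖ ≤ (Nat.ceil ‖v‖ : ℝ) := Nat.le_ceil _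
        _ ≤ (m : ℝ) := by exact_mod_cast hm'
        _ ≤ ((m+1 : ℕ) : ℝ) := by push_cast; linarith
    · have h0 : Tendsto (fun m : ℕ => (2 * Real.exp w.re * ‖v‖ * (∫ t in (0:ℝ)..1, φ t))
          * (1/((m:ℝ)+1))) atTop (𝓝 ((2 * Real.exp w.re * ‖v‖ * (∫ t in (0:ℝ)..1, φ t)) * 0)) :=
        tendsto_const_nhds.mul tendsto_one_div_add_atTop_nhds_zero_nat
      rw [mul_zero] at h0
      convert h0 using 1
      funext m
      push_cast
      ring
  have hPlim := hlim_aux w le_rfl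
  have hQlim := hlim_aux (-w) (by simp; linarith)
  have hclim : Tendsto (fun m : ℕ => (Real.exp (-(w.re)/((m+1:ℕ):ℝ)))^m) atTop
      (𝓝 (Real.exp (-w.re))) := by
    have h1 : Tendsto (fun m : ℕ => -w.re * (1 - 1/((m:ℝ)+1))) atTop (𝓝 (-w.re)) := by
      have h2 : Tendsto (fun m : ℕ => 1 - 1/((m:ℝ)+1)) atTop (𝓝 (1 - 0)) :=
        tendsto_const_nhds.sub tendsto_one_div_add_atTop_nhds_zero_nat
      rw [sub_zero] at h2
      have h4 := h2.const_mul (-w.re)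
      simpa using h4
    have h5 := (Real.continuous_exp.tendsto (-w.re)).comp h1
    convert h5 using 1
    funext m
    simp only [Function.comp_apply]
    rw [← Real.exp_nat_mul]
    congr 1
    have hm0 : ((m:ℝ)+1) ≠ 0 := by positivity
    push_cast
    field_simp
    ring
  have hfin := le_of_tendsto_of_tendsto' ((continuous_norm.tendsto Nmw).comp hQlim)
    (hclim.mul ((continuous_norm.tendsto Nw).comp hPlim)) hkey
  simpa using hfin

lemma lemB (φ : ℝ → ℝ) (hC2 : ContDiff ℝ 2 φ) (hφpos : ∀ t, 0 < φ t)
    (hm : MonotoneOn φ (Icc 0 1)) (w : ℂ) (hw : 0 < w.re) :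
    (∫ t in (0:ℝ)..1, (φ t : ℂ) * Complex.exp ((t:ℂ) * w)) ≠ 0 := by
  have hc : Continuous φ := hC2.continuous
  have hdiff : ∀ t, HasDerivAt φ (deriv φ t) t := fun t =>
    ((hC2.differentiable (by norm_num)) t).hasDerivAt
  have hc' : Continuous (deriv φ) := hC2.continuous_deriv (by norm_num)
  -- nonnegativity of deriv φ on [0,1]
  have hd0 : ∀ t ∈ Ico (0:ℝ) 1, 0 ≤ deriv φ t := by
    intro t ht
    have h := hasDerivAt_iff_tendsto_slope.mp (hdiff t)
    have h2 : Tendsto (slope φ t) (𝓝[>] t) (𝓝 (deriv φ t)) :=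
      h.mono_left (nhdsWithin_mono t (fun x hx => ne_of_gt hx))
    refine ge_of_tendsto h2 ?_
    filter_upwards [Ioc_mem_nhdsGT_of_mem ⟨le_refl t, ht.2⟩] with x hx
    rw [slope_def_field]
    apply div_nonneg _ (by linarith [hx.1])
    have := hm ⟨ht.1, by linarith [hx.2, hx.1]⟩ ⟨by linarith [ht.1, hx.1], hx.2⟩ hx.1.le
    linarith
  have hd : ∀ t ∈ Icc (0:ℝ) 1, 0 ≤ deriv φ t := by
    intro t ht
    rcases lt_or_eq_of_le ht.2 with h1 | h1
    · exact hd0 t ⟨ht.1, h1⟩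
    · subst h1
      have htd : Tendsto (deriv φ) (𝓝[<] (1:ℝ)) (𝓝 (deriv φ 1)) :=
        (hc'.tendsto _).mono_left nhdsWithin_le_nhds
      refine ge_of_tendsto htd ?_
      filter_upwards [Ioo_mem_nhdsLT_of_mem ⟨(by norm_num : (0:ℝ) < 1), le_refl (1:ℝ)⟩] with x hx
      exact hd0 x ⟨hx.1.le, hx.2⟩
  -- FTC
  have hder : ∀ t : ℝ, HasDerivAt (fun t : ℝ => (φ t : ℂ) * Complex.exp ((t:ℂ) * w))
      (((deriv φ t : ℝ) : ℂ) * Complex.exp ((t:ℂ) * w)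
        + (φ t : ℂ) * (Complex.exp ((t:ℂ) * w) * w)) t := by
    intro t
    have h1 : HasDerivAt (fun t : ℝ => ((φ t : ℝ) : ℂ)) ((deriv φ t : ℝ) : ℂ) t :=
      (hdiff t).ofReal_comp
    have h2 : HasDerivAt (fun t : ℝ => Complex.exp ((t:ℂ) * w))
        (Complex.exp ((t:ℂ) * w) * w) t := by
      have h3 : HasDerivAt (fun t : ℝ => ((t : ℝ) : ℂ)) 1 t := (hasDerivAt_id t).ofReal_comp
      have h4 := (h3.mul_const w).cexp
      simpa using h4
    exact h1.mul h2
  have hcd : Continuous fun t : ℝ => ((deriv φ t : ℝ) : ℂ) * Complex.exp ((t:ℂ) * w) :=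
    (Complex.continuous_ofReal.comp hc').mul
      ((Complex.continuous_ofReal.mul continuous_const).cexp)
  have hcf : Continuous fun t : ℝ => (φ t : ℂ) * (Complex.exp ((t:ℂ) * w) * w) :=
    (Complex.continuous_ofReal.comp hc).mul
      (((Complex.continuous_ofReal.mul continuous_const).cexp).mul continuous_const)
  have hFTC := intervalIntegral.integral_eq_sub_of_hasDerivAt (a := (0:ℝ)) (b := 1)
    (f := fun t : ℝ => (φ t : ℂ) * Complex.exp ((t:ℂ) * w)) (fun t _ => hder t)
    (Continuous.intervalIntegrable (μ := MeasureTheory.volume) (hcd.add hcf) _ _)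
  rw [intervalIntegral.integral_add
      (Continuous.intervalIntegrable (μ := MeasureTheory.volume) hcd _ _)
      (Continuous.intervalIntegrable (μ := MeasureTheory.volume) hcf _ _)] at hFTC
  have hmul : (∫ t in (0:ℝ)..1, (φ t : ℂ) * (Complex.exp ((t:ℂ) * w) * w))
      = (∫ t in (0:ℝ)..1, (φ t : ℂ) * Complex.exp ((t:ℂ) * w)) * w := by
    rw [← intervalIntegral.integral_mul_const]
    refine intervalIntegral.integral_congr fun t _ => by ring
  rw [hmul] at hFTC
  -- bound the derivative integral
  have hI : ‖∫ t in (0:ℝ)..1, ((deriv φ t : ℝ) : ℂ) * Complex.exp ((t:ℂ) * w)‖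
      ≤ Real.exp w.re * (φ 1 - φ 0) := by
    refine le_trans (intervalIntegral.norm_integral_le_integral_norm (by norm_num)) ?_
    have hpt : ∀ t ∈ Icc (0:ℝ) 1, ‖((deriv φ t : ℝ) : ℂ) * Complex.exp ((t:ℂ) * w)‖
        ≤ deriv φ t * Real.exp w.re := by
      intro t ht
      rw [norm_mul, Complex.norm_real, Real.norm_eq_abs, abs_of_nonneg (hd t ht),
        Complex.norm_exp]
      have hre : ((t:ℂ) * w).re = t * w.re := by simp [Complex.mul_re]
      rw [hre]
      have : Real.exp (t * w.re) ≤ Real.exp w.re := by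
        apply Real.exp_le_exp.mpr
        nlinarith [ht.1, ht.2, hw]
      exact mul_le_mul_of_nonneg_left this (hd t ht)
    refine le_trans (intervalIntegral.integral_mono_on (by norm_num)
      (Continuous.intervalIntegrable (μ := MeasureTheory.volume)
        ((Complex.continuous_ofReal.comp hc').mul
          ((Complex.continuous_ofReal.mul continuous_const).cexp)).norm _ _)
      (Continuous.intervalIntegrable (μ := MeasureTheory.volume)
        (hc'.mul continuous_const) _ _) hpt) ?_
    simp only [Pi.mul_apply]
    rw [intervalIntegral.integral_mul_const,
      intervalIntegral.integral_deriv_eq_sub (fun x _ => ((hC2.differentiable (by norm_num)) x))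
        (Continuous.intervalIntegrable (μ := MeasureTheory.volume) hc' _ _)]
    ring_nf
    exact le_refl _
  -- conclude
  intro h0
  rw [h0, zero_mul] at hFTC
  -- hFTC : I' + 0 = φ1 e^w - φ0
  have hnorm : ‖(φ 1 : ℂ) * Complex.exp ((1:ℝ) * w) - (φ 0 : ℂ) * Complex.exp ((0:ℝ) * w)‖
      ≥ φ 1 * Real.exp w.re - φ 0 := by
    have e0 : ((0:ℝ):ℂ) * w = 0 := by simp
    have h1 : ‖(φ 1 : ℂ) * Complex.exp ((1:ℝ) * w)‖ = φ 1 * Real.exp w.re := by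
      rw [norm_mul, Complex.norm_real, Real.norm_eq_abs, abs_of_pos (hφpos 1),
        Complex.norm_exp]
      congr 2
      simp [Complex.mul_re]
    have h2 : ‖(φ 0 : ℂ) * Complex.exp ((0:ℝ) * w)‖ = φ 0 := by
      rw [show (((0:ℝ)):ℂ) * w = 0 by simp, Complex.exp_zero, mul_one, Complex.norm_real,
        Real.norm_eq_abs, abs_of_pos (hφpos 0)]
    calc ‖(φ 1 : ℂ) * Complex.exp ((1:ℝ) * w) - (φ 0 : ℂ) * Complex.exp ((0:ℝ) * w)‖
        ≥ ‖(φ 1 : ℂ) * Complex.exp ((1:ℝ) * w)‖ - ‖(φ 0 : ℂ) * Complex.exp ((0:ℝ) * w)‖ :=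
          norm_sub_norm_le _ _
      _ = φ 1 * Real.exp w.re - φ 0 := by rw [h1, h2]
  have hgt : φ 1 * Real.exp w.re - φ 0 > Real.exp w.re * (φ 1 - φ 0) := by
    have he : 1 < Real.exp w.re := by rw [← Real.exp_zero]; exact Real.exp_lt_exp.mpr hw
    nlinarith [hφpos 0, hφpos 1]
  rw [add_zero] at hFTC
  rw [hFTC] at hI
  linarith [hnorm, hI, hgt]

lemma key (φ : ℝ → ℝ) (hC2 : ContDiff ℝ 2 φ) (hφpos : ∀ t, 0 < φ t)
    (hφ_even : ∀ t, φ (-t) = φ t) (hmono : MonotoneOn φ (Icc 0 1)) (w : ℂ) (hw : 0 < w.re) :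
    (∫ t in (-1:ℝ)..1, (φ t : ℂ) * Complex.exp ((t:ℂ) * w)) ≠ 0 := by
  have hc : Continuous φ := hC2.continuous
  have hint : ∀ (v : ℂ) (a b : ℝ),
      IntervalIntegrable (fun t => (φ t : ℂ) * Complex.exp ((t:ℂ) * v))
        MeasureTheory.volume a b := fun v a b =>
    Continuous.intervalIntegrable (μ := MeasureTheory.volume)
      ((Complex.continuous_ofReal.comp hc).mul
        ((Complex.continuous_ofReal.mul continuous_const).cexp)) a b
  have hsplit : (∫ t in (-1:ℝ)..1, (φ t : ℂ) * Complex.exp ((t:ℂ) * w))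
      = (∫ t in (-1:ℝ)..0, (φ t : ℂ) * Complex.exp ((t:ℂ) * w))
        + ∫ t in (0:ℝ)..1, (φ t : ℂ) * Complex.exp ((t:ℂ) * w) :=
    (intervalIntegral.integral_add_adjacent_intervals (hint w _ _) (hint w _ _)).symm
  have hneg : (∫ t in (-1:ℝ)..0, (φ t : ℂ) * Complex.exp ((t:ℂ) * w))
      = ∫ t in (0:ℝ)..1, (φ t : ℂ) * Complex.exp ((t:ℂ) * (-w)) := by
    have h1 := intervalIntegral.integral_comp_neg (a := (0:ℝ)) (b := 1)
      (fun t => (φ t : ℂ) * Complex.exp ((t:ℂ) * w))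
    rw [neg_zero] at h1
    rw [← h1]
    refine intervalIntegral.integral_congr fun t _ => ?_
    rw [hφ_even t]
    congr 1
    push_cast
    ring
  rw [hsplit, hneg]
  intro hzero
  have hA := lemA φ hc hφpos hmono w hw
  have hB := lemB φ hC2 hφpos hmono w hw
  have heq : (∫ t in (0:ℝ)..1, (φ t : ℂ) * Complex.exp ((t:ℂ) * (-w)))
      = - ∫ t in (0:ℝ)..1, (φ t : ℂ) * Complex.exp ((t:ℂ) * w) := by
    linear_combination hzero
  rw [heq, norm_neg] at hA
  have hpos : 0 < ‖∫ t in (0:ℝ)..1, (φ t : ℂ) * Complex.exp ((t:ℂ) * w)‖ :=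
    norm_pos_iff.mpr hB
  have hlt : Real.exp (-w.re) < 1 := by
    rw [← Real.exp_zero]
    apply Real.exp_lt_exp.mpr
    linarith
  nlinarith [hA, hpos, hlt]

end FRZ

theorem fourier_transform_real_zeros
    (φ : ℝ → ℝ)
    (hφ_C2 : ContDiff ℝ 2 φ)
    (hφ_pos : ∀ t, 0 < φ t)
    (hφ_even : ∀ t, φ (-t) = φ t)
    (hφ_mono : MonotoneOn φ (Icc 0 1)) :
    ∀ z : ℂ,
      (∫ t in (-1 : ℝ)..1, (φ t : ℂ) * Complex.exp (-Complex.I * t * z)) = 0 →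
        z.im = 0 := by
  intro z hz
  by_contra hne
  have hz' : (∫ t in (-1:ℝ)..1, (φ t : ℂ) * Complex.exp ((t:ℂ) * (-Complex.I * z))) = 0 := by
    rw [← hz]
    refine intervalIntegral.integral_congr fun t _ => ?_
    congr 1
    ring
  set w : ℂ := -Complex.I * z with hwdef
  have hwre : w.re = z.im := by
    simp [hwdef, Complex.mul_re]
  rcases lt_or_gt_of_ne hne with hlt | hgt
  · -- z.im < 0, use -w
    have hsub : (∫ t in (-1:ℝ)..1, (φ t : ℂ) * Complex.exp ((t:ℂ) * (-w))) = 0 := by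
      rw [← hz']
      have h1 := intervalIntegral.integral_comp_neg (a := (-1:ℝ)) (b := 1)
        (fun t => (φ t : ℂ) * Complex.exp ((t:ℂ) * (-w)))
      rw [neg_neg] at h1
      rw [← h1]
      refine intervalIntegral.integral_congr fun t _ => ?_
      rw [hφ_even t]
      congr 1
      push_cast
      ring
    exact FRZ.key φ hφ_C2 hφ_pos hφ_even hφ_mono (-w)
      (by simp only [Complex.neg_re, hwre]; linarith) hsub
  · exact FRZ.key φ hφ_C2 hφ_pos hφ_even hφ_mono w (by rw [hwre]; exact hgt) hz'
end

section
/- Let μ be a positive finite Borel measure on ℝⁿ with support exactly the closed ball of radius R₁ centered at the origin. Then for every ε > 0 there exists c_ε > 0 such that ∫_{|x| ≤ R₁} e^{x·y} dμ(x) ≥ c_ε · e^{(R₁ − ε)|y|} for all y ∈ ℝⁿ (with c_ε uniform in y when μ is rotation invariant). -/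
open MeasureTheory Metric

theorem laplace_transform_lower_bound
    (n : ℕ) (hn : 1 ≤ n) (R₁ : ℝ) (hR₁ : 0 < R₁)
    (μ : Measure (EuclideanSpace ℝ (Fin n))) [IsFiniteMeasure μ]
    (hsupp_in : μ (closedBall (0 : EuclideanSpace ℝ (Fin n)) R₁)ᶜ = 0)
    (hsupp_full : ∀ x ∈ closedBall (0 : EuclideanSpace ℝ (Fin n)) R₁,
        ∀ δ > (0 : ℝ), 0 < μ (ball x δ))
    (hrot : ∀ O : EuclideanSpace ℝ (Fin n) ≃ₗᵢ[ℝ] EuclideanSpace ℝ (Fin n),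
        Measure.map O μ = μ) :
    ∀ ε > (0 : ℝ), ∃ c > (0 : ℝ), ∀ y : EuclideanSpace ℝ (Fin n),
      c * Real.exp ((R₁ - ε) * ‖y‖) ≤
        ∫ x in closedBall (0 : EuclideanSpace ℝ (Fin n)) R₁,
          Real.exp (inner ℝ x y : ℝ) ∂μ := by
  intro ε hε
  set B := closedBall (0 : EuclideanSpace ℝ (Fin n)) R₁ with hB
  -- a fixed unit vector
  set e : EuclideanSpace ℝ (Fin n) := EuclideanSpace.single ⟨0, hn⟩ (1 : ℝ) with he
  have hne : ‖e‖ = 1 := by simp [he]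
  have heB : R₁ • e ∈ B := by
    simp [hB, mem_closedBall, norm_smul, hne, abs_of_pos hR₁]
  have hm : 0 < μ (ball (R₁ • e) ε) := hsupp_full _ heB ε hε
  set m := (μ (ball (R₁ • e) ε)).toReal with hmdef
  have hmpos : 0 < m := ENNReal.toReal_pos hm.ne' (measure_ne_top μ _)
  refine ⟨m, hmpos, ?_⟩
  intro y
  -- integrability of the integrand on B
  have hcont : Continuous fun x : EuclideanSpace ℝ (Fin n) => Real.exp (inner ℝ x y : ℝ) :=
    (Continuous.inner continuous_id continuous_const).rexp
  have hInt : IntegrableOn (fun x : EuclideanSpace ℝ (Fin n) => Real.exp (inner ℝ x y : ℝ)) B μ :=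
    hcont.continuousOn.integrableOn_compact (isCompact_closedBall _ _)
  -- for every unit vector u, the ball around R₁ • u has measure equal to that around R₁ • e
  have hball : ∀ u : EuclideanSpace ℝ (Fin n), ‖u‖ = 1 →
      μ (ball (R₁ • u) ε) = μ (ball (R₁ • e) ε) := by
    intro u hu
    set O := Submodule.reflection (ℝ ∙ (R₁ • e - R₁ • u))ᗮ with hO
    have hOe : O (R₁ • e) = R₁ • u := Submodule.reflection_sub (by simp [norm_smul, hne, hu])
    calc μ (ball (R₁ • u) ε) = (Measure.map O μ) (ball (R₁ • u) ε) := by rw [hrot O]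
      _ = μ (O ⁻¹' ball (R₁ • u) ε) :=
          Measure.map_apply O.continuous.measurable measurableSet_ball
      _ = μ (ball (R₁ • e) ε) := by
          congr 1
          ext x
          simp only [Set.mem_preimage, mem_ball]
          rw [← hOe, O.dist_map]
  by_cases hy : y = 0
  · -- trivial case y = 0
    have h1 : μ (ball (R₁ • e) ε ∩ B) = μ (ball (R₁ • e) ε) :=
      measure_inter_conull hsupp_in
    have h2 : m ≤ (μ B).toReal := by
      rw [hmdef, ← h1]
      exact ENNReal.toReal_mono (measure_ne_top μ _) (measure_mono Set.inter_subset_right)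
    have : (∫ x in B, Real.exp (inner ℝ x y : ℝ) ∂μ) = (μ B).toReal := by
      simp only [hy, inner_zero_right, Real.exp_zero]
      simp [setIntegral_const, Measure.real]
    rw [this]
    simpa [hy] using h2
  · set u : EuclideanSpace ℝ (Fin n) := ‖y‖⁻¹ • y with hu
    have hyn : (0 : ℝ) < ‖y‖ := norm_pos_iff.mpr hy
    have hun : ‖u‖ = 1 := by
      rw [hu, norm_smul, norm_inv, norm_norm, inv_mul_cancel₀ hyn.ne']
    set S := ball (R₁ • u) ε ∩ B with hS
    have hμS : μ S = μ (ball (R₁ • e) ε) := by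
      rw [hS, measure_inter_conull hsupp_in, hball u hun]
    have hSB : S ⊆ B := Set.inter_subset_right
    -- pointwise lower bound on S
    have hlow : ∀ x ∈ S, (R₁ - ε) * ‖y‖ ≤ (inner ℝ x y : ℝ) := by
      intro x hx
      have hx1 : ‖x - R₁ • u‖ < ε := by
        have := hx.1
        rwa [mem_ball, dist_eq_norm] at this
      have h1 : (inner ℝ (R₁ • u) y : ℝ) = R₁ * ‖y‖ := by
        rw [hu, smul_smul, real_inner_smul_left, real_inner_self_eq_norm_sq]
        field_simp
      have h2 : |(inner ℝ (x - R₁ • u) y : ℝ)| ≤ ‖x - R₁ • u‖ * ‖y‖ :=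
        abs_real_inner_le_norm _ _
      have h3 : (inner ℝ x y : ℝ) = inner ℝ (R₁ • u) y + (inner ℝ (x - R₁ • u) y : ℝ) := by
        rw [← inner_add_left]
        congr 1
        abel
      have h4 : -(ε * ‖y‖) ≤ (inner ℝ (x - R₁ • u) y : ℝ) := by
        have := (abs_le.mp h2).1
        have h5 : ‖x - R₁ • u‖ * ‖y‖ ≤ ε * ‖y‖ :=
          mul_le_mul_of_nonneg_right hx1.le hyn.le
        linarith
      rw [h3, h1]; nlinarith
    calc m * Real.exp ((R₁ - ε) * ‖y‖)
        = Real.exp ((R₁ - ε) * ‖y‖) * (μ S).toReal := by rw [hμS, hmdef]; ring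
      _ ≤ ∫ x in S, Real.exp (inner ℝ x y : ℝ) ∂μ := by
          refine le_trans (le_of_eq (by rw [smul_eq_mul, mul_comm]; rfl)) (setIntegral_ge_of_const_le (c := Real.exp ((R₁ - ε) * ‖y‖)) (measurableSet_ball.inter measurableSet_closedBall)
            (measure_ne_top μ _) (fun x hx => ?_) (hInt.mono_set hSB))
          exact Real.exp_le_exp.mpr (hlow x hx)
      _ ≤ ∫ x in B, Real.exp (inner ℝ x y : ℝ) ∂μ := by
          refine setIntegral_mono_set hInt ?_ (HasSubset.Subset.eventuallyLE hSB)
          exact Filter.Eventually.of_forall fun x => (Real.exp_pos _).le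
end
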